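/- arXiv:1712.07086 — 4 statements merged into one kernel-verified Lean document; each statement's English description precedes it below -/
import Mathlib

section
/- Let G be a finite connected graph with at least two vertices that admits a tree decomposition of width at most 3 (i.e., G is a connected partial 3-tree). Then lpt(G) ≤ 3. -/
open SimpleGraph

/-- `p` is a longest path of `G`: it is a path, and no path of `G` is longer. -/
def IsLongestPath {V : Type*} (G : SimpleGraph V) {u v : V} (p : G.Walk u v) : Prop :=
  p.IsPath ∧ ∀ ⦃a b : V⦄ (q : G.Walk a b), q.IsPath → q.length ≤ p.length

/-- A tree decomposition of `G` over a tree `T`: every vertex lies in some bag, every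
edge is contained in some bag, and for every vertex the set of tree nodes whose bag
contains it induces a connected subgraph of `T`. -/
structure TreeDecomp {V ι : Type*} (G : SimpleGraph V) (T : SimpleGraph ι) where
  isTree : T.IsTree
  bag : ι → Finset V
  bag_cover : ∀ v : V, ∃ t, v ∈ bag t
  bag_edge : ∀ ⦃u v : V⦄, G.Adj u v → ∃ t, u ∈ bag t ∧ v ∈ bag t
  bag_conn : ∀ v : V, (T.induce {t | v ∈ bag t}).Preconnected

namespace LptAux

variable {V : Type*} {G : SimpleGraph V}

/-- Append of two paths meeting only at the junction is a path. -/
lemma isPath_append {u v w : V} {p : G.Walk u v} {q : G.Walk v w}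
    (hp : p.IsPath) (hq : q.IsPath)
    (h : ∀ z, z ∈ p.support → z ∈ q.support → z = v) :
    (p.append q).IsPath := by
  rw [Walk.isPath_def, Walk.support_append, List.nodup_append]
  refine ⟨hp.support_nodup, ?_, ?_⟩
  · have := hq.support_nodup
    rw [Walk.support_eq_cons] at this
    exact this.of_cons
  · intro z hz z' hz' hzz'
    subst hzz'
    have hzq : z ∈ q.support := List.mem_of_mem_tail hz'
    have hzv := h z hz hzq
    subst hzv
    have hq2 := hq.support_nodup
    rw [Walk.support_eq_cons] at hq2
    exact (List.nodup_cons.mp hq2).1 hz'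

/-- First vertex of a walk lying in `S` (given some vertex of the walk lies in `S`). -/
lemma firstHit {u v : V} (p : G.Walk u v) (S : Set V) (h : ∃ y ∈ p.support, y ∈ S) :
    ∃ (w : V) (q : G.Walk u w), w ∈ S ∧ (∀ y ∈ q.support, y ∈ S → y = w) ∧
      (∀ z ∈ q.support, z ∈ p.support) ∧ q.length ≤ p.length ∧ (p.IsPath → q.IsPath) := by
  classical
  induction p with
  | nil =>
    obtain ⟨y, hy, hyS⟩ := h
    simp only [Walk.support_nil, List.mem_singleton] at hy
    subst hy
    exact ⟨_, Walk.nil, hyS, by simp, by simp, by simp, fun h => h⟩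
  | @cons a b c hadj p ih =>
    by_cases ha : a ∈ S
    · refine ⟨a, Walk.nil, ha, by simp, by simp, by simp, fun _ => Walk.IsPath.nil⟩
    · have h' : ∃ y ∈ p.support, y ∈ S := by
        obtain ⟨y, hy, hyS⟩ := h
        rw [Walk.support_cons, List.mem_cons] at hy
        rcases hy with rfl | hy
        · exact absurd hyS ha
        · exact ⟨y, hy, hyS⟩
      obtain ⟨w, q, hwS, hfirst, hsub, hlen, hpath⟩ := ih h'
      refine ⟨w, Walk.cons hadj q, hwS, ?_, ?_, ?_, ?_⟩
      · intro y hy hyS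
        rw [Walk.support_cons, List.mem_cons] at hy
        rcases hy with rfl | hy
        · exact absurd hyS ha
        · exact hfirst y hy hyS
      · intro z hz
        rw [Walk.support_cons, List.mem_cons] at hz ⊢
        rcases hz with rfl | hz
        · exact Or.inl rfl
        · exact Or.inr (hsub z hz)
      · simpa using Nat.succ_le_succ hlen
      · intro hcp
        rw [Walk.cons_isPath_iff] at hcp ⊢
        exact ⟨hpath hcp.1, fun hx => hcp.2 (hsub a hx)⟩

/-- A subwalk connecting two vertices on a walk, supported inside the walk. -/
lemma exists_subwalk {a b : V} (p : G.Walk a b) {x y : V} (hx : x ∈ p.support)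
    (hy : y ∈ p.support) :
    ∃ q : G.Walk x y, ∀ z ∈ q.support, z ∈ p.support := by
  classical
  by_cases hyd : y ∈ (p.dropUntil x hx).support
  · exact ⟨(p.dropUntil x hx).takeUntil y hyd, fun z hz =>
      p.support_dropUntil_subset hx (Walk.support_takeUntil_subset _ hyd hz)⟩
  · have hyt : y ∈ (p.takeUntil x hx).support := by
      have := p.take_spec hx
      have hy' := hy
      rw [← this, Walk.mem_support_append_iff] at hy'
      rcases hy' with h1 | h1
      · exact h1
      · exact absurd h1 hyd
    exact ⟨((p.takeUntil x hx).dropUntil y hyt).reverse, fun z hz => by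
      rw [Walk.support_reverse, List.mem_reverse] at hz
      exact p.support_takeUntil_subset hx ((p.takeUntil x hx).support_dropUntil_subset hyt hz)⟩

/-- A subwalk avoiding the start of a path. -/
lemma exists_subwalk_avoid_start {a b : V} {p : G.Walk a b} (hp : p.IsPath) {x y : V}
    (hx : x ∈ p.support) (hy : y ∈ p.support) (hxa : x ≠ a) (hya : y ≠ a) :
    ∃ q : G.Walk x y, (∀ z ∈ q.support, z ∈ p.support) ∧ a ∉ q.support := by
  cases p with
  | nil =>
    simp only [Walk.support_nil, List.mem_singleton] at hx
    exact absurd hx hxa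
  | cons hadj p' =>
    rw [Walk.cons_isPath_iff] at hp
    rw [Walk.support_cons, List.mem_cons] at hx hy
    rcases hx with rfl | hx
    · exact absurd rfl hxa
    rcases hy with rfl | hy
    · exact absurd rfl hya
    obtain ⟨q, hq⟩ := exists_subwalk p' hx hy
    refine ⟨q, fun z hz => by
      rw [Walk.support_cons, List.mem_cons]; exact Or.inr (hq z hz), fun ha => hp.2 (hq a ha)⟩

/-- Splitting a path at a vertex into two "ears" rooted there. -/
lemma ear_split {a b x : V} {p : G.Walk a b} (hp : p.IsPath) (hx : x ∈ p.support) :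
    ∃ (e₁ : G.Walk x a) (e₂ : G.Walk x b),
      e₁.IsPath ∧ e₂.IsPath ∧ e₁.length + e₂.length = p.length ∧
      (∀ z ∈ p.support, z ∈ e₁.support ∨ z ∈ e₂.support) ∧
      (∀ z ∈ e₁.support, z ∈ p.support) ∧ (∀ z ∈ e₂.support, z ∈ p.support) ∧
      (∀ z, z ∈ e₁.support → z ∈ e₂.support → z = x) := by
  classical
  refine ⟨(p.takeUntil x hx).reverse, p.dropUntil x hx, (hp.takeUntil hx).reverse,
    hp.dropUntil hx, ?_, ?_, ?_, ?_, ?_⟩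
  · rw [Walk.length_reverse]
    have := congrArg Walk.length (p.take_spec hx)
    rwa [Walk.length_append] at this
  · intro z hz
    rw [← p.take_spec hx, Walk.mem_support_append_iff] at hz
    rw [Walk.support_reverse, List.mem_reverse]
    exact hz
  · intro z hz
    rw [Walk.support_reverse, List.mem_reverse] at hz
    exact p.support_takeUntil_subset hx hz
  · exact fun z hz => p.support_dropUntil_subset hx hz
  · intro z hz1 hz2
    rw [Walk.support_reverse, List.mem_reverse] at hz1
    by_contra hzx
    -- z ∈ takeUntil.support and z ∈ dropUntil.support with z ≠ x contradicts nodup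
    have hnodup := hp.support_nodup
    rw [← p.take_spec hx, Walk.support_append, List.nodup_append] at hnodup
    have hz2' : z ∈ (p.dropUntil x hx).support.tail := by
      have := (p.dropUntil x hx).support_eq_cons
      rw [this, List.mem_cons] at hz2
      rcases hz2 with rfl | hz2
      · exact absurd rfl hzx
      · exact hz2
    exact hnodup.2.2 z hz1 z hz2' rfl



/-- One of the two ears at `x` has at least half the length of the path. -/
lemma half_ear {a b x : V} {p : G.Walk a b} (hp : p.IsPath) (hx : x ∈ p.support) :
    ∃ (c : V) (e : G.Walk x c), e.IsPath ∧ p.length ≤ 2 * e.length ∧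
      (∀ z ∈ e.support, z ∈ p.support) := by
  obtain ⟨e₁, e₂, h1, h2, hlen, _, hs1, hs2, _⟩ := ear_split hp hx
  rcases le_total e₁.length e₂.length with h | h
  · exact ⟨b, e₂, h2, by omega, hs2⟩
  · exact ⟨a, e₁, h1, by omega, hs1⟩

/-- Any two longest paths of a connected graph intersect. -/
lemma two_longest_intersect (hconn : G.Connected) {a b c d : V}
    {p : G.Walk a b} {q : G.Walk c d}
    (hp : IsLongestPath G p) (hq : IsLongestPath G q) :
    ∃ z, z ∈ p.support ∧ z ∈ q.support := by
  classical
  by_contra hcon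
  push_neg at hcon
  obtain ⟨W0⟩ := hconn a c
  have hWpath : W0.toPath.1.IsPath := W0.toPath.2
  have hWc : ∃ y ∈ W0.toPath.1.support, y ∈ {z | z ∈ q.support} :=
    ⟨c, Walk.end_mem_support _, Walk.start_mem_support _⟩
  obtain ⟨w₁, R₁, hw₁q, hR₁first, hR₁sub, _, hR₁path⟩ := firstHit _ _ hWc
  have hR₁rev : R₁.reverse.IsPath := (hR₁path hWpath).reverse
  have hR₁a : ∃ y ∈ R₁.reverse.support, y ∈ {z | z ∈ p.support} :=
    ⟨a, by rw [Walk.support_reverse, List.mem_reverse]; exact Walk.start_mem_support _,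
      Walk.start_mem_support _⟩
  obtain ⟨w₀, R₂, hw₀p, hR₂first, hR₂sub, _, hR₂path⟩ := firstHit _ _ hR₁a
  set R := R₂.reverse with hRdef
  have hRsupp : ∀ z ∈ R.support, z ∈ R₂.support := fun z hz => by
    rw [hRdef, Walk.support_reverse, List.mem_reverse] at hz; exact hz
  have hRp : ∀ z ∈ R.support, z ∈ p.support → z = w₀ :=
    fun z hz hzp => hR₂first z (hRsupp z hz) hzp
  have hRq : ∀ z ∈ R.support, z ∈ q.support → z = w₁ := by
    intro z hz hzq
    have hz2 : z ∈ R₁.reverse.support := hR₂sub z (hRsupp z hz)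
    rw [Walk.support_reverse, List.mem_reverse] at hz2
    exact hR₁first z hz2 hzq
  have hRpath : R.IsPath := (hR₂path hR₁rev).reverse
  have hw01 : w₀ ≠ w₁ := fun h => hcon w₀ hw₀p (h ▸ hw₁q)
  have hRlen : 1 ≤ R.length := by
    rcases Nat.eq_zero_or_pos R.length with h | h
    · exact absurd (Walk.eq_of_length_eq_zero h) hw01
    · exact h
  obtain ⟨ce, e, he, hel, hes⟩ := half_ear hp.1 hw₀p
  obtain ⟨cf, f, hf, hfl, hfs⟩ := half_ear hq.1 hw₁q
  have hinner : (R.append f).IsPath := by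
    refine isPath_append hRpath hf ?_
    intro z hz hzf
    exact hRq z hz (hfs z hzf)
  have hmega : (e.reverse.append (R.append f)).IsPath := by
    refine isPath_append he.reverse hinner ?_
    intro z hz hzi
    rw [Walk.support_reverse, List.mem_reverse] at hz
    rw [Walk.mem_support_append_iff] at hzi
    rcases hzi with hzR | hzf
    · exact hRp z hzR (hes z hz)
    · exact absurd (hfs z hzf) (hcon z (hes z hz))
  have hle := hp.2 _ hmega
  have hlen : (e.reverse.append (R.append f)).length = e.length + (R.length + f.length) := by
    rw [Walk.length_append, Walk.length_append, Walk.length_reverse]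
  have hqp : q.length = p.length :=
    le_antisymm (hp.2 _ hq.1) (hq.2 _ hp.1)
  omega

/-- Reachability avoiding a vertex set `B`. -/
def Reach (G : SimpleGraph V) (B : Finset V) (u v : V) : Prop :=
  ∃ p : G.Walk u v, ∀ z ∈ p.support, z ∉ B

lemma Reach.notMem_left {B : Finset V} {u v : V} (h : Reach G B u v) : u ∉ B := by
  obtain ⟨p, hp⟩ := h; exact hp u (Walk.start_mem_support _)

lemma Reach.symm {B : Finset V} {u v : V} (h : Reach G B u v) : Reach G B v u := by
  obtain ⟨p, hp⟩ := h
  exact ⟨p.reverse, fun z hz => hp z (by rwa [Walk.support_reverse, List.mem_reverse] at hz)⟩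

lemma Reach.trans {B : Finset V} {u v w : V} (h : Reach G B u v) (h' : Reach G B v w) :
    Reach G B u w := by
  obtain ⟨p, hp⟩ := h
  obtain ⟨q, hq⟩ := h'
  exact ⟨p.append q, fun z hz => by
    rw [Walk.mem_support_append_iff] at hz
    rcases hz with hz | hz
    · exact hp z hz
    · exact hq z hz⟩

lemma reach_refl {B : Finset V} {u : V} (h : u ∉ B) : Reach G B u u :=
  ⟨Walk.nil, by simp [h]⟩

/-- Two non-`B` vertices on a common ear (a path rooted at `x ∈ B`, meeting `B` only
in `x`) are reachable avoiding `B`. -/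
lemma reach_of_mem_ear {B : Finset V} {x c : V} {e : G.Walk x c} (he : e.IsPath)
    (hxB : x ∈ B) (heB : ∀ z ∈ e.support, z ∈ B → z = x) {v v' : V}
    (hv : v ∈ e.support) (hv' : v' ∈ e.support) (hvB : v ∉ B) (hv'B : v' ∉ B) :
    Reach G B v v' := by
  have hvx : v ≠ x := fun h => hvB (h ▸ hxB)
  have hv'x : v' ≠ x := fun h => hv'B (h ▸ hxB)
  obtain ⟨q, hq, hqx⟩ := exists_subwalk_avoid_start he hv hv' hvx hv'x
  refine ⟨q, fun z hz hzB => ?_⟩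
  have := heB z (hq z hz) hzB
  exact hqx (this ▸ hz)

/-- From a non-`B` vertex of a path that meets `B`, walking along the path we find an
edge from the same `B`-avoiding component into a `B`-vertex of the path. -/
lemma attach {B : Finset V} {s t : V} {p : G.Walk s t} (hp : p.IsPath)
    {x : V} (hxB : x ∈ B) (hxp : x ∈ p.support)
    {v : V} (hv : v ∈ p.support) (hvB : v ∉ B) :
    ∃ (v' b : V), Reach G B v v' ∧ b ∈ B ∧ b ∈ p.support ∧ G.Adj v' b := by
  classical
  obtain ⟨q0, hq0⟩ := exists_subwalk p hv hxp
  set q := q0.toPath.1 with hqdef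
  have hqsub : ∀ z ∈ q.support, z ∈ p.support := fun z hz =>
    hq0 z (q0.support_toPath_subset hz)
  have hqpath : q.IsPath := q0.toPath.2
  have hhit : ∃ y ∈ q.support, y ∈ {z | (z : V) ∈ B} := ⟨x, Walk.end_mem_support _, hxB⟩
  obtain ⟨w, q₁, hwB, hfirst, hsub, _, hq₁path⟩ := firstHit _ _ hhit
  have hq₁ : q₁.IsPath := hq₁path hqpath
  have hvw : v ≠ w := fun h => hvB (h ▸ hwB)
  -- decompose the last edge of q₁
  have hsup0 : q₁.support = q₁.reverse.support.reverse := by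
    rw [Walk.support_reverse, List.reverse_reverse]
  rcases hq : q₁.reverse with _ | ⟨hadj, q₃⟩
  · exact absurd rfl hvw
  · rename_i v'
    have hsup : q₁.support = q₃.support.reverse ++ [w] := by
      rw [hsup0, hq]
      simp [Walk.support_cons]
    have hv'q₃ : v' ∈ q₃.support := Walk.start_mem_support _
    have hv'q₁ : v' ∈ q₁.support := by
      rw [hsup]; exact List.mem_append_left _ (List.mem_reverse.2 hv'q₃)
    have hv'B : v' ∉ B := by
      intro hmem
      have := hfirst v' hv'q₁ hmem
      subst this
      exact hadj.ne rfl
    have hwq₃ : w ∉ q₃.support := by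
      have hnodup := hq₁.support_nodup
      rw [hsup] at hnodup
      have := List.disjoint_of_nodup_append hnodup
      intro hmem
      exact this (List.mem_reverse.2 hmem) (List.mem_singleton.2 rfl)
    refine ⟨v', w, ⟨q₃.reverse, ?_⟩, hwB, hqsub w (hsub w (Walk.end_mem_support _)), hadj.symm⟩
    intro z hz hzB
    rw [Walk.support_reverse, List.mem_reverse] at hz
    have hzq₁ : z ∈ q₁.support := by
      rw [hsup]; exact List.mem_append_left _ (List.mem_reverse.2 hz)
    have := hfirst z hzq₁ hzB
    subst this
    exact hwq₃ hz

/-- Crossing surgery: two longest-path "ear pairs" rooted at distinct `B`-vertices whose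
`A`-ears cross in a common component give a strong length inequality. -/
lemma cross {B : Finset V} {L : ℕ}
    (hmax : ∀ ⦃a b : V⦄ (q : G.Walk a b), q.IsPath → q.length ≤ L)
    {x x' se sa se' sa' : V}
    (hx : x ∈ B) (hx' : x' ∈ B) (hxx : x ≠ x')
    {E : G.Walk x se} {A : G.Walk x sa} {E' : G.Walk x' se'} {A' : G.Walk x' sa'}
    (hE : E.IsPath) (hA : A.IsPath) (hE' : E'.IsPath) (hA' : A'.IsPath)
    (hAB : ∀ z ∈ A.support, z ∈ B → z = x)
    (hA'B : ∀ z ∈ A'.support, z ∈ B → z = x')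
    (hEA : ∀ z, z ∈ E.support → z ∈ A.support → z = x)
    (hE'A' : ∀ z, z ∈ E'.support → z ∈ A'.support → z = x')
    (hEA' : ∀ z, z ∈ E.support → z ∈ A'.support → False)
    (hEE' : ∀ z, z ∈ E.support → z ∈ E'.support → False)
    (hAE' : ∀ z, z ∈ A.support → z ∈ E'.support → False)
    {v : V} (hvA : v ∈ A.support) (hvA' : v ∈ A'.support) (hvB : v ∉ B) :
    E.length + E'.length + 2 ≤ L := by
  classical
  -- first vertex along A which lies on A' (outside B)
  have hhit : ∃ y ∈ A.support, y ∈ {z | z ∈ A'.support ∧ z ∉ B} := ⟨v, hvA, hvA', hvB⟩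
  obtain ⟨w, q₁, hwS, hfirst, hq₁sub, _, hq₁path'⟩ := firstHit _ _ hhit
  obtain ⟨hwA', hwB⟩ := hwS
  have hq₁path : q₁.IsPath := hq₁path' hA
  set q₂ := A'.takeUntil w hwA' with hq₂def
  have hq₂path : q₂.IsPath := hA'.takeUntil hwA'
  have hq₂sub : ∀ z ∈ q₂.support, z ∈ A'.support := fun z hz =>
    A'.support_takeUntil_subset hwA' hz
  have hwx : w ≠ x := fun h => hwB (h ▸ hx)
  have hwx' : w ≠ x' := fun h => hwB (h ▸ hx')
  -- inner1 := q₂.reverse.append E' : Walk w se'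
  have hinner1 : (q₂.reverse.append E').IsPath := by
    refine isPath_append hq₂path.reverse hE' ?_
    intro z hz hzE'
    rw [Walk.support_reverse, List.mem_reverse] at hz
    exact (hE'A' z hzE' (hq₂sub z hz)).symm ▸ rfl
  -- inner2 := q₁.append inner1
  have hinner2 : (q₁.append (q₂.reverse.append E')).IsPath := by
    refine isPath_append hq₁path hinner1 ?_
    intro z hz hzi
    rw [Walk.mem_support_append_iff] at hzi
    rcases hzi with hz2 | hzE'
    · rw [Walk.support_reverse, List.mem_reverse] at hz2
      have hzA' : z ∈ A'.support := hq₂sub z hz2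
      by_cases hzB : z ∈ B
      · exact absurd ((hAB z (hq₁sub z hz) hzB).symm.trans (hA'B z hzA' hzB)) hxx
      · exact hfirst z hz ⟨hzA', hzB⟩
    · exact absurd (hAE' z (hq₁sub z hz) hzE') id
  -- mega
  have hmega : (E.reverse.append (q₁.append (q₂.reverse.append E'))).IsPath := by
    refine isPath_append hE.reverse hinner2 ?_
    intro z hz hzi
    rw [Walk.support_reverse, List.mem_reverse] at hz
    rw [Walk.mem_support_append_iff] at hzi
    rcases hzi with hz1 | hzi
    · exact hEA z hz (hq₁sub z hz1)
    · rw [Walk.mem_support_append_iff] at hzi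
      rcases hzi with hz2 | hzE'
      · rw [Walk.support_reverse, List.mem_reverse] at hz2
        exact absurd (hEA' z hz (hq₂sub z hz2)) id
      · exact absurd (hEE' z hz hzE') id
  have hle := hmax _ hmega
  have hlen : (E.reverse.append (q₁.append (q₂.reverse.append E'))).length =
      E.length + (q₁.length + (q₂.length + E'.length)) := by
    simp [Walk.length_append, Walk.length_reverse]
  have h1 : 1 ≤ q₁.length := by
    rcases Nat.eq_zero_or_pos q₁.length with h | h
    · exact absurd (Walk.eq_of_length_eq_zero h).symm hwx
    · exact h
  have h2 : 1 ≤ q₂.length := by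
    rcases Nat.eq_zero_or_pos q₂.length with h | h
    · exact absurd (Walk.eq_of_length_eq_zero h).symm hwx'
    · exact h
  omega
/-- A set of tree nodes is "convex/connected" if any two members are joined by a walk
inside it. -/
def Conv {ι : Type*} (T : SimpleGraph ι) (S : Finset ι) : Prop :=
  ∀ a ∈ S, ∀ b ∈ S, ∃ w : T.Walk a b, ∀ z ∈ w.support, z ∈ S

lemma conv_inter {ι : Type*} [DecidableEq ι] {T : SimpleGraph ι} (hT : T.IsAcyclic) {S₁ S₂ : Finset ι}
    (h1 : Conv T S₁) (h2 : Conv T S₂) : Conv T (S₁ ∩ S₂) := by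
  classical
  intro a ha b hb
  rw [Finset.mem_inter] at ha hb
  obtain ⟨w₁, hw₁⟩ := h1 a ha.1 b hb.1
  obtain ⟨w₂, hw₂⟩ := h2 a ha.2 b hb.2
  have hu := hT.path_unique w₁.toPath w₂.toPath
  refine ⟨w₁.toPath.1, fun z hz => Finset.mem_inter.2 ⟨hw₁ z (w₁.support_toPath_subset hz), ?_⟩⟩
  have hz2 : z ∈ w₂.toPath.1.support := by rw [← hu]; exact hz
  exact hw₂ z (w₂.support_toPath_subset hz2)

lemma conv_union {ι : Type*} [DecidableEq ι] {T : SimpleGraph ι} {S₁ S₂ : Finset ι}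
    (h1 : Conv T S₁) (h2 : Conv T S₂) {t₀ : ι} (ht₁ : t₀ ∈ S₁) (ht₂ : t₀ ∈ S₂) :
    Conv T (S₁ ∪ S₂) := by
  classical
  have key : ∀ a ∈ S₁ ∪ S₂, ∃ w : T.Walk a t₀, ∀ z ∈ w.support, z ∈ S₁ ∪ S₂ := by
    intro a ha
    rw [Finset.mem_union] at ha
    rcases ha with ha | ha
    · obtain ⟨w, hw⟩ := h1 a ha t₀ ht₁
      exact ⟨w, fun z hz => Finset.mem_union.2 (Or.inl (hw z hz))⟩
    · obtain ⟨w, hw⟩ := h2 a ha t₀ ht₂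
      exact ⟨w, fun z hz => Finset.mem_union.2 (Or.inr (hw z hz))⟩
  intro a ha b hb
  obtain ⟨w₁, hw₁⟩ := key a ha
  obtain ⟨w₂, hw₂⟩ := key b hb
  refine ⟨w₁.append w₂.reverse, fun z hz => ?_⟩
  rw [Walk.mem_support_append_iff] at hz
  rcases hz with hz | hz
  · exact hw₁ z hz
  · rw [Walk.support_reverse, List.mem_reverse] at hz
    exact hw₂ z hz

lemma helly3 {ι : Type*} {T : SimpleGraph ι} (hT : T.IsAcyclic) {S₁ S₂ S₃ : Finset ι}
    (h1 : Conv T S₁) (h2 : Conv T S₂) (h3 : Conv T S₃)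
    {a b c : ι} (ha1 : a ∈ S₁) (ha2 : a ∈ S₂) (hb2 : b ∈ S₂) (hb3 : b ∈ S₃)
    (hc1 : c ∈ S₁) (hc3 : c ∈ S₃) :
    ∃ m, m ∈ S₁ ∧ m ∈ S₂ ∧ m ∈ S₃ := by
  classical
  obtain ⟨p0, hp0⟩ := h2 a ha2 b hb2
  obtain ⟨r0, hr0⟩ := h3 b hb3 c hc3
  obtain ⟨q0, hq0⟩ := h1 a ha1 c hc1
  have hp : ∀ z ∈ p0.toPath.1.support, z ∈ S₂ := fun z hz =>
    hp0 z (p0.support_toPath_subset hz)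
  have hr : ∀ z ∈ r0.toPath.1.support, z ∈ S₃ := fun z hz =>
    hr0 z (r0.support_toPath_subset hz)
  have hhit : ∃ y ∈ p0.toPath.1.support, y ∈ {z | z ∈ r0.toPath.1.support} :=
    ⟨b, Walk.end_mem_support _, Walk.start_mem_support _⟩
  obtain ⟨m, p₁, hmr, hfirst, hsub, _, hp₁path⟩ := firstHit _ _ hhit
  set r₂ := r0.toPath.1.dropUntil m hmr with hr₂def
  have hg : (p₁.append r₂).IsPath := by
    refine isPath_append (hp₁path p0.toPath.2) (r0.toPath.2.dropUntil hmr) ?_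
    intro z hz hz2
    exact hfirst z hz (r0.toPath.1.support_dropUntil_subset hmr hz2)
  have huniq := hT.path_unique (⟨p₁.append r₂, hg⟩ : T.Path a c) q0.toPath
  have hm : m ∈ (p₁.append r₂).support := by
    rw [Walk.mem_support_append_iff]; exact Or.inl (Walk.end_mem_support _)
  have hmq : m ∈ q0.toPath.1.support := by
    have hsupeq : (p₁.append r₂).support = q0.toPath.1.support :=
      congrArg (fun P : T.Path a c => P.1.support) huniq
    rw [← hsupeq]; exact hm
  exact ⟨m, hq0 m (q0.support_toPath_subset hmq), hp m (hsub m (Walk.end_mem_support _)), hr m hmr⟩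

lemma helly {ι : Type*} [DecidableEq ι] {T : SimpleGraph ι} (hT : T.IsAcyclic) :
    ∀ (n : ℕ) (F : Finset (Finset ι)), F.card = n → F.Nonempty →
      (∀ S ∈ F, Conv T S) →
      (∀ S ∈ F, ∀ S' ∈ F, ∃ t, t ∈ S ∧ t ∈ S') →
      ∃ t, ∀ S ∈ F, t ∈ S := by
  classical
  intro n
  induction n using Nat.strong_induction_on with
  | _ n ih =>
    intro F hcard hne hconv hpair
    obtain ⟨S, hS⟩ := hne
    by_cases hsingle : F.erase S = ∅
    · obtain ⟨t, ht, _⟩ := hpair S hS S hS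
      refine ⟨t, fun S' hS' => ?_⟩
      rcases eq_or_ne S' S with rfl | hne'
      · exact ht
      · exact absurd (Finset.mem_erase.2 ⟨hne', hS'⟩) (by simp [hsingle])
    · have hF'ne : (F.erase S).Nonempty := Finset.nonempty_iff_ne_empty.2 hsingle
      set F'' := (F.erase S).image (fun A => A ∩ S) with hF''def
      have hcard'' : F''.card < n := by
        calc F''.card ≤ (F.erase S).card := Finset.card_image_le
        _ < F.card := Finset.card_erase_lt_of_mem hS
        _ = n := hcard
      have hmem'' : ∀ X ∈ F'', ∃ A, A ∈ F ∧ A ≠ S ∧ X = A ∩ S := by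
        intro X hX
        obtain ⟨A, hA, rfl⟩ := Finset.mem_image.1 hX
        rw [Finset.mem_erase] at hA
        exact ⟨A, hA.2, hA.1, rfl⟩
      have hconv'' : ∀ X ∈ F'', Conv T X := by
        intro X hX
        obtain ⟨A, hA, _, rfl⟩ := hmem'' X hX
        exact conv_inter hT (hconv A hA) (hconv S hS)
      have hpair'' : ∀ X ∈ F'', ∀ X' ∈ F'', ∃ t, t ∈ X ∧ t ∈ X' := by
        intro X hX X' hX'
        obtain ⟨A, hA, _, rfl⟩ := hmem'' X hX
        obtain ⟨A', hA', _, rfl⟩ := hmem'' X' hX'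
        obtain ⟨a, ha1, ha2⟩ := hpair A hA A' hA'
        obtain ⟨b, hb1, hb2⟩ := hpair A' hA' S hS
        obtain ⟨c, hc1, hc2⟩ := hpair A hA S hS
        obtain ⟨m, hm1, hm2, hm3⟩ := helly3 hT (hconv A hA) (hconv A' hA') (hconv S hS)
          ha1 ha2 hb1 hb2 hc1 hc2
        exact ⟨m, Finset.mem_inter.2 ⟨hm1, hm3⟩, Finset.mem_inter.2 ⟨hm2, hm3⟩⟩
      have hne'' : F''.Nonempty := hF'ne.image _
      obtain ⟨t, ht⟩ := ih F''.card hcard'' F'' rfl hne'' hconv'' hpair''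
      refine ⟨t, fun A hA => ?_⟩
      rcases eq_or_ne A S with rfl | hne'
      · obtain ⟨A₀, hA₀⟩ := hF'ne
        have := ht (A₀ ∩ A) (Finset.mem_image.2 ⟨A₀, hA₀, rfl⟩)
        exact (Finset.mem_inter.1 this).2
      · have := ht (A ∩ S) (Finset.mem_image.2 ⟨A, Finset.mem_erase.2 ⟨hne', hA⟩, rfl⟩)
        exact (Finset.mem_inter.1 this).1

lemma exists_longest [Fintype V] [Nonempty V] (G : SimpleGraph V) :
    ∃ (u v : V) (p : G.Walk u v), IsLongestPath G p := by
  classical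
  set S : Set ℕ := {n | ∃ (u v : V) (p : G.Walk u v), p.IsPath ∧ p.length = n} with hSdef
  have hne : S.Nonempty := ⟨0, Classical.arbitrary V, Classical.arbitrary V, Walk.nil,
    Walk.IsPath.nil, rfl⟩
  have hbdd : BddAbove S := by
    refine ⟨Fintype.card V, fun n hn => ?_⟩
    obtain ⟨u, v, p, hp, rfl⟩ := hn
    exact le_of_lt hp.length_lt
  have hmem := Nat.sSup_mem hne hbdd
  obtain ⟨u, v, p, hp, hl⟩ := hmem
  exact ⟨u, v, p, hp, fun a b q hq => by rw [hl]; exact le_csSup hbdd ⟨a, b, q, hq, rfl⟩⟩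

section Decomp

variable {ι : Type*} {T : SimpleGraph ι}

lemma induce_walk {S : Set ι} {a b : {x // x ∈ S}} (w : (T.induce S).Walk a b) :
    ∃ q : T.Walk a b, ∀ z ∈ q.support, z ∈ S := by
  induction w with
  | nil =>
    rename_i x
    exact ⟨Walk.nil, by simp [x.2]⟩
  | cons h p ih =>
    obtain ⟨q, hq⟩ := ih
    rename_i x y _
    refine ⟨Walk.cons (by exact h) q, fun z hz => ?_⟩
    change z ∈ (x : ι) :: q.support at hz
    rw [List.mem_cons] at hz
    rcases hz with rfl | hz
    · exact x.2
    · exact hq z hz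

variable [Fintype ι]

open Classical in
/-- The set of tree nodes whose bag contains `v`. -/
noncomputable def Tv (D : TreeDecomp G T) (v : V) : Finset ι :=
  Finset.univ.filter (fun t => v ∈ D.bag t)

lemma mem_Tv {D : TreeDecomp G T} {v : V} {t : ι} : t ∈ Tv D v ↔ v ∈ D.bag t := by
  simp [Tv]

lemma conv_Tv (D : TreeDecomp G T) (v : V) : Conv T (Tv D v) := by
  intro a ha b hb
  rw [mem_Tv] at ha hb
  obtain ⟨w⟩ := D.bag_conn v ⟨a, ha⟩ ⟨b, hb⟩
  obtain ⟨q, hq⟩ := induce_walk w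
  exact ⟨q, fun z hz => mem_Tv.2 (hq z hz)⟩

open Classical in
/-- The set of tree nodes whose bag meets the walk `p`. -/
noncomputable def nodesOf (D : TreeDecomp G T) {u v : V} (p : G.Walk u v) : Finset ι :=
  Finset.univ.filter (fun t => ∃ w ∈ p.support, w ∈ D.bag t)

lemma mem_nodesOf {D : TreeDecomp G T} {u v : V} {p : G.Walk u v} {t : ι} :
    t ∈ nodesOf D p ↔ ∃ w ∈ p.support, w ∈ D.bag t := by
  simp [nodesOf]

lemma conv_nodesOf (D : TreeDecomp G T) {u v : V} (p : G.Walk u v) :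
    Conv T (nodesOf D p) := by
  classical
  induction p with
  | nil =>
    rename_i x
    have h : nodesOf D (Walk.nil : G.Walk x x) = Tv D x := by
      ext t; simp [mem_nodesOf, mem_Tv]
    rw [h]
    exact conv_Tv D x
  | @cons x y w hadj p ih =>
    have h : nodesOf D (Walk.cons hadj p) = Tv D x ∪ nodesOf D p := by
      ext t
      simp only [mem_nodesOf, mem_Tv, Finset.mem_union, Walk.support_cons, List.mem_cons]
      constructor
      · rintro ⟨w', (rfl | hw'), hbag⟩
        · exact Or.inl hbag
        · exact Or.inr ⟨w', hw', hbag⟩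
      · rintro (hbag | ⟨w', hw', hbag⟩)
        · exact ⟨x, Or.inl rfl, hbag⟩
        · exact ⟨w', Or.inr hw', hbag⟩
    rw [h]
    obtain ⟨t₀, ht₁, ht₂⟩ := D.bag_edge hadj
    exact conv_union (conv_Tv D x) ih (mem_Tv.2 ht₁)
      (mem_nodesOf.2 ⟨y, Walk.start_mem_support _, ht₂⟩)

/-- The key width bound: at most 3 vertices of a bag `B = bag t₀` of size ≤ 4 attach to
any fixed component of `G - B`. -/
lemma attach_bound {D : TreeDecomp G T} (hwidth : ∀ t, (D.bag t).card ≤ 4)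
    {t₀ : ι} {c₀ : V} (hc₀ : c₀ ∉ D.bag t₀) (SC : Finset V) (hsub0 : SC ⊆ D.bag t₀)
    (hatt : ∀ b ∈ SC, ∃ v', Reach G (D.bag t₀) v' c₀ ∧ G.Adj v' b) :
    SC.card ≤ 3 := by
  classical
  set B := D.bag t₀ with hBdef
  set N : Finset ι := Finset.univ.filter (fun t => ∃ w, Reach G B w c₀ ∧ w ∈ D.bag t)
    with hNdef
  have hmemN : ∀ {t : ι}, t ∈ N ↔ ∃ w, Reach G B w c₀ ∧ w ∈ D.bag t := by
    intro t; simp [hNdef]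
  have hconvN : Conv T N := by
    intro a ha b hb
    obtain ⟨wa, hwa, hwab⟩ := hmemN.1 ha
    obtain ⟨wb, hwb, hwbb⟩ := hmemN.1 hb
    obtain ⟨W, hW⟩ := hwa.trans hwb.symm
    have hsubN : ∀ t' ∈ nodesOf D W, t' ∈ N := by
      intro t' ht'
      obtain ⟨z, hz, hzbag⟩ := mem_nodesOf.1 ht'
      obtain ⟨q, hq⟩ := exists_subwalk W hz (Walk.end_mem_support _)
      have : Reach G B z wb := ⟨q, fun y hy => hW y (hq y hy)⟩
      exact hmemN.2 ⟨z, this.trans hwb, hzbag⟩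
    obtain ⟨q, hq⟩ := conv_nodesOf D W a
      (mem_nodesOf.2 ⟨wa, Walk.start_mem_support _, hwab⟩) b
      (mem_nodesOf.2 ⟨wb, Walk.end_mem_support _, hwbb⟩)
    exact ⟨q, fun z hz => hsubN _ (hq z hz)⟩
  -- the Helly family
  set F : Finset (Finset ι) := insert N (SC.image (Tv D)) with hFdef
  have hmemF : ∀ X ∈ F, X = N ∨ ∃ b ∈ SC, X = Tv D b := by
    intro X hX
    rw [hFdef, Finset.mem_insert] at hX
    rcases hX with rfl | hX
    · exact Or.inl rfl
    · obtain ⟨b, hb, rfl⟩ := Finset.mem_image.1 hX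
      exact Or.inr ⟨b, hb, rfl⟩
  have hNwit : ∀ b ∈ SC, ∃ t, t ∈ N ∧ t ∈ Tv D b := by
    intro b hb
    obtain ⟨v', hv', hadj⟩ := hatt b hb
    obtain ⟨t, ht1, ht2⟩ := D.bag_edge hadj
    exact ⟨t, hmemN.2 ⟨v', hv', ht1⟩, mem_Tv.2 ht2⟩
  have hpair : ∀ X ∈ F, ∀ X' ∈ F, ∃ t, t ∈ X ∧ t ∈ X' := by
    intro X hX X' hX'
    rcases hmemF X hX with rfl | ⟨b, hb, rfl⟩ <;>
      rcases hmemF X' hX' with rfl | ⟨b', hb', rfl⟩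
    · obtain ⟨t, ht⟩ := D.bag_cover c₀
      exact ⟨t, hmemN.2 ⟨c₀, reach_refl hc₀, ht⟩, hmemN.2 ⟨c₀, reach_refl hc₀, ht⟩⟩
    · obtain ⟨t, ht1, ht2⟩ := hNwit b' hb'
      exact ⟨t, ht1, ht2⟩
    · obtain ⟨t, ht1, ht2⟩ := hNwit b hb
      exact ⟨t, ht2, ht1⟩
    · exact ⟨t₀, mem_Tv.2 (hsub0 hb), mem_Tv.2 (hsub0 hb')⟩
  have hconvF : ∀ X ∈ F, Conv T X := by
    intro X hX
    rcases hmemF X hX with rfl | ⟨b, _, rfl⟩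
    · exact hconvN
    · exact conv_Tv D b
  obtain ⟨r, hr⟩ := helly D.isTree.2 F.card F rfl ⟨N, Finset.mem_insert_self _ _⟩
    hconvF hpair
  have hrN : r ∈ N := hr N (Finset.mem_insert_self _ _)
  obtain ⟨w, hw, hwbag⟩ := hmemN.1 hrN
  have hwB : w ∉ B := hw.notMem_left
  have hsub : SC ⊆ (D.bag r).erase w := by
    intro b hb
    have hbr : b ∈ D.bag r := mem_Tv.1 (hr (Tv D b)
      (by rw [hFdef]; exact Finset.mem_insert_of_mem (Finset.mem_image_of_mem _ hb)))
    refine Finset.mem_erase.2 ⟨fun h => ?_, hbr⟩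
    exact hwB (h ▸ hsub0 hb)
  calc SC.card ≤ ((D.bag r).erase w).card := Finset.card_le_card hsub
  _ = (D.bag r).card - 1 := Finset.card_erase_of_mem hwbag
  _ ≤ 3 := by have := hwidth r; omega

end Decomp

/-- The final configuration is contradictory: three "solo" longest paths pairwise
crossing in three distinct components of `G - B`. -/
lemma final_contradiction {B : Finset V} {L : ℕ}
    (hmax : ∀ ⦃a b : V⦄ (q : G.Walk a b), q.IsPath → q.length ≤ L)
    {x1 x3 u : V} (hx1 : x1 ∈ B) (hx3 : x3 ∈ B) (hu : u ∈ B)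
    (h13 : x1 ≠ x3) (h1u : x1 ≠ u) (h3u : x3 ≠ u)
    {c₀ d₀ d₂ : V}
    (hcd₀ : ¬ Reach G B c₀ d₀) (hcd₂ : ¬ Reach G B c₀ d₂) (hdd : ¬ Reach G B d₀ d₂)
    {cA1 cO1 cA3 cO3 cG1 cG2 : V}
    {A1 : G.Walk x1 cA1} {O1 : G.Walk x1 cO1}
    {A3 : G.Walk x3 cA3} {O3 : G.Walk x3 cO3}
    {G1 : G.Walk u cG1} {G2 : G.Walk u cG2}
    (hA1 : A1.IsPath) (hO1 : O1.IsPath) (hA3 : A3.IsPath) (hO3 : O3.IsPath)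
    (hG1 : G1.IsPath) (hG2 : G2.IsPath)
    (hlen1 : A1.length + O1.length = L) (hlen3 : A3.length + O3.length = L)
    (hlenG : G1.length + G2.length = L)
    (hA1B : ∀ z ∈ A1.support, z ∈ B → z = x1) (hO1B : ∀ z ∈ O1.support, z ∈ B → z = x1)
    (hA3B : ∀ z ∈ A3.support, z ∈ B → z = x3) (hO3B : ∀ z ∈ O3.support, z ∈ B → z = x3)
    (hG1B : ∀ z ∈ G1.support, z ∈ B → z = u) (hG2B : ∀ z ∈ G2.support, z ∈ B → z = u)
    (hA1O1 : ∀ z, z ∈ A1.support → z ∈ O1.support → z = x1)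
    (hA3O3 : ∀ z, z ∈ A3.support → z ∈ O3.support → z = x3)
    (hG1G2 : ∀ z, z ∈ G1.support → z ∈ G2.support → z = u)
    (hA1c : ∀ w ∈ A1.support, w ∉ B → Reach G B w c₀)
    (hO1c : ∀ w ∈ O1.support, w ∉ B → Reach G B w d₀)
    (hA3c : ∀ w ∈ A3.support, w ∉ B → Reach G B w c₀)
    (hO3c : ∀ w ∈ O3.support, w ∉ B → Reach G B w d₂)
    (hG1c : ∀ w ∈ G1.support, w ∉ B → Reach G B w d₀)
    (hG2c : ∀ w ∈ G2.support, w ∉ B → Reach G B w d₂)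
    {v13 q1 q3 : V}
    (hv13A1 : v13 ∈ A1.support) (hv13A3 : v13 ∈ A3.support) (hv13B : v13 ∉ B)
    (hq1O1 : q1 ∈ O1.support) (hq1G1 : q1 ∈ G1.support) (hq1B : q1 ∉ B)
    (hq3O3 : q3 ∈ O3.support) (hq3G2 : q3 ∈ G2.support) (hq3B : q3 ∉ B) :
    False := by
  -- generic disjointness of ears with non-linked anchors and distinct roots
  have disj : ∀ {r r' γ γ' c c' : V} {X : G.Walk r c} {X' : G.Walk r' c'},
      r ≠ r' → (∀ z ∈ X.support, z ∈ B → z = r) → (∀ z ∈ X'.support, z ∈ B → z = r') →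
      (∀ w ∈ X.support, w ∉ B → Reach G B w γ) →
      (∀ w ∈ X'.support, w ∉ B → Reach G B w γ') →
      ¬ Reach G B γ γ' → ∀ z, z ∈ X.support → z ∈ X'.support → False := by
    intro r r' γ γ' c c' X X' hrr hXB hX'B hXγ hX'γ hγγ z hz hz'
    by_cases hzB : z ∈ B
    · exact hrr ((hXB z hz hzB).symm.trans (hX'B z hz' hzB))
    · exact hγγ ((hXγ z hz hzB).symm.trans (hX'γ z hz' hzB))
  have hdc₀ : ¬ Reach G B d₀ c₀ := fun h => hcd₀ h.symm
  have hd₂c₀ : ¬ Reach G B d₂ c₀ := fun h => hcd₂ h.symm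
  have hd₂d₀ : ¬ Reach G B d₂ d₀ := fun h => hdd h.symm
  -- crossing 1 : paths 1 and 3 cross in C (ears A1, A3); others O1, O3
  have hc1 : O1.length + O3.length + 2 ≤ L := by
    refine cross hmax hx1 hx3 h13 hO1 hA1 hO3 hA3 hA1B hA3B
      (fun z h1 h2 => hA1O1 z h2 h1) (fun z h1 h2 => hA3O3 z h2 h1)
      (disj h13 hO1B hA3B hO1c hA3c hdc₀)
      (disj h13 hO1B hO3B hO1c hO3c hdd)
      (disj h13 hA1B hO3B hA1c hO3c hcd₂)
      hv13A1 hv13A3 hv13B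
  -- crossing 2 : path 1 and Q cross in D (ears O1, G1); others A1, G2
  have hc2 : A1.length + G2.length + 2 ≤ L := by
    refine cross hmax hx1 hu h1u hA1 hO1 hG2 hG1 hO1B hG1B
      hA1O1 (fun z h1 h2 => hG1G2 z h2 h1)
      (disj h1u hA1B hG1B hA1c hG1c hcd₀)
      (disj h1u hA1B hG2B hA1c hG2c hcd₂)
      (disj h1u hO1B hG2B hO1c hG2c hdd)
      hq1O1 hq1G1 hq1B
  -- crossing 3 : path 3 and Q cross in D₂ (ears O3, G2); others A3, G1
  have hc3 : A3.length + G1.length + 2 ≤ L := by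
    refine cross hmax hx3 hu h3u hA3 hO3 hG1 hG2 hO3B hG2B
      hA3O3 hG1G2
      (disj h3u hA3B hG2B hA3c hG2c hcd₂)
      (disj h3u hA3B hG1B hA3c hG1c hcd₀)
      (disj h3u hO3B hG1B hO3c hG1c hd₂d₀)
      hq3O3 hq3G2 hq3B
  omega

/-- Split a "solo" path (meeting `B` exactly at `x`) into the ear containing a point of
the component of `c₀` and the other ear, with purity information. -/
lemma earpick {B : Finset V} {x s t c₀ : V} {P : G.Walk s t} (hP : P.IsPath)
    (hxB : x ∈ B) (hxP : x ∈ P.support)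
    (hsolo : ∀ z ∈ P.support, z ∈ B → z = x)
    {p q : V} (hpP : p ∈ P.support) (hqP : q ∈ P.support) (hpB : p ∉ B) (hqB : q ∉ B)
    (hpc : Reach G B p c₀) (hqc : ¬ Reach G B q c₀) :
    ∃ (cA cO : V) (A : G.Walk x cA) (O : G.Walk x cO),
      A.IsPath ∧ O.IsPath ∧ A.length + O.length = P.length ∧
      (∀ z ∈ P.support, z ∈ A.support ∨ z ∈ O.support) ∧
      (∀ z ∈ A.support, z ∈ P.support) ∧ (∀ z ∈ O.support, z ∈ P.support) ∧
      (∀ z, z ∈ A.support → z ∈ O.support → z = x) ∧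
      (∀ z ∈ A.support, z ∈ B → z = x) ∧ (∀ z ∈ O.support, z ∈ B → z = x) ∧
      p ∈ A.support ∧ q ∈ O.support ∧
      (∀ w ∈ A.support, w ∉ B → Reach G B w c₀) ∧
      (∀ w ∈ O.support, w ∉ B → Reach G B w q) := by
  obtain ⟨e₁, e₂, h1, h2, hsum, hcov, hs1, hs2, hdisj⟩ := ear_split hP hxP
  have hB1 : ∀ z ∈ e₁.support, z ∈ B → z = x := fun z hz hzB => hsolo z (hs1 z hz) hzB
  have hB2 : ∀ z ∈ e₂.support, z ∈ B → z = x := fun z hz hzB => hsolo z (hs2 z hz) hzB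
  rcases hcov p hpP with hp1 | hp2 <;> rcases hcov q hqP with hq1 | hq2
  · exact absurd ((reach_of_mem_ear h1 hxB hB1 hq1 hp1 hqB hpB).trans hpc) hqc
  · refine ⟨_, _, e₁, e₂, h1, h2, hsum, hcov, hs1, hs2, hdisj, hB1, hB2, hp1, hq2,
      ?_, ?_⟩
    · exact fun w hw hwB => (reach_of_mem_ear h1 hxB hB1 hw hp1 hwB hpB).trans hpc
    · exact fun w hw hwB => reach_of_mem_ear h2 hxB hB2 hw hq2 hwB hqB
  · refine ⟨_, _, e₂, e₁, h2, h1, by omega, fun z hz => (hcov z hz).symm, hs2, hs1,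
      (fun z hz1 hz2 => hdisj z hz2 hz1), hB2, hB1, hp2, hq1, ?_, ?_⟩
    · exact fun w hw hwB => (reach_of_mem_ear h2 hxB hB2 hw hp2 hwB hpB).trans hpc
    · exact fun w hw hwB => reach_of_mem_ear h1 hxB hB1 hw hq1 hwB hqB
  · exact absurd ((reach_of_mem_ear h2 hxB hB2 hq2 hp2 hqB hpB).trans hpc) hqc

/-- Stage 3: given the three solo paths with a common component `c₀`, the solo path `Q₀`
of the fourth vertex, crossing points, and the linked pair, derive a contradiction. -/
lemma stage3 {B : Finset V} {L : ℕ}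
    (hmax : ∀ ⦃a b : V⦄ (q : G.Walk a b), q.IsPath → q.length ≤ L)
    (hbound : ∀ {c : V}, c ∉ B → ∀ SC : Finset V, SC ⊆ B →
      (∀ b ∈ SC, ∃ v', Reach G B v' c ∧ G.Adj v' b) → SC.card ≤ 3)
    {x1 x2 x3 u : V} (hx1 : x1 ∈ B) (hx2 : x2 ∈ B) (hx3 : x3 ∈ B) (huB : u ∈ B)
    (h12 : x1 ≠ x2) (h13 : x1 ≠ x3) (h23 : x2 ≠ x3)
    (h1u : x1 ≠ u) (h2u : x2 ≠ u) (h3u : x3 ≠ u)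
    {c₀ : V}
    {s1 t1 s2 t2 s3 t3 sq tq : V}
    {P1 : G.Walk s1 t1} {P2 : G.Walk s2 t2} {P3 : G.Walk s3 t3} {Q₀ : G.Walk sq tq}
    (hP1 : P1.IsPath) (hP2 : P2.IsPath) (hP3 : P3.IsPath) (hQ₀ : Q₀.IsPath)
    (hP1L : P1.length = L) (hP3L : P3.length = L) (hQL : Q₀.length = L)
    (hP1m : x1 ∈ P1.support) (hP2m : x2 ∈ P2.support) (hP3m : x3 ∈ P3.support)
    (hQm : u ∈ Q₀.support)
    (hsolo1 : ∀ z ∈ P1.support, z ∈ B → z = x1)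
    (hsolo2 : ∀ z ∈ P2.support, z ∈ B → z = x2)
    (hsolo3 : ∀ z ∈ P3.support, z ∈ B → z = x3)
    (hsoloQ : ∀ z ∈ Q₀.support, z ∈ B → z = u)
    {p1 p3 : V}
    (hp1P : p1 ∈ P1.support) (hp1B : p1 ∉ B) (hp1c : Reach G B p1 c₀)
    (hp3P : p3 ∈ P3.support) (hp3B : p3 ∉ B) (hp3c : Reach G B p3 c₀)
    {q1 q2 q3 : V}
    (hq1P : q1 ∈ P1.support) (hq1Q : q1 ∈ Q₀.support) (hq1B : q1 ∉ B)
    (hq2P : q2 ∈ P2.support) (hq2Q : q2 ∈ Q₀.support) (hq2B : q2 ∉ B)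
    (hq3P : q3 ∈ P3.support) (hq3Q : q3 ∈ Q₀.support) (hq3B : q3 ∉ B)
    (hq1c : ¬ Reach G B q1 c₀) (hq3c : ¬ Reach G B q3 c₀)
    (hlink : Reach G B q1 q2)
    {v13 : V} (hv13P1 : v13 ∈ P1.support) (hv13P3 : v13 ∈ P3.support) (hv13B : v13 ∉ B) :
    False := by
  classical
  by_cases hq31 : Reach G B q3 q1
  · -- four vertices attach to the component of q1 : contradiction with hbound
    have hmemSD : ∀ {y sy ty : V} {P : G.Walk sy ty}, P.IsPath → y ∈ B → y ∈ P.support →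
        (∀ z ∈ P.support, z ∈ B → z = y) →
        ∀ {w : V}, w ∈ P.support → w ∉ B → Reach G B w q1 →
        ∃ v', Reach G B v' q1 ∧ G.Adj v' y := by
      intro y sy ty P hP hyB hyP hsol w hwP hwB hwq
      obtain ⟨v', b, hreach, hbB, hbP, hadj⟩ := attach hP hyB hyP hwP hwB
      have hb : b = y := hsol b hbP hbB
      subst hb
      exact ⟨v', hreach.symm.trans hwq, hadj⟩
    have hsub : ({x1, x2, x3, u} : Finset V) ⊆ B := by
      intro z hz
      simp only [Finset.mem_insert, Finset.mem_singleton] at hz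
      rcases hz with rfl | rfl | rfl | rfl
      · exact hx1
      · exact hx2
      · exact hx3
      · exact huB
    have hatt : ∀ b ∈ ({x1, x2, x3, u} : Finset V),
        ∃ v', Reach G B v' q1 ∧ G.Adj v' b := by
      intro b hb
      simp only [Finset.mem_insert, Finset.mem_singleton] at hb
      rcases hb with rfl | rfl | rfl | rfl
      · exact hmemSD hP1 hx1 hP1m hsolo1 hq1P hq1B (reach_refl hq1B)
      · exact hmemSD hP2 hx2 hP2m hsolo2 hq2P hq2B hlink.symm
      · exact hmemSD hP3 hx3 hP3m hsolo3 hq3P hq3B hq31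
      · exact hmemSD hQ₀ huB hQm hsoloQ hq1Q hq1B (reach_refl hq1B)
    have hcard4 : ({x1, x2, x3, u} : Finset V).card = 4 := by
      rw [Finset.card_insert_of_notMem (by simp [h12, h13, h1u]),
        Finset.card_insert_of_notMem (by simp [h23, h2u]),
        Finset.card_insert_of_notMem (by simp [h3u]), Finset.card_singleton]
    have := hbound hq1B _ hsub hatt
    omega
  · -- the real configuration
    obtain ⟨cA1, cO1, A1, O1, hA1, hO1, hsum1, hcov1, _, _, hA1O1, hA1B, hO1B, hp1A1, hq1O1,
      hA1c, hO1c⟩ := earpick hP1 hx1 hP1m hsolo1 hp1P hq1P hp1B hq1B hp1c hq1c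
    obtain ⟨cA3, cO3, A3, O3, hA3, hO3, hsum3, hcov3, _, _, hA3O3, hA3B, hO3B, hp3A3, hq3O3,
      hA3c, hO3c⟩ := earpick hP3 hx3 hP3m hsolo3 hp3P hq3P hp3B hq3B hp3c hq3c
    -- the ears of Q₀ at u
    obtain ⟨g1, g2, hg1, hg2, hsumG, hcovG, hsg1, hsg2, hdisjG⟩ := ear_split hQ₀ hQm
    have hg1B : ∀ z ∈ g1.support, z ∈ B → z = u := fun z hz hzB => hsoloQ z (hsg1 z hz) hzB
    have hg2B : ∀ z ∈ g2.support, z ∈ B → z = u := fun z hz hzB => hsoloQ z (hsg2 z hz) hzB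
    have hsumG' : g1.length + g2.length = L := by rw [hsumG, hQL]
    -- v13 lies on A1 and A3
    have hv13A1 : v13 ∈ A1.support := by
      rcases hcov1 v13 hv13P1 with h | h
      · exact h
      · exfalso
        have hr1 : Reach G B v13 q1 := hO1c v13 h hv13B
        rcases hcov3 v13 hv13P3 with h' | h'
        · exact hq1c (hr1.symm.trans (hA3c v13 h' hv13B))
        · exact hq31 ((hO3c v13 h' hv13B).symm.trans hr1)
    have hv13A3 : v13 ∈ A3.support := by
      rcases hcov3 v13 hv13P3 with h | h
      · exact h
      · exact absurd ((hO3c v13 h hv13B).symm.trans (hA1c v13 hv13A1 hv13B)) hq3c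
    -- finish, given the orientation of the ears of Q₀
    have finish : ∀ {cg1 cg2 : V} {G1 : G.Walk u cg1} {G2 : G.Walk u cg2},
        G1.IsPath → G2.IsPath → G1.length + G2.length = L →
        (∀ z ∈ G1.support, z ∈ B → z = u) → (∀ z ∈ G2.support, z ∈ B → z = u) →
        (∀ z, z ∈ G1.support → z ∈ G2.support → z = u) →
        q1 ∈ G1.support → q3 ∈ G2.support → False := by
      intro cg1 cg2 G1 G2 hG1 hG2 hsum' hG1B hG2B hdisj' hq1g hq3g
      have hG1c : ∀ w ∈ G1.support, w ∉ B → Reach G B w q1 :=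
        fun w hw hwB => reach_of_mem_ear hG1 huB hG1B hw hq1g hwB hq1B
      have hG2c : ∀ w ∈ G2.support, w ∉ B → Reach G B w q3 :=
        fun w hw hwB => reach_of_mem_ear hG2 huB hG2B hw hq3g hwB hq3B
      exact final_contradiction hmax hx1 hx3 huB h13 h1u h3u
        (fun h => hq1c h.symm) (fun h => hq3c h.symm) (fun h => hq31 h.symm)
        hA1 hO1 hA3 hO3 hG1 hG2
        (by rw [hsum1, hP1L]) (by rw [hsum3, hP3L]) hsum'
        hA1B hO1B hA3B hO3B hG1B hG2B hA1O1 hA3O3 hdisj'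
        hA1c hO1c hA3c hO3c hG1c hG2c
        hv13A1 hv13A3 hv13B hq1O1 hq1g hq1B hq3O3 hq3g hq3B
    rcases hcovG q1 hq1Q with h1 | h1 <;> rcases hcovG q3 hq3Q with h3 | h3
    · exact hq31 (reach_of_mem_ear hg1 huB hg1B h3 h1 hq3B hq1B)
    · exact finish hg1 hg2 hsumG' hg1B hg2B hdisjG h1 h3
    · exact finish hg2 hg1 (by omega) hg2B hg1B (fun z hz hz' => hdisjG z hz' hz) h1 h3
    · exact hq31 (reach_of_mem_ear hg2 huB hg2B h3 h1 hq3B hq1B)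

/-- Stage 2: given the four solo paths with three of them meeting a common component,
produce a transversal of size ≤ 3. -/
lemma stage2 {B : Finset V} {L : ℕ}
    (hconn : G.Connected)
    (hmax : ∀ ⦃a b : V⦄ (q : G.Walk a b), q.IsPath → q.length ≤ L)
    (hmeet : ∀ ⦃a b : V⦄ (p : G.Walk a b), IsLongestPath G p → ∃ z ∈ p.support, z ∈ B)
    (hbound : ∀ {c : V}, c ∉ B → ∀ SC : Finset V, SC ⊆ B →
      (∀ b ∈ SC, ∃ v', Reach G B v' c ∧ G.Adj v' b) → SC.card ≤ 3)
    {x1 x2 x3 u : V} (hx1 : x1 ∈ B) (hx2 : x2 ∈ B) (hx3 : x3 ∈ B) (huB : u ∈ B)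
    (h12 : x1 ≠ x2) (h13 : x1 ≠ x3) (h23 : x2 ≠ x3)
    (h1u : x1 ≠ u) (h2u : x2 ≠ u) (h3u : x3 ≠ u)
    (hBclass : ∀ b ∈ B, b = x1 ∨ b = x2 ∨ b = x3 ∨ b = u)
    {s1 t1 s2 t2 s3 t3 : V}
    {P1 : G.Walk s1 t1} {P2 : G.Walk s2 t2} {P3 : G.Walk s3 t3}
    (hP1 : IsLongestPath G P1) (hP2 : IsLongestPath G P2) (hP3 : IsLongestPath G P3)
    (hP1L : P1.length = L) (hP2L : P2.length = L) (hP3L : P3.length = L)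
    (hP1m : x1 ∈ P1.support) (hP2m : x2 ∈ P2.support) (hP3m : x3 ∈ P3.support)
    (hsolo1 : ∀ z ∈ P1.support, z ∈ B → z = x1)
    (hsolo2 : ∀ z ∈ P2.support, z ∈ B → z = x2)
    (hsolo3 : ∀ z ∈ P3.support, z ∈ B → z = x3)
    {c₀ : V} (hc₀B : c₀ ∉ B)
    {p1 p2 p3 : V}
    (hp1P : p1 ∈ P1.support) (hp1B : p1 ∉ B) (hp1c : Reach G B p1 c₀)
    (hp2P : p2 ∈ P2.support) (hp2B : p2 ∉ B) (hp2c : Reach G B p2 c₀)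
    (hp3P : p3 ∈ P3.support) (hp3B : p3 ∉ B) (hp3c : Reach G B p3 c₀) :
    ∃ S : Finset V, S.card ≤ 3 ∧
      ∀ ⦃a b : V⦄ (p : G.Walk a b), IsLongestPath G p → ∃ x ∈ S, x ∈ p.support := by
  classical
  set SC := B.filter (fun b => ∃ v', Reach G B v' c₀ ∧ G.Adj v' b) with hSCdef
  have hSCsub : SC ⊆ B := Finset.filter_subset _ _
  have hSC3 : SC.card ≤ 3 :=
    hbound hc₀B SC hSCsub (fun b hb => (Finset.mem_filter.1 hb).2)
  have hmemSC : ∀ {y sy ty : V} {P : G.Walk sy ty}, P.IsPath → y ∈ B → y ∈ P.support →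
      (∀ z ∈ P.support, z ∈ B → z = y) →
      ∀ {w : V}, w ∈ P.support → w ∉ B → Reach G B w c₀ → y ∈ SC := by
    intro y sy ty P hP hyB hyP hsol w hwP hwB hwc
    obtain ⟨v', b, hreach, hbB, hbP, hadj⟩ := attach hP hyB hyP hwP hwB
    have hb : b = y := hsol b hbP hbB
    subst hb
    exact Finset.mem_filter.2 ⟨hyB, v', hreach.symm.trans hwc, hadj⟩
  have hm1 : x1 ∈ SC := hmemSC hP1.1 hx1 hP1m hsolo1 hp1P hp1B hp1c
  have hm2 : x2 ∈ SC := hmemSC hP2.1 hx2 hP2m hsolo2 hp2P hp2B hp2c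
  have hm3 : x3 ∈ SC := hmemSC hP3.1 hx3 hP3m hsolo3 hp3P hp3B hp3c
  by_cases htr : ∀ (a b : V) (p : G.Walk a b), IsLongestPath G p → ∃ w ∈ p.support, w ∈ SC
  · refine ⟨SC, hSC3, fun a b p hp => ?_⟩
    obtain ⟨w, hw1, hw2⟩ := htr a b p hp
    exact ⟨w, hw2, hw1⟩
  push_neg at htr
  obtain ⟨sq, tq, Q₀, hQ₀, hQavoid⟩ := htr
  have hQsolo : ∀ z ∈ Q₀.support, z ∈ B → z = u := by
    intro z hz hzB
    rcases hBclass z hzB with rfl | rfl | rfl | rfl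
    · exact absurd hm1 (hQavoid z hz)
    · exact absurd hm2 (hQavoid z hz)
    · exact absurd hm3 (hQavoid z hz)
    · rfl
  obtain ⟨zq, hzq, hzqB⟩ := hmeet Q₀ hQ₀
  have hQm : u ∈ Q₀.support := (hQsolo zq hzq hzqB) ▸ hzq
  have hQL : Q₀.length = L := le_antisymm (hmax _ hQ₀.1) (hP1L ▸ hQ₀.2 _ hP1.1)
  have hQnoC : ∀ w ∈ Q₀.support, w ∉ B → ¬ Reach G B w c₀ := by
    intro w hw hwB hwc
    exact hQavoid u hQm (hmemSC hQ₀.1 huB hQm hQsolo hw hwB hwc)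
  have crosspt : ∀ {y sy ty : V} {P : G.Walk sy ty}, IsLongestPath G P →
      (∀ z ∈ P.support, z ∈ B → z = y) → y ≠ u →
      ∃ v, v ∈ P.support ∧ v ∈ Q₀.support ∧ v ∉ B := by
    intro y sy ty P hP hsol hyu
    obtain ⟨z, hz1, hz2⟩ := two_longest_intersect hconn hP hQ₀
    exact ⟨z, hz1, hz2, fun hzB => hyu ((hsol z hz1 hzB).symm.trans (hQsolo z hz2 hzB))⟩
  obtain ⟨q1, hq1P, hq1Q, hq1B⟩ := crosspt hP1 hsolo1 h1u
  obtain ⟨q2, hq2P, hq2Q, hq2B⟩ := crosspt hP2 hsolo2 h2u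
  obtain ⟨q3, hq3P, hq3Q, hq3B⟩ := crosspt hP3 hsolo3 h3u
  have hq1c : ¬ Reach G B q1 c₀ := hQnoC q1 hq1Q hq1B
  have hq2c : ¬ Reach G B q2 c₀ := hQnoC q2 hq2Q hq2B
  have hq3c : ¬ Reach G B q3 c₀ := hQnoC q3 hq3Q hq3B
  have crossP : ∀ {y y' sy ty sy' ty' : V} {P : G.Walk sy ty} {P' : G.Walk sy' ty'},
      IsLongestPath G P → IsLongestPath G P' →
      (∀ z ∈ P.support, z ∈ B → z = y) → (∀ z ∈ P'.support, z ∈ B → z = y') → y ≠ y' →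
      ∃ v, v ∈ P.support ∧ v ∈ P'.support ∧ v ∉ B := by
    intro y y' sy ty sy' ty' P P' hP hP' hsol hsol' hyy
    obtain ⟨z, hz1, hz2⟩ := two_longest_intersect hconn hP hP'
    exact ⟨z, hz1, hz2, fun hzB => hyy ((hsol z hz1 hzB).symm.trans (hsol' z hz2 hzB))⟩
  obtain ⟨v12, hv12a, hv12b, hv12B⟩ := crossP hP1 hP2 hsolo1 hsolo2 h12
  obtain ⟨v13, hv13a, hv13b, hv13B⟩ := crossP hP1 hP3 hsolo1 hsolo3 h13
  have case12 : Reach G B q1 q2 → False := fun hlink =>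
    stage3 hmax (fun {c} => hbound) hx1 hx2 hx3 huB h12 h13 h23 h1u h2u h3u
      hP1.1 hP2.1 hP3.1 hQ₀.1 hP1L hP3L hQL hP1m hP2m hP3m hQm
      hsolo1 hsolo2 hsolo3 hQsolo hp1P hp1B hp1c hp3P hp3B hp3c
      hq1P hq1Q hq1B hq2P hq2Q hq2B hq3P hq3Q hq3B hq1c hq3c hlink
      hv13a hv13b hv13B
  have case13 : Reach G B q1 q3 → False := fun hlink =>
    stage3 hmax (fun {c} => hbound) hx1 hx3 hx2 huB h13 h12 (Ne.symm h23) h1u h3u h2u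
      hP1.1 hP3.1 hP2.1 hQ₀.1 hP1L hP2L hQL hP1m hP3m hP2m hQm
      hsolo1 hsolo3 hsolo2 hQsolo hp1P hp1B hp1c hp2P hp2B hp2c
      hq1P hq1Q hq1B hq3P hq3Q hq3B hq2P hq2Q hq2B hq1c hq2c hlink
      hv12a hv12b hv12B
  have case23 : Reach G B q2 q3 → False := fun hlink =>
    stage3 hmax (fun {c} => hbound) hx2 hx3 hx1 huB h23 (Ne.symm h12) (Ne.symm h13)
      h2u h3u h1u
      hP2.1 hP3.1 hP1.1 hQ₀.1 hP2L hP1L hQL hP2m hP3m hP1m hQm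
      hsolo2 hsolo3 hsolo1 hQsolo hp2P hp2B hp2c hp1P hp1B hp1c
      hq2P hq2Q hq2B hq3P hq3Q hq3B hq1P hq1Q hq1B hq2c hq1c hlink
      hv12b hv12a hv12B
  obtain ⟨g1, g2, hg1, hg2, _, hcovG, hsg1, hsg2, _⟩ := ear_split hQ₀.1 hQm
  have hg1B : ∀ z ∈ g1.support, z ∈ B → z = u := fun z hz hzB => hQsolo z (hsg1 z hz) hzB
  have hg2B : ∀ z ∈ g2.support, z ∈ B → z = u := fun z hz hzB => hQsolo z (hsg2 z hz) hzB
  rcases hcovG q1 hq1Q with h1 | h1 <;> rcases hcovG q2 hq2Q with h2 | h2 <;>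
    rcases hcovG q3 hq3Q with h3 | h3
  · exact (case12 (reach_of_mem_ear hg1 huB hg1B h1 h2 hq1B hq2B)).elim
  · exact (case12 (reach_of_mem_ear hg1 huB hg1B h1 h2 hq1B hq2B)).elim
  · exact (case13 (reach_of_mem_ear hg1 huB hg1B h1 h3 hq1B hq3B)).elim
  · exact (case23 (reach_of_mem_ear hg2 huB hg2B h2 h3 hq2B hq3B)).elim
  · exact (case23 (reach_of_mem_ear hg1 huB hg1B h2 h3 hq2B hq3B)).elim
  · exact (case13 (reach_of_mem_ear hg2 huB hg2B h1 h3 hq1B hq3B)).elim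
  · exact (case12 (reach_of_mem_ear hg2 huB hg2B h1 h2 hq1B hq2B)).elim
  · exact (case12 (reach_of_mem_ear hg2 huB hg2B h1 h2 hq1B hq2B)).elim

end LptAux

open LptAux in
/-- If a finite connected graph `G` with at least two vertices admits a tree
decomposition of width at most 3 (i.e. `G` is a connected partial 3-tree), then
`lpt(G) ≤ 3`. -/
theorem lpt_le_three_of_partial_three_tree {V ι : Type*} [Fintype V] [Fintype ι]
    (G : SimpleGraph V) (T : SimpleGraph ι) (hconn : G.Connected)
    (hcard : 2 ≤ Fintype.card V)
    (D : TreeDecomp G T) (hwidth : ∀ t : ι, (D.bag t).card ≤ 4) :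
    ∃ S : Finset V, S.card ≤ 3 ∧
      ∀ ⦃u v : V⦄ (p : G.Walk u v), IsLongestPath G p → ∃ x ∈ S, x ∈ p.support := by
  classical
  have hVne : Nonempty V := Fintype.card_pos_iff.mp (by omega)
  obtain ⟨a₀, b₀, p₀, hp₀⟩ := exists_longest G
  set L := p₀.length with hLdef
  have hmax : ∀ ⦃a b : V⦄ (q : G.Walk a b), q.IsPath → q.length ≤ L := hp₀.2
  have hlenL : ∀ {a b : V} {p : G.Walk a b}, IsLongestPath G p → p.length = L :=
    fun hp => le_antisymm (hmax _ hp.1) (hp.2 _ hp₀.1)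
  -- Helly gives a central bag meeting every longest path
  set F : Finset (Finset ι) := Finset.univ.filter
    (fun s => ∃ (a b : V) (p : G.Walk a b), IsLongestPath G p ∧ s = nodesOf D p)
    with hFdef
  have hFmem : ∀ {a b : V} {p : G.Walk a b}, IsLongestPath G p → nodesOf D p ∈ F := by
    intro a b p hp
    simp only [hFdef, Finset.mem_filter, Finset.mem_univ, true_and]
    exact ⟨a, b, p, hp, rfl⟩
  have hFconv : ∀ s ∈ F, Conv T s := by
    intro s hs
    simp only [hFdef, Finset.mem_filter, Finset.mem_univ, true_and] at hs
    obtain ⟨a, b, p, hp, rfl⟩ := hs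
    exact conv_nodesOf D p
  have hFpair : ∀ s ∈ F, ∀ s' ∈ F, ∃ t, t ∈ s ∧ t ∈ s' := by
    intro s hs s' hs'
    simp only [hFdef, Finset.mem_filter, Finset.mem_univ, true_and] at hs hs'
    obtain ⟨a, b, p, hp, rfl⟩ := hs
    obtain ⟨a', b', p', hp', rfl⟩ := hs'
    obtain ⟨z, hz, hz'⟩ := two_longest_intersect hconn hp hp'
    obtain ⟨t, ht⟩ := D.bag_cover z
    exact ⟨t, mem_nodesOf.2 ⟨z, hz, ht⟩, mem_nodesOf.2 ⟨z, hz', ht⟩⟩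
  obtain ⟨t₀, ht₀⟩ := helly D.isTree.2 F.card F rfl ⟨nodesOf D p₀, hFmem hp₀⟩ hFconv hFpair
  set B := D.bag t₀ with hBdef
  have hmeet : ∀ ⦃a b : V⦄ (p : G.Walk a b), IsLongestPath G p →
      ∃ z ∈ p.support, z ∈ B := by
    intro a b p hp
    exact mem_nodesOf.1 (ht₀ _ (hFmem hp))
  by_cases hB3 : B.card ≤ 3
  · refine ⟨B, hB3, fun u v p hp => ?_⟩
    obtain ⟨z, h1, h2⟩ := hmeet p hp
    exact ⟨z, h2, h1⟩
  have hB4 : B.card = 4 := le_antisymm (hwidth t₀) (by omega)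
  by_cases hgood : ∃ x ∈ B, ∀ (a b : V) (p : G.Walk a b), IsLongestPath G p →
      ∃ z ∈ p.support, z ∈ B.erase x
  · obtain ⟨x, hx, h⟩ := hgood
    refine ⟨B.erase x, by rw [Finset.card_erase_of_mem hx]; omega, fun u v p hp => ?_⟩
    obtain ⟨z, h1, h2⟩ := h u v p hp
    exact ⟨z, h2, h1⟩
  push_neg at hgood
  have solo : ∀ x ∈ B, ∃ (sa ta : V) (p : G.Walk sa ta), IsLongestPath G p ∧
      x ∈ p.support ∧ ∀ z ∈ p.support, z ∈ B → z = x := by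
    intro x hx
    obtain ⟨sa, ta, p, hp, havoid⟩ := hgood x hx
    have hone : ∀ z ∈ p.support, z ∈ B → z = x := by
      intro z hz hzB
      have h1 := havoid z hz
      rw [Finset.mem_erase] at h1
      push_neg at h1
      by_contra hne
      exact absurd hzB (h1 hne)
    obtain ⟨z, hz1, hz2⟩ := hmeet p hp
    exact ⟨sa, ta, p, hp, (hone z hz1 hz2) ▸ hz1, hone⟩
  obtain ⟨a, haB⟩ := Finset.card_pos.mp (by omega : 0 < B.card)
  have hcard3 : (B.erase a).card = 3 := by rw [Finset.card_erase_of_mem haB, hB4]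
  obtain ⟨e1, e2, e3, he12, he13, he23, hEq⟩ := Finset.card_eq_three.mp hcard3
  have hin : ∀ w : V, w ∈ B.erase a ↔ w = e1 ∨ w = e2 ∨ w = e3 := by
    intro w; rw [hEq]; simp
  have he1 : e1 ∈ B ∧ e1 ≠ a := by
    have := Finset.mem_erase.1 ((hin e1).2 (Or.inl rfl)); exact ⟨this.2, this.1⟩
  have he2 : e2 ∈ B ∧ e2 ≠ a := by
    have := Finset.mem_erase.1 ((hin e2).2 (Or.inr (Or.inl rfl))); exact ⟨this.2, this.1⟩
  have he3 : e3 ∈ B ∧ e3 ≠ a := by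
    have := Finset.mem_erase.1 ((hin e3).2 (Or.inr (Or.inr rfl))); exact ⟨this.2, this.1⟩
  have hBall : ∀ b ∈ B, b = a ∨ b = e1 ∨ b = e2 ∨ b = e3 := by
    intro b hb
    by_cases hba : b = a
    · exact Or.inl hba
    · rcases (hin b).1 (Finset.mem_erase.2 ⟨hba, hb⟩) with h | h | h
      exacts [Or.inr (Or.inl h), Or.inr (Or.inr (Or.inl h)), Or.inr (Or.inr (Or.inr h))]
  obtain ⟨sa, ta, Pa, hPa, hPam, hsoloa⟩ := solo a haB
  obtain ⟨s1, t1, P1, hP1, hP1m, hsolo1⟩ := solo e1 he1.1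
  obtain ⟨s2, t2, P2, hP2, hP2m, hsolo2⟩ := solo e2 he2.1
  obtain ⟨s3, t3, P3, hP3, hP3m, hsolo3⟩ := solo e3 he3.1
  have hPaL : Pa.length = L := hlenL hPa
  have hP1L : P1.length = L := hlenL hP1
  have hP2L : P2.length = L := hlenL hP2
  have hP3L : P3.length = L := hlenL hP3
  have crossP : ∀ {y y' sy ty sy' ty' : V} {P : G.Walk sy ty} {P' : G.Walk sy' ty'},
      IsLongestPath G P → IsLongestPath G P' →
      (∀ z ∈ P.support, z ∈ B → z = y) → (∀ z ∈ P'.support, z ∈ B → z = y') → y ≠ y' →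
      ∃ v, v ∈ P.support ∧ v ∈ P'.support ∧ v ∉ B := by
    intro y y' sy ty sy' ty' P P' hP hP' hsol hsol' hyy
    obtain ⟨z, hz1, hz2⟩ := two_longest_intersect hconn hP hP'
    exact ⟨z, hz1, hz2, fun hzB => hyy ((hsol z hz1 hzB).symm.trans (hsol' z hz2 hzB))⟩
  obtain ⟨w1, hw1a, hw1b, hw1B⟩ := crossP hPa hP1 hsoloa hsolo1 (Ne.symm he1.2)
  obtain ⟨w2, hw2a, hw2b, hw2B⟩ := crossP hPa hP2 hsoloa hsolo2 (Ne.symm he2.2)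
  obtain ⟨w3, hw3a, hw3b, hw3B⟩ := crossP hPa hP3 hsoloa hsolo3 (Ne.symm he3.2)
  have hbound : ∀ {c : V}, c ∉ B → ∀ SC : Finset V, SC ⊆ B →
      (∀ b ∈ SC, ∃ v', Reach G B v' c ∧ G.Adj v' b) → SC.card ≤ 3 :=
    fun {c} hc SC hsub hatt => attach_bound hwidth hc SC hsub hatt
  -- the three possible linked pairs
  have case12 : Reach G B w1 w2 →
      ∃ S : Finset V, S.card ≤ 3 ∧
        ∀ ⦃u v : V⦄ (p : G.Walk u v), IsLongestPath G p → ∃ x ∈ S, x ∈ p.support := by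
    intro hlink
    exact stage2 hconn hmax hmeet (fun {c} => hbound) haB he1.1 he2.1 he3.1
      (Ne.symm he1.2) (Ne.symm he2.2) he12 (Ne.symm he3.2) he13 he23
      hBall hPa hP1 hP2 hPaL hP1L hP2L hPam hP1m hP2m hsoloa hsolo1 hsolo2
      hw1B hw1a hw1B (reach_refl hw1B) hw1b hw1B (reach_refl hw1B)
      hw2b hw2B hlink.symm
  have case13 : Reach G B w1 w3 →
      ∃ S : Finset V, S.card ≤ 3 ∧
        ∀ ⦃u v : V⦄ (p : G.Walk u v), IsLongestPath G p → ∃ x ∈ S, x ∈ p.support := by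
    intro hlink
    refine stage2 hconn hmax hmeet (fun {c} => hbound) haB he1.1 he3.1 he2.1
      (Ne.symm he1.2) (Ne.symm he3.2) he13 (Ne.symm he2.2) he12 (Ne.symm he23)
      ?_ hPa hP1 hP3 hPaL hP1L hP3L hPam hP1m hP3m hsoloa hsolo1 hsolo3
      hw1B hw1a hw1B (reach_refl hw1B) hw1b hw1B (reach_refl hw1B)
      hw3b hw3B hlink.symm
    intro b hb
    rcases hBall b hb with h | h | h | h
    exacts [Or.inl h, Or.inr (Or.inl h), Or.inr (Or.inr (Or.inr h)),
      Or.inr (Or.inr (Or.inl h))]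
  have case23 : Reach G B w2 w3 →
      ∃ S : Finset V, S.card ≤ 3 ∧
        ∀ ⦃u v : V⦄ (p : G.Walk u v), IsLongestPath G p → ∃ x ∈ S, x ∈ p.support := by
    intro hlink
    refine stage2 hconn hmax hmeet (fun {c} => hbound) haB he2.1 he3.1 he1.1
      (Ne.symm he2.2) (Ne.symm he3.2) he23 (Ne.symm he1.2) (Ne.symm he12)
      (Ne.symm he13)
      ?_ hPa hP2 hP3 hPaL hP2L hP3L hPam hP2m hP3m hsoloa hsolo2 hsolo3
      hw2B hw2a hw2B (reach_refl hw2B) hw2b hw2B (reach_refl hw2B)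
      hw3b hw3B hlink.symm
    intro b hb
    rcases hBall b hb with h | h | h | h
    exacts [Or.inl h, Or.inr (Or.inr (Or.inr h)), Or.inr (Or.inl h),
      Or.inr (Or.inr (Or.inl h))]
  -- pigeonhole on the two ears of Pa at a
  obtain ⟨f1, f2, hf1, hf2, _, hcovF, hsf1, hsf2, _⟩ := ear_split hPa.1 hPam
  have hf1B : ∀ z ∈ f1.support, z ∈ B → z = a := fun z hz hzB => hsoloa z (hsf1 z hz) hzB
  have hf2B : ∀ z ∈ f2.support, z ∈ B → z = a := fun z hz hzB => hsoloa z (hsf2 z hz) hzB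
  rcases hcovF w1 hw1a with h1 | h1 <;> rcases hcovF w2 hw2a with h2 | h2 <;>
    rcases hcovF w3 hw3a with h3 | h3
  · exact case12 (reach_of_mem_ear hf1 haB hf1B h1 h2 hw1B hw2B)
  · exact case12 (reach_of_mem_ear hf1 haB hf1B h1 h2 hw1B hw2B)
  · exact case13 (reach_of_mem_ear hf1 haB hf1B h1 h3 hw1B hw3B)
  · exact case23 (reach_of_mem_ear hf2 haB hf2B h2 h3 hw2B hw3B)
  · exact case23 (reach_of_mem_ear hf1 haB hf1B h2 h3 hw2B hw3B)
  · exact case13 (reach_of_mem_ear hf2 haB hf2B h1 h3 hw1B hw3B)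
  · exact case12 (reach_of_mem_ear hf2 haB hf2B h1 h2 hw1B hw2B)
  · exact case12 (reach_of_mem_ear hf2 haB hf2B h1 h2 hw1B hw2B)
end

section
/- Let G = (X, Y, E) be a finite connected bipartite permutation graph and let vw ∈ E with v ∈ X and w ∈ Y. Then every ordered longest path of G contains v or w. -/
open SimpleGraph

set_option maxHeartbeats 1000000

/-- A line representation of a bipartite graph `G` on `Fin n ⊕ Fin m` (left part
`X = {x_1 < ⋯ < x_n}`, right part `Y = {y_1 < ⋯ < y_m}`), witnessing that `G` is a
bipartite permutation graph: points `r i` (for `x i`) and `s j` (for `y j`) on a first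
line, and points `σr i`, `σs j` on a second line, strictly increasing on each part and
pairwise distinct across parts, such that `x i` and `y j` are adjacent iff the
corresponding segments cross, i.e. `(r i - s j) * (σr i - σs j) < 0`; there are no edges
within `X` nor within `Y`. -/
structure LineRep (n m : ℕ) (G : SimpleGraph (Fin n ⊕ Fin m)) where
  r : Fin n → ℝ
  s : Fin m → ℝ
  σr : Fin n → ℝ
  σs : Fin m → ℝ
  r_mono : StrictMono r
  s_mono : StrictMono s
  σr_mono : StrictMono σr
  σs_mono : StrictMono σs
  top_distinct : ∀ i j, r i ≠ s j
  bot_distinct : ∀ i j, σr i ≠ σs j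
  adj_iff : ∀ i j, G.Adj (Sum.inl i) (Sum.inr j) ↔ (r i - s j) * (σr i - σs j) < 0
  no_left : ∀ i i', ¬ G.Adj (Sum.inl i) (Sum.inl i')
  no_right : ∀ j j', ¬ G.Adj (Sum.inr j) (Sum.inr j')

/-- A path in a bipartite graph on `Fin n ⊕ Fin m` is ordered if its vertices alternate
between the two parts and, within each part, appear in strictly increasing index order.
-/
def OrderedWalk {n m : ℕ} (G : SimpleGraph (Fin n ⊕ Fin m)) {u v : Fin n ⊕ Fin m}
    (p : G.Walk u v) : Prop :=
  List.Chain' (fun a b : Fin n ⊕ Fin m => a.isLeft ≠ b.isLeft) p.support ∧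
  (p.support.filterMap Sum.getLeft?).Pairwise (· < ·) ∧
  (p.support.filterMap Sum.getRight?).Pairwise (· < ·)

namespace OLPAux

/-! ### Boolean helpers -/

lemma bool_alt {a b c : Bool} (h : a ≠ b) : (b = c) ↔ ¬ (a = c) := by
  cases a <;> cases b <;> cases c <;> simp_all

lemma bool_eq_of_ne_ne {a b c : Bool} (h1 : a ≠ c) (h2 : b ≠ c) : a = b := by
  cases a <;> cases b <;> cases c <;> simp_all

lemma bool_eq_of_ne_ne' {a b c : Bool} (h1 : a ≠ b) (h2 : b ≠ c) : a = c := by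
  cases a <;> cases b <;> cases c <;> simp_all

lemma bool_eq_of_iff {a b c : Bool} (h : (a = c) ↔ (b = c)) : a = b := by
  cases a <;> cases b <;> cases c <;> simp_all

/-! ### Abstract parity lemmas -/

lemma alt_parity {L : ℕ} {A : ℕ → Prop} (hA : ∀ k, k + 1 ≤ L → (A (k+1) ↔ ¬ A k)) :
    ∀ k, k ≤ L → (A k ↔ (Even k ↔ A 0)) := by
  intro k
  induction k with
  | zero => intro _; simp
  | succ k ih =>
    intro hk
    rw [hA k hk, ih (by omega), Nat.even_add_one]
    tauto

lemma zig_parity {L : ℕ} {t b : ℕ → ℝ}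
    (hcross : ∀ k, k < L →
      (t k < t (k+1) ∧ b (k+1) < b k) ∨ (t (k+1) < t k ∧ b k < b (k+1)))
    (hmono2 : ∀ k, k + 2 ≤ L → t k < t (k+2) ∧ b k < b (k+2)) :
    ∀ k, k < L → ((t k < t (k+1) ∧ b (k+1) < b k) ↔
      (Even k ↔ (t 0 < t 1 ∧ b 1 < b 0))) := by
  intro k
  induction k with
  | zero => intro _; simp
  | succ k ih =>
    intro hk
    have hkL : k < L := by omega
    have ihk := ih hkL
    have hm := hmono2 k (by omega)
    have hflip : (t (k+1) < t (k+1+1) ∧ b (k+1+1) < b (k+1)) ↔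
        ¬ (t k < t (k+1) ∧ b (k+1) < b k) := by
      constructor
      · intro hz1 hz0
        linarith [hm.2, hz1.2, hz0.2]
      · intro hnz
        rcases hcross (k+1) hk with h2 | h2
        · exact h2
        · rcases hcross k hkL with h1 | h1
          · exact absurd h1 hnz
          · exfalso; linarith [hm.1, h1.1, h2.1]
    have heven : Even (k+1) ↔ ¬ Even k := Nat.even_add_one
    constructor
    · intro hz
      have h5 : ¬ (Even k ↔ (t 0 < t 1 ∧ b 1 < b 0)) := fun hh => (hflip.1 hz) (ihk.2 hh)
      tauto
    · intro hh
      refine hflip.2 (fun hz => ?_)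
      have h5 := ihk.1 hz
      tauto

/-! ### The core geometric contradiction -/

lemma core (L : ℕ) (t b : ℕ → ℝ) (A adjC adjD : ℕ → Prop) (ct cb dt db : ℝ)
    (hA : ∀ k, k + 1 ≤ L → (A (k+1) ↔ ¬ A k))
    (hedge : ∀ k, k < L → (A k → t k < t (k+1) ∧ b (k+1) < b k) ∧
      (¬ A k → t (k+1) < t k ∧ b k < b (k+1)))
    (hmono : ∀ k l, k < l → l ≤ L → (A k ↔ A l) → t k < t l ∧ b k < b l)
    (hcA : ∀ k, k ≤ L → A k → (ct < t k ∧ cb < b k) ∨ (t k < ct ∧ b k < cb))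
    (hdB : ∀ k, k ≤ L → ¬ A k → (dt < t k ∧ db < b k) ∨ (t k < dt ∧ b k < db))
    (hdA : ∀ k, k ≤ L → A k → ¬ adjD k →
      (dt < t k ∧ db < b k) ∨ (t k < dt ∧ b k < db))
    (hadjC : ∀ k, k ≤ L → ¬ A k →
      (adjC k ↔ ((ct < t k ∧ b k < cb) ∨ (t k < ct ∧ cb < b k))))
    (hcd : (ct < dt ∧ db < cb) ∨ (dt < ct ∧ cb < db))
    (hq : ∃ k, k ≤ L ∧ ¬ A k ∧ adjC k)
    (h0 : ¬ adjC 0) (h1 : ¬ adjC 1) (hL1 : ¬ adjC (L-1)) (hLL : ¬ adjC L)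
    (hins : ∀ k, k < L → ¬ (adjC k ∧ adjD (k+1)) ∧ ¬ (adjD k ∧ adjC (k+1))) :
    False := by
  classical
  obtain ⟨k0, hk0L, hk0A, hk0C⟩ := hq
  set S : Finset ℕ := (Finset.range (L+1)).filter (fun k => ¬ A k ∧ adjC k) with hS
  have hSmem : ∀ {k}, k ∈ S ↔ (k ≤ L ∧ ¬ A k ∧ adjC k) := by
    intro k
    simp [hS, Finset.mem_filter, Finset.mem_range, Nat.lt_succ_iff]
  have hSne : S.Nonempty := ⟨k0, hSmem.2 ⟨hk0L, hk0A, hk0C⟩⟩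
  obtain ⟨hqL, hqA, hqC⟩ := hSmem.1 (S.max'_mem hSne)
  obtain ⟨hq0L, hq0A, hq0C⟩ := hSmem.1 (S.min'_mem hSne)
  set q := S.max' hSne with hqdef
  set q0 := S.min' hSne with hq0def
  have hmaxS : ∀ k, k ≤ L → ¬ A k → adjC k → k ≤ q :=
    fun k h1 h2 h3 => S.le_max' k (hSmem.2 ⟨h1, h2, h3⟩)
  have hminS : ∀ k, k ≤ L → ¬ A k → adjC k → q0 ≤ k :=
    fun k h1 h2 h3 => S.min'_le k (hSmem.2 ⟨h1, h2, h3⟩)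
  have hq0q : q0 ≤ q := S.min'_le q (S.max'_mem hSne)
  have hq0ne0 : q0 ≠ 0 := fun h => h0 (h ▸ hq0C)
  have hq0ne1 : q0 ≠ 1 := fun h => h1 (h ▸ hq0C)
  have hqneL : q ≠ L := fun h => hLL (h ▸ hqC)
  have hqneL1 : q ≠ L - 1 := fun h => hL1 (h ▸ hqC)
  have hq2L : q + 2 ≤ L := by omega
  obtain ⟨a0, ha0⟩ : ∃ a0, q0 = a0 + 2 := ⟨q0 - 2, by omega⟩
  rw [ha0] at hq0A hq0C hq0q
  have hminS' : ∀ k, k ≤ L → ¬ A k → adjC k → a0 + 2 ≤ k := by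
    intro k h1 h2 h3; have := hminS k h1 h2 h3; omega
  have hAq1 : A (q+1) := (hA q (by omega)).2 hqA
  have hAq2 : ¬ A (q+2) := fun hh => ((hA (q+1) (by omega)).1 hh) hAq1
  have hAq01 : A (a0+1) := by
    have h2 := hA (a0+1) (by omega); tauto
  have hAq00 : ¬ A a0 := by
    have h2 := hA a0 (by omega); tauto
  have hedgeq := (hedge q (by omega)).2 hqA
  have hedgeq1 := (hedge (q+1) (by omega)).1 hAq1
  have hedgea1 := (hedge (a0+1) (by omega)).1 hAq01
  have hedgea0 := (hedge a0 (by omega)).2 hAq00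
  have hcrossq := (hadjC q hqL hqA).1 hqC
  have hcrossq0 := (hadjC (a0+2) (by omega) hq0A).1 hq0C
  -- orientation at q
  have hO1q : ct < t q ∧ b q < cb := by
    rcases hcrossq with h | h
    · exact h
    · exfalso
      rcases hcA (q+1) (by omega) hAq1 with h2 | h2
      · linarith [hedgeq.1, h.1, h2.1]
      · linarith [hedgeq.2, h.2, h2.2]
  -- orientation at q0
  have hO1q0 : ct < t (a0+2) ∧ b (a0+2) < cb := by
    rcases hcrossq0 with h | h
    · exact h
    · exfalso
      rcases hcA (a0+1) (by omega) hAq01 with h2 | h2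
      · linarith [hedgea1.1, h.1, h2.1]
      · linarith [hedgea1.2, h.2, h2.2]
  -- c is above the A-vertex before q0
  have h4 : t (a0+1) < ct ∧ b (a0+1) < cb := by
    rcases hcA (a0+1) (by omega) hAq01 with h | h
    · exfalso
      have hta0 : ct < t a0 := by linarith [hedgea0.1, h.1]
      have hba0 : b a0 < cb := by
        have hm := hmono a0 (a0+2) (by omega) (by omega) (iff_of_false hAq00 hq0A)
        linarith [hO1q0.2, hm.2]
      have hadj : adjC a0 := (hadjC a0 (by omega) hAq00).2 (Or.inl ⟨hta0, hba0⟩)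
      have := hminS' a0 (by omega) hAq00 hadj; omega
    · exact h
  -- c is below the A-vertex after q
  have h3 : ct < t (q+1) ∧ cb < b (q+1) := by
    rcases hcA (q+1) (by omega) hAq1 with h | h
    · exact h
    · exfalso
      have hb2 : b (q+2) < cb := by linarith [hedgeq1.2, h.2]
      have ht2 : ct < t (q+2) := by
        have hm := hmono q (q+2) (by omega) (by omega) (iff_of_false hqA hAq2)
        linarith [hO1q.1, hm.1]
      have hadj : adjC (q+2) := (hadjC (q+2) (by omega) hAq2).2 (Or.inl ⟨ht2, hb2⟩)
      have := hmaxS (q+2) (by omega) hAq2 hadj; omega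
  -- interval property: all B-positions between q0 and q are adjacent to c
  have h6 : ∀ l, a0 + 2 ≤ l → l ≤ q → ¬ A l → adjC l := by
    intro l hl1 hl2 hAl
    have hbl : b l < cb := by
      rcases hl2.lt_or_eq with hlt | rfl
      · have hm := hmono l q hlt hqL (iff_of_false hAl hqA)
        linarith [hO1q.2, hm.2]
      · exact hO1q.2
    have htl : ct < t l := by
      rcases hl1.lt_or_eq with hlt | heq
      · have hm := hmono (a0+2) l hlt (by omega) (iff_of_false hq0A hAl)
        linarith [hO1q0.1, hm.1]
      · rw [← heq]; exact hO1q0.1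
    exact (hadjC l (by omega) hAl).2 (Or.inl ⟨htl, hbl⟩)
  -- d is not adjacent to A-positions between q0-1 and q+1
  have h6d : ∀ l, a0 + 1 ≤ l → l ≤ q + 1 → A l → ¬ adjD l := by
    intro l hl1 hl2 hAl hDl
    by_cases hlq : l = q + 1
    · subst hlq; exact (hins q (by omega)).1 ⟨hqC, hDl⟩
    · have hlne : l ≠ q := fun h => hqA (h ▸ hAl)
      have hlq' : l + 1 ≤ q := by omega
      have hAl1 : ¬ A (l+1) := fun h => ((hA l (by omega)).1 h) hAl
      have hadj : adjC (l+1) := h6 (l+1) (by omega) hlq' hAl1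
      exact (hins l (by omega)).2 ⟨hDl, hadj⟩
  -- d relative to the bracketing A-vertices
  have hd_a01 : t (a0+1) < dt ∧ b (a0+1) < db := by
    rcases hdA (a0+1) (by omega) hAq01 (h6d (a0+1) le_rfl (by omega) hAq01) with h | h
    · exfalso
      rcases hcd with hc | hc
      · linarith [h4.1, h.1, hc.1]
      · linarith [h4.2, h.2, hc.2]
    · exact h
  have hd_q1 : dt < t (q+1) ∧ db < b (q+1) := by
    rcases hdA (q+1) (by omega) hAq1 (h6d (q+1) (by omega) le_rfl hAq1) with h | h
    · exact h
    · exfalso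
      rcases hcd with hc | hc
      · linarith [h3.2, h.2, hc.2]
      · linarith [h3.1, h.1, hc.1]
  -- find the bracketing pair for d
  set T : Finset ℕ :=
    (Finset.range (q+2)).filter (fun l => A l ∧ a0 + 1 ≤ l ∧ t l < dt ∧ b l < db) with hT
  have hTmem : ∀ {l}, l ∈ T ↔ (l ≤ q + 1 ∧ (A l ∧ a0 + 1 ≤ l ∧ t l < dt ∧ b l < db)) := by
    intro l
    simp [hT, Finset.mem_filter, Finset.mem_range, Nat.lt_succ_iff, and_assoc]
  have hTne : T.Nonempty :=
    ⟨a0+1, hTmem.2 ⟨by omega, hAq01, le_rfl, hd_a01.1, hd_a01.2⟩⟩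
  obtain ⟨hlq1, hAl, hla0, htl, hbl⟩ := hTmem.1 (T.max'_mem hTne)
  set l := T.max' hTne with hldef
  have hlneq1 : l ≠ q + 1 := by
    intro h; rw [h] at htl; linarith [hd_q1.1]
  have hlneq : l ≠ q := fun h => hqA (h ▸ hAl)
  have hl2q1 : l + 2 ≤ q + 1 := by omega
  have hAl1 : ¬ A (l+1) := fun h => ((hA l (by omega)).1 h) hAl
  have hAl2 : A (l+2) := (hA (l+1) (by omega)).2 hAl1
  have hd_l2 : dt < t (l+2) ∧ db < b (l+2) := by
    rcases hdA (l+2) (by omega) hAl2 (h6d (l+2) (by omega) hl2q1 hAl2) with h | h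
    · exact h
    · exfalso
      have hmem : l + 2 ∈ T := hTmem.2 ⟨by omega, hAl2, by omega, h.1, h.2⟩
      have := T.le_max' _ hmem; omega
  -- final contradiction around position l+1
  have hedgel := (hedge l (by omega)).1 hAl
  have hedgel1 := (hedge (l+1) (by omega)).2 hAl1
  rcases hdB (l+1) (by omega) hAl1 with h | h
  · linarith [hedgel.2, hbl, h.2]
  · linarith [hedgel1.1, hd_l2.1, h.1]

/-! ### Geometry of the representation -/

variable {n m : ℕ} {G : SimpleGraph (Fin n ⊕ Fin m)}

/-- first-line coordinate -/
def tc (rep : LineRep n m G) : Fin n ⊕ Fin m → ℝ := Sum.elim rep.r rep.s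

/-- second-line coordinate -/
def bc (rep : LineRep n m G) : Fin n ⊕ Fin m → ℝ := Sum.elim rep.σr rep.σs

lemma adj_isLeft (rep : LineRep n m G) {a b : Fin n ⊕ Fin m} (h : G.Adj a b) :
    a.isLeft ≠ b.isLeft := by
  cases a with
  | inl i =>
    cases b with
    | inl i' => exact absurd h (rep.no_left i i')
    | inr j => simp
  | inr j =>
    cases b with
    | inl i => simp
    | inr j' => exact absurd h (rep.no_right j j')

lemma adj_iff' (rep : LineRep n m G) {a b : Fin n ⊕ Fin m} (hside : a.isLeft ≠ b.isLeft) :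
    G.Adj a b ↔ ((tc rep a < tc rep b ∧ bc rep b < bc rep a) ∨
      (tc rep b < tc rep a ∧ bc rep a < bc rep b)) := by
  cases a with
  | inl i =>
    cases b with
    | inl i' => simp at hside
    | inr j =>
      rw [rep.adj_iff i j, mul_neg_iff]
      simp only [tc, bc, Sum.elim_inl, Sum.elim_inr, sub_pos, sub_neg] <;> tauto
  | inr j =>
    cases b with
    | inl i =>
      rw [G.adj_comm, rep.adj_iff i j, mul_neg_iff]
      simp only [tc, bc, Sum.elim_inl, Sum.elim_inr, sub_pos, sub_neg] <;> tauto
    | inr j' => simp at hside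

lemma t_ne (rep : LineRep n m G) {a b : Fin n ⊕ Fin m} (hside : a.isLeft ≠ b.isLeft) :
    tc rep a ≠ tc rep b := by
  cases a with
  | inl i =>
    cases b with
    | inl i' => simp at hside
    | inr j => exact rep.top_distinct i j
  | inr j =>
    cases b with
    | inl i => exact (rep.top_distinct i j).symm
    | inr j' => simp at hside

lemma b_ne (rep : LineRep n m G) {a b : Fin n ⊕ Fin m} (hside : a.isLeft ≠ b.isLeft) :
    bc rep a ≠ bc rep b := by
  cases a with
  | inl i =>
    cases b with
    | inl i' => simp at hside
    | inr j => exact rep.bot_distinct i j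
  | inr j =>
    cases b with
    | inl i => exact (rep.bot_distinct i j).symm
    | inr j' => simp at hside

lemma same_side_lt (rep : LineRep n m G) {a b : Fin n ⊕ Fin m}
    (hside : a.isLeft = b.isLeft) (hne : a ≠ b) :
    (tc rep a < tc rep b ∧ bc rep a < bc rep b) ∨
      (tc rep b < tc rep a ∧ bc rep b < bc rep a) := by
  cases a with
  | inl i =>
    cases b with
    | inl i' =>
      rcases lt_trichotomy i i' with h | h | h
      · exact Or.inl ⟨rep.r_mono h, rep.σr_mono h⟩
      · exact absurd (congrArg Sum.inl h) hne
      · exact Or.inr ⟨rep.r_mono h, rep.σr_mono h⟩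
    | inr j => simp at hside
  | inr j =>
    cases b with
    | inl i => simp at hside
    | inr j' =>
      rcases lt_trichotomy j j' with h | h | h
      · exact Or.inl ⟨rep.s_mono h, rep.σs_mono h⟩
      · exact absurd (congrArg Sum.inr h) hne
      · exact Or.inr ⟨rep.s_mono h, rep.σs_mono h⟩

lemma opp_not_adj (rep : LineRep n m G) {a b : Fin n ⊕ Fin m}
    (hside : a.isLeft ≠ b.isLeft) (hna : ¬ G.Adj a b) :
    (tc rep a < tc rep b ∧ bc rep a < bc rep b) ∨
      (tc rep b < tc rep a ∧ bc rep b < bc rep a) := by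
  rw [adj_iff' rep hside] at hna
  rcases (t_ne rep hside).lt_or_gt with h1 | h1 <;>
    rcases (b_ne rep hside).lt_or_gt with h2 | h2
  · exact Or.inl ⟨h1, h2⟩
  · exact absurd (Or.inl ⟨h1, h2⟩) hna
  · exact absurd (Or.inr ⟨h1, h2⟩) hna
  · exact Or.inr ⟨h1, h2⟩

/-! ### Monotonicity along an ordered walk -/

lemma ordered_mono (rep : LineRep n m G) :
    ∀ {u v : Fin n ⊕ Fin m} (p : G.Walk u v),
      (p.support.filterMap Sum.getLeft?).Pairwise (· < ·) →
      (p.support.filterMap Sum.getRight?).Pairwise (· < ·) →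
      ∀ k l, k < l → l ≤ p.length →
        (p.getVert k).isLeft = (p.getVert l).isLeft →
        tc rep (p.getVert k) < tc rep (p.getVert l) ∧
          bc rep (p.getVert k) < bc rep (p.getVert l) := by
  intro u v p
  induction p with
  | nil =>
    intro _ _ k l hkl hlL _
    simp only [SimpleGraph.Walk.length_nil] at hlL
    omega
  | @cons a c v' hadj q ih =>
    intro hs1 hs2 k l hkl hlL hside
    rw [SimpleGraph.Walk.support_cons, List.filterMap_cons] at hs1 hs2
    obtain ⟨l', rfl⟩ : ∃ l', l = l' + 1 := ⟨l - 1, by omega⟩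
    have hlL' : l' ≤ q.length := by
      simp only [SimpleGraph.Walk.length_cons] at hlL; omega
    cases a with
    | inl i =>
      simp only [Sum.getLeft?_inl, Sum.getRight?_inl] at hs1 hs2
      cases k with
      | zero =>
        simp only [SimpleGraph.Walk.getVert_zero, SimpleGraph.Walk.getVert_cons_succ]
          at hside ⊢
        have hmem : q.getVert l' ∈ q.support :=
          SimpleGraph.Walk.mem_support_iff_exists_getVert.2 ⟨l', rfl, hlL'⟩
        rcases hw : q.getVert l' with i' | j'
        · rw [hw] at hmem
          have hii : i < i' := (List.pairwise_cons.1 hs1).1 i'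
            (List.mem_filterMap.2 ⟨Sum.inl i', hmem, rfl⟩)
          simp only [tc, bc, Sum.elim_inl]
          exact ⟨rep.r_mono hii, rep.σr_mono hii⟩
        · rw [hw] at hside; simp at hside
      | succ k' =>
        simp only [SimpleGraph.Walk.getVert_cons_succ] at hside ⊢
        exact ih (List.pairwise_cons.1 hs1).2 hs2 k' l' (by omega) hlL' hside
    | inr j =>
      simp only [Sum.getLeft?_inr, Sum.getRight?_inr] at hs1 hs2
      cases k with
      | zero =>
        simp only [SimpleGraph.Walk.getVert_zero, SimpleGraph.Walk.getVert_cons_succ]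
          at hside ⊢
        have hmem : q.getVert l' ∈ q.support :=
          SimpleGraph.Walk.mem_support_iff_exists_getVert.2 ⟨l', rfl, hlL'⟩
        rcases hw : q.getVert l' with i' | j'
        · rw [hw] at hside; simp at hside
        · rw [hw] at hmem
          have hjj : j < j' := (List.pairwise_cons.1 hs2).1 j'
            (List.mem_filterMap.2 ⟨Sum.inr j', hmem, rfl⟩)
          simp only [tc, bc, Sum.elim_inr]
          exact ⟨rep.s_mono hjj, rep.σs_mono hjj⟩
      | succ k' =>
        simp only [SimpleGraph.Walk.getVert_cons_succ] at hside ⊢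
        exact ih hs1 (List.pairwise_cons.1 hs2).2 k' l' (by omega) hlL' hside

/-! ### Path surgeries -/

section Surgery

variable {V : Type*} {G' : SimpleGraph V}

lemma drop_one_extend {x y : V} {a b : V} (p : G'.Walk a b) (hp : p.IsPath)
    (hL : 1 ≤ p.length) (hx : x ∉ p.support) (hy : y ∉ p.support)
    (hxy : G'.Adj x y) (hadj : G'.Adj y (p.getVert 1)) :
    ∃ (c d : V) (q : G'.Walk c d), q.IsPath ∧ q.length = p.length + 1 := by
  cases p with
  | nil => simp at hL
  | @cons a c b h q =>
    rw [SimpleGraph.Walk.getVert_cons_succ, SimpleGraph.Walk.getVert_zero] at hadj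
    rw [SimpleGraph.Walk.cons_isPath_iff] at hp
    rw [SimpleGraph.Walk.support_cons] at hx hy
    refine ⟨x, b, SimpleGraph.Walk.cons hxy (SimpleGraph.Walk.cons hadj q), ?_, ?_⟩
    · rw [SimpleGraph.Walk.cons_isPath_iff, SimpleGraph.Walk.cons_isPath_iff]
      refine ⟨⟨hp.1, ?_⟩, ?_⟩
      · intro hmem; exact hy (List.mem_cons_of_mem _ hmem)
      · rw [SimpleGraph.Walk.support_cons]
        intro hmem
        rcases List.mem_cons.1 hmem with h' | h'
        · exact hxy.ne h'
        · exact hx (List.mem_cons_of_mem _ h')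
    · simp [SimpleGraph.Walk.length_cons]

lemma insert_two {x y : V} :
    ∀ {a b : V} (p : G'.Walk a b), p.IsPath → x ∉ p.support → y ∉ p.support →
      G'.Adj x y → ∀ k, k < p.length → G'.Adj (p.getVert k) x →
      G'.Adj y (p.getVert (k+1)) →
      ∃ q : G'.Walk a b, q.IsPath ∧ q.length = p.length + 2 ∧
        ∀ z ∈ q.support, z = x ∨ z = y ∨ z ∈ p.support := by
  intro a b p
  induction p with
  | nil =>
    intro _ _ _ _ k hk
    simp only [SimpleGraph.Walk.length_nil] at hk
    omega
  | @cons a c b h q ih =>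
    intro hp hx hy hxy k hk h1 h2
    rw [SimpleGraph.Walk.cons_isPath_iff] at hp
    rw [SimpleGraph.Walk.support_cons] at hx hy
    have hxq : x ∉ q.support := fun hh => hx (List.mem_cons_of_mem _ hh)
    have hyq : y ∉ q.support := fun hh => hy (List.mem_cons_of_mem _ hh)
    have hxa : x ≠ a := fun hh => hx (by rw [hh]; exact List.mem_cons_self)
    have hya : y ≠ a := fun hh => hy (by rw [hh]; exact List.mem_cons_self)
    cases k with
    | zero =>
      simp only [SimpleGraph.Walk.getVert_zero, SimpleGraph.Walk.getVert_cons_succ,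
        SimpleGraph.Walk.getVert_zero] at h1 h2
      refine ⟨SimpleGraph.Walk.cons h1 (SimpleGraph.Walk.cons hxy
        (SimpleGraph.Walk.cons h2 q)), ?_, ?_, ?_⟩
      · rw [SimpleGraph.Walk.cons_isPath_iff, SimpleGraph.Walk.cons_isPath_iff,
          SimpleGraph.Walk.cons_isPath_iff]
        refine ⟨⟨⟨hp.1, hyq⟩, ?_⟩, ?_⟩
        · rw [SimpleGraph.Walk.support_cons]
          intro hmem
          rcases List.mem_cons.1 hmem with h' | h'
          · exact hxy.ne h'
          · exact hxq h'
        · rw [SimpleGraph.Walk.support_cons, SimpleGraph.Walk.support_cons]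
          intro hmem
          rcases List.mem_cons.1 hmem with h' | h'
          · exact hxa h'.symm
          · rcases List.mem_cons.1 h' with h'' | h''
            · exact hya h''.symm
            · exact hp.2 h''
      · simp [SimpleGraph.Walk.length_cons]
      · intro z hz
        simp only [SimpleGraph.Walk.support_cons, List.mem_cons] at hz ⊢
        tauto
    | succ k' =>
      simp only [SimpleGraph.Walk.getVert_cons_succ] at h1 h2
      obtain ⟨q', hq'path, hq'len, hq'sub⟩ :=
        ih hp.1 hxq hyq hxy k' (by simpa [SimpleGraph.Walk.length_cons] using hk) h1 h2
      refine ⟨SimpleGraph.Walk.cons h q', ?_, ?_, ?_⟩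
      · rw [SimpleGraph.Walk.cons_isPath_iff]
        refine ⟨hq'path, fun hmem => ?_⟩
        rcases hq'sub a hmem with h' | h' | h'
        · exact hxa h'.symm
        · exact hya h'.symm
        · exact hp.2 h'
      · simp [SimpleGraph.Walk.length_cons, hq'len]
      · intro z hz
        rw [SimpleGraph.Walk.support_cons] at hz ⊢
        rcases List.mem_cons.1 hz with h' | h'
        · exact Or.inr (Or.inr (by rw [h']; exact List.mem_cons_self))
        · rcases hq'sub z h' with h'' | h'' | h''
          · exact Or.inl h''
          · exact Or.inr (Or.inl h'')
          · exact Or.inr (Or.inr (List.mem_cons_of_mem _ h''))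

lemma exists_boundary {l : List V} :
    ∀ {a c : V} (W : G'.Walk a c), a ∉ l → c ∈ l →
      ∀ a0, a0 ∉ l → G'.Adj a0 a →
      ∃ x y : V, x ∉ l ∧ y ∉ l ∧ G'.Adj x y ∧ ∃ z ∈ l, G'.Adj y z := by
  intro a c W
  induction W with
  | nil =>
    intro ha hc
    exact absurd hc ha
  | @cons a b c h W ih =>
    intro ha hc a0 ha0 hadj
    by_cases hb : b ∈ l
    · exact ⟨a0, a, ha0, ha, hadj, b, hb, h⟩
    · exact ih hb hc a ha h

end Surgery

end OLPAux

open OLPAux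

/-- In a finite connected bipartite permutation graph, for every edge `vw` with `v ∈ X`
and `w ∈ Y`, every ordered longest path contains `v` or `w`. -/
theorem ordered_longest_path_meets_edge {n m : ℕ} (G : SimpleGraph (Fin n ⊕ Fin m))
    (rep : LineRep n m G) (hconn : G.Connected) (i : Fin n) (j : Fin m)
    (hvw : G.Adj (Sum.inl i) (Sum.inr j))
    ⦃u v : Fin n ⊕ Fin m⦄ (p : G.Walk u v)
    (hlong : IsLongestPath G p) (hord : OrderedWalk G p) :
    Sum.inl i ∈ p.support ∨ Sum.inr j ∈ p.support := by
  classical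
  by_contra hcon
  push_neg at hcon
  obtain ⟨hvi, hvj⟩ := hcon
  obtain ⟨hp, hmax⟩ := hlong
  set L := p.length with hLdef
  -- the path has positive length
  have hL1 : 1 ≤ L := by
    have hpath : (SimpleGraph.Walk.cons hvw SimpleGraph.Walk.nil).IsPath := by
      rw [SimpleGraph.Walk.cons_isPath_iff]
      constructor
      · exact SimpleGraph.Walk.IsPath.nil
      · simp
    simpa using hmax _ hpath
  -- find a boundary configuration
  obtain ⟨W⟩ := hconn.preconnected (Sum.inl i) u
  obtain ⟨x0, w', hx0', hw', hxw, z, hz, hwz⟩ :=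
    exists_boundary W hvi p.start_mem_support (Sum.inr j) hvj hvw.symm
  -- notation
  set vt : ℕ → (Fin n ⊕ Fin m) := fun k => p.getVert k with hvt
  set tv : ℕ → ℝ := fun k => tc rep (vt k) with htv
  set bv : ℕ → ℝ := fun k => bc rep (vt k) with hbv
  set A : ℕ → Prop := fun k => (vt k).isLeft = w'.isLeft with hAdef
  set adjC : ℕ → Prop := fun k => G.Adj w' (vt k) with hadjCdef
  set adjD : ℕ → Prop := fun k => G.Adj x0 (vt k) with hadjDdef
  -- basic facts
  have hadjstep : ∀ k, k < L → G.Adj (vt k) (vt (k+1)) :=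
    fun k hk => p.adj_getVert_succ hk
  have hvmem : ∀ k, k ≤ L → vt k ∈ p.support :=
    fun k hk => SimpleGraph.Walk.mem_support_iff_exists_getVert.2 ⟨k, rfl, hk⟩
  have hwne : ∀ k, k ≤ L → w' ≠ vt k := fun k hk h => hw' (h ▸ hvmem k hk)
  have hxne : ∀ k, k ≤ L → x0 ≠ vt k := fun k hk h => hx0' (h ▸ hvmem k hk)
  have hA : ∀ k, k + 1 ≤ L → (A (k+1) ↔ ¬ A k) :=
    fun k hk => bool_alt (adj_isLeft rep (hadjstep k (by omega)))
  have hmonoP := ordered_mono rep p hord.2.1 hord.2.2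
  have hmonoc : ∀ k l, k < l → l ≤ L → (A k ↔ A l) → tv k < tv l ∧ bv k < bv l :=
    fun k l h1 h2 h3 => hmonoP k l h1 h2 (bool_eq_of_iff h3)
  have hcA : ∀ k, k ≤ L → A k →
      (tc rep w' < tv k ∧ bc rep w' < bv k) ∨ (tv k < tc rep w' ∧ bv k < bc rep w') :=
    fun k hk hAk => same_side_lt rep hAk.symm (hwne k hk)
  have hdB : ∀ k, k ≤ L → ¬ A k →
      (tc rep x0 < tv k ∧ bc rep x0 < bv k) ∨ (tv k < tc rep x0 ∧ bv k < bc rep x0) :=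
    fun k hk hAk =>
      same_side_lt rep (bool_eq_of_ne_ne (adj_isLeft rep hxw) hAk) (hxne k hk)
  have hdA : ∀ k, k ≤ L → A k → ¬ adjD k →
      (tc rep x0 < tv k ∧ bc rep x0 < bv k) ∨ (tv k < tc rep x0 ∧ bv k < bc rep x0) :=
    fun k hk hAk hnD =>
      opp_not_adj rep (fun h => (adj_isLeft rep hxw) (h.trans hAk)) hnD
  have hadjC : ∀ k, k ≤ L → ¬ A k →
      (adjC k ↔ ((tc rep w' < tv k ∧ bv k < bc rep w') ∨
        (tv k < tc rep w' ∧ bc rep w' < bv k))) :=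
    fun k hk hAk => adj_iff' rep (fun h => hAk h.symm)
  have hcd : (tc rep w' < tc rep x0 ∧ bc rep x0 < bc rep w') ∨
      (tc rep x0 < tc rep w' ∧ bc rep w' < bc rep x0) :=
    (adj_iff' rep (adj_isLeft rep hxw.symm)).1 hxw.symm
  have hq : ∃ k, k ≤ L ∧ ¬ A k ∧ adjC k := by
    obtain ⟨kz, hkz_eq, hkzL⟩ := SimpleGraph.Walk.mem_support_iff_exists_getVert.1 hz
    have hadj : G.Adj w' (vt kz) := by rw [show vt kz = z from hkz_eq]; exact hwz
    exact ⟨kz, hkzL, fun h => (adj_isLeft rep hadj) h.symm, hadj⟩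
  -- the catalog of surgeries
  have h0c : ¬ adjC 0 := by
    intro hadj
    have hadj' : G.Adj w' u := by rw [← p.getVert_zero]; exact hadj
    have hpath : (SimpleGraph.Walk.cons hadj' p).IsPath := by
      rw [SimpleGraph.Walk.cons_isPath_iff]; exact ⟨hp, hw'⟩
    have := hmax _ hpath
    simp only [SimpleGraph.Walk.length_cons] at this
    omega
  have hLLc : ¬ adjC L := by
    intro hadj
    have hadj' : G.Adj w' v := by rw [← p.getVert_length]; exact hadj
    have hpath : (SimpleGraph.Walk.cons hadj' p.reverse).IsPath := by
      rw [SimpleGraph.Walk.cons_isPath_iff]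
      refine ⟨hp.reverse, ?_⟩
      rw [SimpleGraph.Walk.support_reverse]
      simpa using hw'
    have := hmax _ hpath
    simp only [SimpleGraph.Walk.length_cons, SimpleGraph.Walk.length_reverse] at this
    omega
  have h1c : ¬ adjC 1 := by
    intro hadj
    obtain ⟨c, d, qq, hq1, hq2⟩ := drop_one_extend p hp hL1 hx0' hw' hxw hadj
    have := hmax _ hq1
    omega
  have hL1c : ¬ adjC (L - 1) := by
    intro hadj
    have hadj' : G.Adj w' (p.reverse.getVert 1) := by
      rw [SimpleGraph.Walk.getVert_reverse]; exact hadj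
    obtain ⟨c, d, qq, hq1, hq2⟩ := drop_one_extend p.reverse hp.reverse
      (by rw [SimpleGraph.Walk.length_reverse]; exact hL1)
      (by rw [SimpleGraph.Walk.support_reverse]; simpa using hx0')
      (by rw [SimpleGraph.Walk.support_reverse]; simpa using hw') hxw hadj'
    have := hmax _ hq1
    rw [SimpleGraph.Walk.length_reverse] at hq2
    omega
  have hinsc : ∀ k, k < L → ¬ (adjC k ∧ adjD (k+1)) ∧ ¬ (adjD k ∧ adjC (k+1)) := by
    intro k hk
    constructor
    · rintro ⟨hc, hd⟩
      obtain ⟨qq, hq1, hq2, -⟩ := insert_two p hp hw' hx0' hxw.symm k hk hc.symm hd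
      have := hmax _ hq1
      omega
    · rintro ⟨hd, hc⟩
      obtain ⟨qq, hq1, hq2, -⟩ := insert_two p hp hx0' hw' hxw k hk hd.symm hc
      have := hmax _ hq1
      omega
  -- zig-zag structure
  have hcross : ∀ k, k < L →
      (tv k < tv (k+1) ∧ bv (k+1) < bv k) ∨ (tv (k+1) < tv k ∧ bv k < bv (k+1)) :=
    fun k hk => (adj_iff' rep (adj_isLeft rep (hadjstep k hk))).1 (hadjstep k hk)
  have hmono2 : ∀ k, k + 2 ≤ L → tv k < tv (k+2) ∧ bv k < bv (k+2) := by
    intro k hk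
    refine hmonoP k (k+2) (by omega) hk ?_
    exact bool_eq_of_ne_ne' (adj_isLeft rep (hadjstep k (by omega)))
      (adj_isLeft rep (hadjstep (k+1) (by omega)))
  have hzig := zig_parity hcross hmono2
  have halt := alt_parity hA
  by_cases hcase : (A 0 ↔ (tv 0 < tv 1 ∧ bv 1 < bv 0))
  · -- straight orientation
    have hedge : ∀ k, k < L → (A k → tv k < tv (k+1) ∧ bv (k+1) < bv k) ∧
        (¬ A k → tv (k+1) < tv k ∧ bv k < bv (k+1))  := by
      intro k hk
      constructor
      · intro hAk
        refine (hzig k hk).2 ?_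
        have h1 := (halt k hk.le).1 hAk
        tauto
      · intro hAk
        rcases hcross k hk with h | h
        · exfalso
          have h1 := (hzig k hk).1 h
          have h2 := halt k hk.le
          tauto
        · exact h
    exact core L tv bv A adjC adjD (tc rep w') (bc rep w') (tc rep x0) (bc rep x0)
      hA hedge hmonoc hcA hdB hdA hadjC hcd hq h0c h1c hL1c hLLc hinsc
  · -- swapped orientation
    have hedge : ∀ k, k < L → (A k → bv k < bv (k+1) ∧ tv (k+1) < tv k) ∧
        (¬ A k → bv (k+1) < bv k ∧ tv k < tv (k+1)) := by
      intro k hk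
      constructor
      · intro hAk
        have h2 := (halt k hk.le).1 hAk
        have h3 : ¬ (Even k ↔ (tv 0 < tv 1 ∧ bv 1 < bv 0)) := by tauto
        have h4 : ¬ (tv k < tv (k+1) ∧ bv (k+1) < bv k) :=
          fun hz => h3 ((hzig k hk).1 hz)
        rcases hcross k hk with h | h
        · exact absurd h h4
        · exact ⟨h.2, h.1⟩
      · intro hAk
        have h2 : ¬ (Even k ↔ A 0) := fun hh => hAk ((halt k hk.le).2 hh)
        have h3 : Even k ↔ (tv 0 < tv 1 ∧ bv 1 < bv 0) := by tauto
        have h := (hzig k hk).2 h3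
        exact ⟨h.2, h.1⟩
    exact core L bv tv A adjC adjD (bc rep w') (tc rep w') (bc rep x0) (tc rep x0)
      hA hedge
      (fun k l h1 h2 h3 => ⟨(hmonoc k l h1 h2 h3).2, (hmonoc k l h1 h2 h3).1⟩)
      (fun k hk h => (hcA k hk h).imp And.symm And.symm)
      (fun k hk h => (hdB k hk h).imp And.symm And.symm)
      (fun k hk h hn => (hdA k hk h hn).imp And.symm And.symm)
      (fun k hk hAk => by rw [hadjC k hk hAk]; tauto)
      (by tauto) hq h0c h1c hL1c hLLc hinsc
end

section
/- Let G = (X, Y, E) be a finite bipartite permutation graph and let P be any path in G. Then there exists an ordered path Q in G with the same vertex set as P, i.e., V(Q) = V(P). -/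
open SimpleGraph List

section B
variable {α : Type*} (pA pB : α → Bool)

def lastW (L : List α) : ℕ := L.getLast?.elim 0 (fun z => if pB z then 1 else 0)

def headW (L : List α) : ℕ := L.head?.elim 0 (fun z => if pB z then 1 else 0)

lemma lastW_cons_cons (x y : α) (t : List α) :
    lastW pB (x :: y :: t) = lastW pB (y :: t) := by
  simp [lastW]

private lemma ite_of_true {b : Bool} (h : b = true) : (if b = true then (1:ℕ) else 0) = 1 := by
  simp [h]

private lemma ite_of_false {b : Bool} (h : b = false) : (if b = true then (1:ℕ) else 0) = 0 := by
  simp [h]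

lemma countP_cons_eq (p : α → Bool) (x : α) (l : List α) :
    countP p (x :: l) = countP p l + (if p x = true then 1 else 0) := countP_cons

lemma lemN (hdisj : ∀ x, pA x = true → pB x = true → False) :
    ∀ L : List α, Chain' (fun x y => (pB x = true → pA y = true) ∧
        (pB y = true → pA x = true)) L →
      (countP pB L ≤ countP pA L + lastW pB L) ∧
      (∀ h ∈ L.head?, pA h = true → countP pB L + 1 ≤ countP pA L + lastW pB L) := by
  intro L
  induction L with
  | nil => simp
  | cons x rest IH =>
    intro hch
    match rest with
    | [] =>
      constructor
      · have cB := countP_cons_eq pB x []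
        have cA := countP_cons_eq pA x []
        rw [countP_nil] at cA cB
        have hl : lastW pB [x] = (if pB x = true then 1 else 0) := by simp [lastW]
        cases hx : pB x
        · rw [ite_of_false hx] at cB hl; omega
        · rw [ite_of_true hx] at cB hl; omega
      · intro h hh hA
        rw [head?_cons, Option.mem_def, Option.some_inj] at hh
        subst hh
        have hB : pB x = false := by
          cases hpb : pB x
          · rfl
          · exact absurd (hdisj x hA hpb) (by simp)
        have cB := countP_cons_eq pB x []
        have cA := countP_cons_eq pA x []
        rw [countP_nil] at cA cB
        have hl : lastW pB [x] = (if pB x = true then 1 else 0) := by simp [lastW]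
        rw [ite_of_false hB] at cB hl
        rw [ite_of_true hA] at cA
        omega
    | y :: t =>
      rw [Chain', isChain_cons_cons] at hch
      obtain ⟨hxy, hch'⟩ := hch
      obtain ⟨IH1, IH2⟩ := IH hch'
      rw [lastW_cons_cons]
      have cB := countP_cons_eq pB x (y :: t)
      have cA := countP_cons_eq pA x (y :: t)
      constructor
      · cases hx : pB x
        · rw [ite_of_false hx] at cB
          cases hpa : pA x
          · rw [ite_of_false hpa] at cA; omega
          · rw [ite_of_true hpa] at cA; omega
        · have hAy : pA y = true := hxy.1 hx
          have h2 := IH2 y (by simp) hAy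
          have hAx : pA x = false := by
            cases hpa : pA x
            · rfl
            · exact absurd (hdisj x hpa hx) (by simp)
          rw [ite_of_true hx] at cB
          rw [ite_of_false hAx] at cA
          omega
      · intro h hh hA
        rw [head?_cons, Option.mem_def, Option.some_inj] at hh
        subst hh
        have hB : pB x = false := by
          cases hpb : pB x
          · rfl
          · exact absurd (hdisj x hA hpb) (by simp)
        rw [ite_of_false hB] at cB
        rw [ite_of_true hA] at cA
        omega

lemma lemM (hdisj : ∀ x, pA x = true → pB x = true → False) :
    ∀ L : List α, Chain' (fun x y => (pB x = true → pA y = true) ∧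
        (pB y = true → pA x = true)) L →
      (∀ h ∈ L.head?, pB h = false) → (∃ b ∈ L, pB b = true) →
      countP pB L + 1 ≤ countP pA L + lastW pB L := by
  intro L
  induction L with
  | nil => rintro _ _ ⟨b, hb, _⟩; simp at hb
  | cons x rest IH =>
    intro hch hhead hne
    have hx : pB x = false := hhead x (by simp)
    obtain ⟨b, hb, hpb⟩ := hne
    have hbrest : b ∈ rest := by
      rcases mem_cons.mp hb with h | h
      · subst h; rw [hx] at hpb; exact absurd hpb (by simp)
      · exact h
    match rest, hbrest with
    | y :: t, hbrest =>
      rw [Chain', isChain_cons_cons] at hch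
      obtain ⟨hxy, hch'⟩ := hch
      cases hy : pB y
      · have h := IH hch' (by
          intro h hh
          rw [head?_cons, Option.mem_def, Option.some_inj] at hh
          subst hh; exact hy) ⟨b, hbrest, hpb⟩
        rw [lastW_cons_cons]
        have cB := countP_cons_eq pB x (y :: t)
        have cA := countP_cons_eq pA x (y :: t)
        rw [ite_of_false hx] at cB
        cases hpa : pA x
        · rw [ite_of_false hpa] at cA; omega
        · rw [ite_of_true hpa] at cA; omega
      · have hAx : pA x = true := hxy.2 hy
        exact (lemN pA pB hdisj (x :: y :: t) (by
          rw [Chain', isChain_cons_cons]; exact ⟨hxy, hch'⟩)).2 x (by simp) hAx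

lemma lemL3 (hdisj : ∀ x, pA x = true → pB x = true → False)
    (L : List α) (hch : Chain' (fun x y => (pB x = true → pA y = true) ∧
        (pB y = true → pA x = true)) L) (hne : ∃ b ∈ L, pB b = true) :
    countP pB L + 1 ≤ countP pA L + (headW pB L + lastW pB L) := by
  match L, hne with
  | x :: rest, hne =>
    cases hx : pB x
    · have h := lemM pA pB hdisj (x :: rest) hch
        (by intro h hh
            rw [head?_cons, Option.mem_def, Option.some_inj] at hh
            subst hh; exact hx) hne
      omega
    · have h := (lemN pA pB hdisj (x :: rest) hch).1
      have h2 : headW pB (x :: rest) = 1 := by simp [headW, hx]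
      omega

end B

section C
variable {α : Type*}

private lemma ite_of_true' {b : Bool} (h : b = true) : (if b = true then (1:ℕ) else 0) = 1 := by
  simp [h]

private lemma ite_of_false' {b : Bool} (h : b = false) : (if b = true then (1:ℕ) else 0) = 0 := by
  simp [h]

lemma altCount (sd : α → Bool) : ∀ (rest : List α) (x : α),
    Chain' (fun a b => sd a ≠ sd b) (x::rest) →
    (countP sd (x::rest) = countP (fun z => !sd z) (x::rest) ∧
      sd x ≠ sd ((x::rest).getLast (by simp))) ∨
    (countP sd (x::rest) = countP (fun z => !sd z) (x::rest) + 1 ∧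
      sd x = true ∧ sd ((x::rest).getLast (by simp)) = true) ∨
    (countP (fun z => !sd z) (x::rest) = countP sd (x::rest) + 1 ∧
      sd x = false ∧ sd ((x::rest).getLast (by simp)) = false) := by
  intro rest
  induction rest with
  | nil =>
    intro x _
    cases hx : sd x
    · right; right
      refine ⟨?_, rfl, by simp [hx]⟩
      simp [countP_cons, hx]
    · right; left
      refine ⟨?_, rfl, by simp [hx]⟩
      simp [countP_cons, hx]
  | cons y t IH =>
    intro x hch
    rw [Chain', isChain_cons_cons] at hch
    obtain ⟨hxy, hch'⟩ := hch
    have hlast : (x :: y :: t).getLast (by simp) = (y :: t).getLast (by simp) :=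
      getLast_cons (by simp)
    have cT := countP_cons (p := sd) (a := x) (l := y :: t)
    have cF := countP_cons (p := fun z => !sd z) (a := x) (l := y :: t)
    have hIH := IH y hch'
    cases hx : sd x
    · -- sd x = false, so sd y = true
      have hy : sd y = true := by
        cases hsy : sd y
        · rw [hx, hsy] at hxy; exact absurd rfl hxy
        · rfl
      rw [ite_of_false' hx] at cT
      rw [ite_of_true' (by simp [hx] : (!sd x) = true)] at cF
      rcases hIH with ⟨h1, h2⟩ | ⟨h1, h2, h3⟩ | ⟨h1, h2, h3⟩
      · -- counts equal on y::t, last differs from y, sd y = true so last = false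
        right; right
        rw [hy] at h2
        have h3 : sd ((y::t).getLast (by simp)) = false := by
          cases hl : sd ((y::t).getLast (by simp))
          · rfl
          · rw [hl] at h2; exact absurd rfl h2
        rw [hlast]
        refine ⟨by omega, by simp [hx], by simp [h3]⟩
      · -- cT = cF + 1 on y::t, last = true
        left
        rw [hlast]
        refine ⟨by omega, by simp [hx, h3]⟩
      · rw [h2] at hy; exact absurd hy (by simp)
    · have hy : sd y = false := by
        cases hsy : sd y
        · rfl
        · rw [hx, hsy] at hxy; exact absurd rfl hxy
      rw [ite_of_true' hx] at cT
      rw [ite_of_false' (by simp [hx] : (!sd x) = false)] at cF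
      rcases hIH with ⟨h1, h2⟩ | ⟨h1, h2, h3⟩ | ⟨h1, h2, h3⟩
      · right; left
        rw [hy] at h2
        have h3 : sd ((y::t).getLast (by simp)) = true := by
          cases hl : sd ((y::t).getLast (by simp))
          · rw [hl] at h2; exact absurd rfl h2
          · rfl
        rw [hlast]
        refine ⟨by omega, by simp [hx], by simp [h3]⟩
      · rw [h2] at hy; exact absurd hy (by simp)
      · left
        rw [hlast]
        refine ⟨by omega, by simp [hx, h3]⟩

end C

section D
variable {β : Type*} [LinearOrder β]

lemma sortedCountLe : ∀ (s : List β), s.Pairwise (· < ·) → ∀ (i : ℕ) (hi : i < s.length),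
    countP (fun x => decide (x ≤ s.get ⟨i, hi⟩)) s = i + 1 ∧
    countP (fun x => decide (x < s.get ⟨i, hi⟩)) s = i := by
  intro s
  induction s with
  | nil => intro _ i hi; simp at hi
  | cons x t IH =>
    intro hs i hi
    rw [pairwise_cons] at hs
    obtain ⟨hx, ht⟩ := hs
    match i with
    | 0 =>
      have hg : (x :: t).get ⟨0, hi⟩ = x := rfl
      rw [hg]
      constructor
      · rw [countP_cons]
        have h0 : countP (fun z => decide (z ≤ x)) t = 0 := by
          rw [countP_eq_zero]
          intro a ha
          simp only [decide_eq_true_eq]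
          exact not_le.mpr (hx a ha)
        simp [h0]
      · rw [countP_cons]
        have h0 : countP (fun z => decide (z < x)) t = 0 := by
          rw [countP_eq_zero]
          intro a ha
          simp only [decide_eq_true_eq]
          exact not_lt.mpr (le_of_lt (hx a ha))
        simp [h0]
    | (i+1) =>
      have hi' : i < t.length := by simpa using hi
      have hg : (x :: t).get ⟨i+1, hi⟩ = t.get ⟨i, hi'⟩ := rfl
      rw [hg]
      obtain ⟨IH1, IH2⟩ := IH ht i hi'
      have hxm : x < t.get ⟨i, hi'⟩ := hx _ (get_mem t ⟨i, hi'⟩)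
      constructor
      · rw [countP_cons]
        simp only [decide_eq_true_eq]
        rw [if_pos (le_of_lt hxm)]
        omega
      · rw [countP_cons]
        simp only [decide_eq_true_eq]
        rw [if_pos hxm]
        omega

end D

lemma countP_compl {β : Type*} [LinearOrder β] (c : β) (s : List β) :
    countP (fun z => decide (c ≤ z)) s + countP (fun z => decide (z < c)) s = s.length := by
  have h := (length_eq_countP_add_countP (fun z => decide (z < c)) (l := s)).symm
  have : countP (fun a => decide ¬(decide (a < c) = true)) s
      = countP (fun z => decide (c ≤ z)) s := by
    congr 1; funext z; simp [not_lt]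
  omega

lemma sortedCountGe {β : Type*} [LinearOrder β] (s : List β) (hs : s.Pairwise (· < ·))
    (i : ℕ) (hi : i < s.length) :
    countP (fun z => decide (s.get ⟨i, hi⟩ ≤ z)) s = s.length - i ∧
    countP (fun z => decide (s.get ⟨i, hi⟩ < z)) s = s.length - (i+1) := by
  obtain ⟨h1, h2⟩ := sortedCountLe s hs i hi
  have c1 := countP_compl (s.get ⟨i, hi⟩) s
  have c2 := (length_eq_countP_add_countP (fun z => decide (z ≤ s.get ⟨i, hi⟩)) (l := s)).symm
  have c3 : countP (fun a => decide ¬(decide (a ≤ s.get ⟨i, hi⟩) = true)) s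
      = countP (fun z => decide (s.get ⟨i, hi⟩ < z)) s := by
    congr 1; funext z; simp [not_le]
  omega

lemma sorted_between_le {β : Type*} [LinearOrder β] {s : List β} (hs : s.Pairwise (· < ·))
    {x : β} (hx : x ∈ s) {i : ℕ} (hi : i + 1 < s.length)
    (h : x < s.get ⟨i+1, hi⟩) : x ≤ s.get ⟨i, by omega⟩ := by
  obtain ⟨t, rfl⟩ := mem_iff_get.mp hx
  by_contra hc
  push_neg at hc
  have hmono := hs.sortedLT.strictMono_get
  have h1 : (⟨i, by omega⟩ : Fin s.length) < t := by
    by_contra hcc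
    push_neg at hcc
    exact absurd (hmono.le_iff_le.mpr hcc) (not_le.mpr hc)
  have h2 : t < (⟨i+1, hi⟩ : Fin s.length) := by
    by_contra hcc
    push_neg at hcc
    exact absurd (hmono.le_iff_le.mpr hcc) (not_le.mpr h)
  have : (i : ℕ) < (t : ℕ) := h1
  have : (t : ℕ) < i + 1 := h2
  omega

lemma sorted_between_ge {β : Type*} [LinearOrder β] {s : List β} (hs : s.Pairwise (· < ·))
    {x : β} (hx : x ∈ s) {i : ℕ} (hi : i + 1 < s.length)
    (h : s.get ⟨i, by omega⟩ < x) : s.get ⟨i+1, hi⟩ ≤ x := by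
  obtain ⟨t, rfl⟩ := mem_iff_get.mp hx
  by_contra hc
  push_neg at hc
  have hmono := hs.sortedLT.strictMono_get
  have h1 : (⟨i, by omega⟩ : Fin s.length) < t := by
    by_contra hcc
    push_neg at hcc
    exact absurd (hmono.le_iff_le.mpr hcc) (not_le.mpr h)
  have h2 : t < (⟨i+1, hi⟩ : Fin s.length) := by
    by_contra hcc
    push_neg at hcc
    exact absurd (hmono.le_iff_le.mpr hcc) (not_le.mpr hc)
  have : (i : ℕ) < (t : ℕ) := h1
  have : (t : ℕ) < i + 1 := h2
  omega

lemma chain'_mem {α : Type*} {R : α → α → Prop} {L : List α} (h : Chain' R L) :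
    Chain' (fun a b => a ∈ L ∧ b ∈ L ∧ R a b) L := by
  exact IsChain.imp_of_mem_imp (fun a b ha hb h => ⟨ha, hb, h⟩) h

section E
variable {α : Type*}

def ilv : List α → List α → List α
  | [], ys => ys
  | x :: xs, ys => x :: ilv ys xs
termination_by a b => a.length + b.length
decreasing_by simp; omega

@[simp] lemma ilv_nil (ys : List α) : ilv [] ys = ys := by rw [ilv]

@[simp] lemma ilv_cons (x : α) (xs ys : List α) : ilv (x :: xs) ys = x :: ilv ys xs := by
  rw [ilv]

lemma ilv_perm : ∀ (N : ℕ) (X Y : List α), X.length + Y.length ≤ N → ilv X Y ~ X ++ Y := by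
  intro N
  induction N with
  | zero =>
    intro X Y h
    have : X = [] := by cases X <;> simp_all
    have : Y = [] := by cases Y <;> simp_all
    subst_vars; simp
  | succ N IH =>
    intro X Y h
    match X with
    | [] => simp
    | x :: xs =>
      rw [ilv_cons]
      have h1 : Y.length + xs.length ≤ N := by simp at h; omega
      have := IH Y xs h1
      calc x :: ilv Y xs ~ x :: (Y ++ xs) := (this).cons x
        _ ~ x :: (xs ++ Y) := (perm_append_comm).cons x
        _ = (x :: xs) ++ Y := rfl

lemma ilv_chain' (R : α → α → Prop) : ∀ (N : ℕ) (X Y : List α), X.length + Y.length ≤ N →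
    Y.length ≤ X.length → X.length ≤ Y.length + 1 →
    (∀ (i : ℕ) (hx : i < X.length) (hy : i < Y.length), R (X.get ⟨i,hx⟩) (Y.get ⟨i,hy⟩)) →
    (∀ (i : ℕ) (hx : i + 1 < X.length) (hy : i < Y.length), R (Y.get ⟨i,hy⟩) (X.get ⟨i+1,hx⟩)) →
    Chain' R (ilv X Y) := by
  intro N
  induction N with
  | zero =>
    intro X Y h _ _ _ _
    have hX : X = [] := by cases X <;> simp_all
    subst hX
    have hY : Y = [] := by cases Y <;> simp_all
    subst hY
    rw [ilv_nil]; exact isChain_nil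
  | succ N IH =>
    intro X Y h hl1 hl2 h1 h2
    match X with
    | [] =>
      have hY : Y = [] := by cases Y <;> simp_all
      subst hY; rw [ilv_nil]; exact isChain_nil
    | x :: xs =>
      rw [ilv_cons]
      rw [Chain', isChain_cons]
      constructor
      · intro y hy
        match Y with
        | [] =>
          have hxs : xs = [] := by
            cases xs with
            | nil => rfl
            | cons a b => exfalso; simp at hl2
          subst hxs
          simp at hy
        | z :: zs =>
          rw [ilv_cons] at hy
          simp only [head?_cons, Option.mem_def, Option.some_inj] at hy
          subst hy
          exact h1 0 (by simp) (by simp)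
      · apply IH Y xs (by simp at h ⊢; omega) (by simp at hl2 ⊢; omega)
          (by simp at hl1 ⊢; omega)
        · intro i hx hy
          exact h2 i (by simpa using hy) hx
        · intro i hx hy
          exact h1 (i+1) (by simpa using hy) hx

lemma ilv_filterMap_left {γ : Type*} (f : α → Option γ) : ∀ (N : ℕ) (X Y : List α),
    X.length + Y.length ≤ N →
    ((∀ y ∈ Y, f y = none) → filterMap f (ilv X Y) = filterMap f X) ∧
    ((∀ x ∈ X, f x = none) → filterMap f (ilv X Y) = filterMap f Y) := by
  intro N
  induction N with
  | zero =>
    intro X Y h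
    have hX : X = [] := by cases X <;> simp_all
    subst hX
    simp
  | succ N IH =>
    intro X Y h
    match X with
    | [] =>
      constructor
      · intro hY
        simp only [ilv_nil]
        rw [filterMap_eq_nil_iff.mpr hY]
        simp
      · intro _; simp
    | x :: xs =>
      have hIH := IH Y xs (by simp at h ⊢; omega)
      constructor
      · intro hY
        rw [ilv_cons, filterMap_cons, filterMap_cons]
        have h2 := hIH.2 hY
        cases f x <;> simp [h2]
      · intro hX
        rw [ilv_cons, filterMap_cons]
        have hx : f x = none := hX x (by simp)
        rw [hx]
        exact hIH.1 (fun z hz => hX z (by simp [hz]))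

end E

section A
variable {n m : ℕ} {G : SimpleGraph (Fin n ⊕ Fin m)}



lemma adj_char (rep : LineRep n m G) (i : Fin n) (j : Fin m) :
    G.Adj (Sum.inl i) (Sum.inr j) ↔
      (rep.r i < rep.s j ∧ rep.σs j < rep.σr i) ∨
      (rep.s j < rep.r i ∧ rep.σr i < rep.σs j) := by
  rw [rep.adj_iff, mul_neg_iff]
  constructor
  · rintro (⟨h1, h2⟩ | ⟨h1, h2⟩)
    · exact Or.inr ⟨by linarith, by linarith⟩
    · exact Or.inl ⟨by linarith, by linarith⟩
  · rintro (⟨h1, h2⟩ | ⟨h1, h2⟩)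
    · exact Or.inr ⟨by linarith, by linarith⟩
    · exact Or.inl ⟨by linarith, by linarith⟩

lemma convex_right (rep : LineRep n m G) {i : Fin n} {j j'' j' : Fin m} (h1 : G.Adj (.inl i) (.inr j))
    (h2 : G.Adj (.inl i) (.inr j')) (hj : j ≤ j'') (hj' : j'' ≤ j') :
    G.Adj (.inl i) (.inr j'') := by
  rw [adj_char rep] at h1 h2 ⊢
  have e1 : rep.s j ≤ rep.s j'' := rep.s_mono.le_iff_le.mpr hj
  have e2 : rep.s j'' ≤ rep.s j' := rep.s_mono.le_iff_le.mpr hj'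
  have e3 : rep.σs j ≤ rep.σs j'' := rep.σs_mono.le_iff_le.mpr hj
  have e4 : rep.σs j'' ≤ rep.σs j' := rep.σs_mono.le_iff_le.mpr hj'
  rcases h1 with ⟨a1, a2⟩ | ⟨a1, a2⟩ <;> rcases h2 with ⟨b1, b2⟩ | ⟨b1, b2⟩
  · exact Or.inl ⟨by linarith, by linarith⟩
  · exfalso; linarith
  · exfalso; linarith
  · exact Or.inr ⟨by linarith, by linarith⟩

lemma convex_left (rep : LineRep n m G) {i i'' i' : Fin n} {j : Fin m} (h1 : G.Adj (.inl i) (.inr j))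
    (h2 : G.Adj (.inl i') (.inr j)) (hi : i ≤ i'') (hi' : i'' ≤ i') :
    G.Adj (.inl i'') (.inr j) := by
  rw [adj_char rep] at h1 h2 ⊢
  have e1 : rep.r i ≤ rep.r i'' := rep.r_mono.le_iff_le.mpr hi
  have e2 : rep.r i'' ≤ rep.r i' := rep.r_mono.le_iff_le.mpr hi'
  have e3 : rep.σr i ≤ rep.σr i'' := rep.σr_mono.le_iff_le.mpr hi
  have e4 : rep.σr i'' ≤ rep.σr i' := rep.σr_mono.le_iff_le.mpr hi'
  rcases h1 with ⟨a1, a2⟩ | ⟨a1, a2⟩ <;> rcases h2 with ⟨b1, b2⟩ | ⟨b1, b2⟩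
  · exact Or.inl ⟨by linarith, by linarith⟩
  · exfalso; linarith
  · exfalso; linarith
  · exact Or.inr ⟨by linarith, by linarith⟩

lemma uncross (rep : LineRep n m G) {i i' : Fin n} {j j' : Fin m} (hii : i ≤ i') (hjj : j' ≤ j)
    (h1 : G.Adj (.inl i) (.inr j)) (h2 : G.Adj (.inl i') (.inr j')) :
    G.Adj (.inl i) (.inr j') ∧ G.Adj (.inl i') (.inr j) := by
  rw [adj_char rep] at h1 h2 ⊢
  rw [adj_char rep]
  have e1 : rep.r i ≤ rep.r i' := rep.r_mono.le_iff_le.mpr hii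
  have e2 : rep.s j' ≤ rep.s j := rep.s_mono.le_iff_le.mpr hjj
  have e3 : rep.σr i ≤ rep.σr i' := rep.σr_mono.le_iff_le.mpr hii
  have e4 : rep.σs j' ≤ rep.σs j := rep.σs_mono.le_iff_le.mpr hjj
  rcases h1 with ⟨a1, a2⟩ | ⟨a1, a2⟩ <;> rcases h2 with ⟨b1, b2⟩ | ⟨b1, b2⟩
  · exact ⟨Or.inl ⟨by linarith, by linarith⟩, Or.inl ⟨by linarith, by linarith⟩⟩
  · exfalso; linarith
  · exfalso; linarith
  · exact ⟨Or.inr ⟨by linarith, by linarith⟩, Or.inr ⟨by linarith, by linarith⟩⟩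

lemma cross_mid (rep : LineRep n m G) {x x' a : Fin n} {y y' b : Fin m}
    (h1 : G.Adj (.inl x) (.inr y)) (h2 : G.Adj (.inl x') (.inr y'))
    (hx' : x' ≤ a) (hx : a ≤ x) (hy : y ≤ b) (hy' : b ≤ y') :
    G.Adj (.inl a) (.inr b) := by
  obtain ⟨hE1, hE2⟩ := uncross rep (le_trans hx' hx) (le_trans hy hy') h2 h1
  -- hE1 : Adj x' y, hE2 : Adj x y'
  have hx'b : G.Adj (.inl x') (.inr b) := convex_right rep hE1 h2 hy hy'
  have hxb : G.Adj (.inl x) (.inr b) := convex_right rep h1 hE2 hy hy'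
  exact convex_left rep hx'b hxb hx' hx

end A

section F
variable {n m : ℕ}

abbrev V' (n m : ℕ) := Fin n ⊕ Fin m

def pL (q : Fin n → Bool) : V' n m → Bool := fun v => match v with
  | .inl a => q a
  | .inr _ => false

def pR (q : Fin m → Bool) : V' n m → Bool := fun v => match v with
  | .inl _ => false
  | .inr b => q b

def asL (L : List (V' n m)) : List (Fin n) :=
  (L.filterMap Sum.getLeft?).mergeSort (fun a b => decide (a ≤ b))

def bsL (L : List (V' n m)) : List (Fin m) :=
  (L.filterMap Sum.getRight?).mergeSort (fun a b => decide (a ≤ b))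

lemma asL_perm (L : List (V' n m)) : asL L ~ L.filterMap Sum.getLeft? :=
  mergeSort_perm _ _

lemma bsL_perm (L : List (V' n m)) : bsL L ~ L.filterMap Sum.getRight? :=
  mergeSort_perm _ _

lemma asL_sorted (L : List (V' n m)) (hnd : L.Nodup) : (asL L).Pairwise (· < ·) := by
  have hle : (asL L).Pairwise (· ≤ ·) := pairwise_mergeSort' (· ≤ ·) _
  have hndf : (L.filterMap Sum.getLeft?).Nodup := by
    apply hnd.filterMap
    intro a a' b hb hb'
    cases a <;> cases a' <;> simp_all [Sum.getLeft?]
  have hnda : (asL L).Nodup := (asL_perm L).nodup_iff.mpr hndf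
  exact (hle.and hnda).imp (fun h => lt_of_le_of_ne h.1 h.2)

lemma bsL_sorted (L : List (V' n m)) (hnd : L.Nodup) : (bsL L).Pairwise (· < ·) := by
  have hle : (bsL L).Pairwise (· ≤ ·) := pairwise_mergeSort' (· ≤ ·) _
  have hndf : (L.filterMap Sum.getRight?).Nodup := by
    apply hnd.filterMap
    intro a a' b hb hb'
    cases a <;> cases a' <;> simp_all [Sum.getRight?]
  have hnda : (bsL L).Nodup := (bsL_perm L).nodup_iff.mpr hndf
  exact (hle.and hnda).imp (fun h => lt_of_le_of_ne h.1 h.2)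

lemma mem_asL {L : List (V' n m)} {a : Fin n} : a ∈ asL L ↔ Sum.inl a ∈ L := by
  rw [(asL_perm L).mem_iff, mem_filterMap]
  constructor
  · rintro ⟨v, hv, hg⟩
    cases v <;> simp_all [Sum.getLeft?]
  · intro h
    exact ⟨Sum.inl a, h, rfl⟩

lemma mem_bsL {L : List (V' n m)} {b : Fin m} : b ∈ bsL L ↔ Sum.inr b ∈ L := by
  rw [(bsL_perm L).mem_iff, mem_filterMap]
  constructor
  · rintro ⟨v, hv, hg⟩
    cases v <;> simp_all [Sum.getRight?]
  · intro h
    exact ⟨Sum.inr b, h, rfl⟩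

lemma countP_pL (q : Fin n → Bool) (L : List (V' n m)) :
    countP (pL q) L = countP q (asL L) := by
  rw [(asL_perm L).countP_eq, countP_filterMap]
  congr 1
  funext v
  cases v <;> simp [pL, Sum.getLeft?]

lemma countP_pR (q : Fin m → Bool) (L : List (V' n m)) :
    countP (pR q) L = countP q (bsL L) := by
  rw [(bsL_perm L).countP_eq, countP_filterMap]
  congr 1
  funext v
  cases v <;> simp [pR, Sum.getRight?]

lemma countP_isLeft (L : List (V' n m)) :
    countP (fun v => v.isLeft) L = (asL L).length := by
  have h1 : countP (fun v : V' n m => v.isLeft) L = countP (pL (fun _ => true)) L := by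
    congr 1; funext v; cases v <;> simp [pL]
  rw [h1, countP_pL]
  rw [countP_eq_length.mpr (by simp)]

lemma countP_isRight (L : List (V' n m)) :
    countP (fun v => !v.isLeft) L = (bsL L).length := by
  have h1 : countP (fun v : V' n m => !v.isLeft) L = countP (pR (fun _ => true)) L := by
    congr 1; funext v; cases v <;> simp [pR]
  rw [h1, countP_pR]
  rw [countP_eq_length.mpr (by simp)]

end F


section G
variable {n m : ℕ} {G : SimpleGraph (Fin n ⊕ Fin m)}

lemma adj_sides (rep : LineRep n m G) {u w : Fin n ⊕ Fin m} (h : G.Adj u w) :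
    u.isLeft ≠ w.isLeft := by
  cases u with
  | inl a => cases w with
    | inl a' => exact absurd h (rep.no_left a a')
    | inr b => simp
  | inr b => cases w with
    | inl a => simp
    | inr b' => exact absurd h (rep.no_right b b')

lemma pL_isLeft {q : Fin n → Bool} {v : V' n m} (h : pL q v = true) : v.isLeft = true := by
  cases v <;> simp_all [pL]

lemma pR_isLeft {q : Fin m → Bool} {v : V' n m} (h : pR q v = true) : v.isLeft = false := by
  cases v <;> simp_all [pR]

lemma pL_elim {q : Fin n → Bool} {v : V' n m} (h : pL q v = true) :
    ∃ x, v = Sum.inl x ∧ q x = true := by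
  cases v <;> simp_all [pL]

lemma pR_elim {q : Fin m → Bool} {v : V' n m} (h : pR q v = true) :
    ∃ y, v = Sum.inr y ∧ q y = true := by
  cases v <;> simp_all [pR]

lemma cut (rep : LineRep n m G) (L : List (Fin n ⊕ Fin m)) (hch : Chain' G.Adj L)
    (pA pB : Fin n ⊕ Fin m → Bool)
    (hdisj : ∀ v, pA v = true → pB v = true → False)
    (hAB : ∀ u w, u ∈ L → w ∈ L → G.Adj u w → pB u = true → pA w = true)
    (hne : ∃ v ∈ L, pB v = true) :
    countP pB L + 1 ≤ countP pA L + (headW pB L + lastW pB L) :=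
  lemL3 pA pB hdisj L
    ((chain'_mem hch).imp fun u w h =>
      ⟨fun hb => hAB u w h.1 h.2.1 h.2.2 hb, fun hb => hAB w u h.2.1 h.1 h.2.2.symm hb⟩) hne

lemma headW_eval {α : Type*} (pB : α → Bool) (L : List α) (h : L ≠ []) :
    headW pB L = if pB (L.head h) then 1 else 0 := by
  simp [headW, head?_eq_head h]

lemma lastW_eval {α : Type*} (pB : α → Bool) (L : List α) (h : L ≠ []) :
    lastW pB L = if pB (L.getLast h) then 1 else 0 := by
  simp [lastW, getLast?_eq_getLast h]

lemma tricho (rep : LineRep n m G) (L : List (Fin n ⊕ Fin m)) (hch : Chain' G.Adj L)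
    (hne : L ≠ []) :
    ((asL L).length = (bsL L).length ∧ ((L.head hne).isLeft ≠ (L.getLast hne).isLeft)) ∨
    ((asL L).length = (bsL L).length + 1 ∧ (L.head hne).isLeft = true ∧
      (L.getLast hne).isLeft = true) ∨
    ((bsL L).length = (asL L).length + 1 ∧ (L.head hne).isLeft = false ∧
      (L.getLast hne).isLeft = false) := by
  match L, hne with
  | x :: rest, hne =>
    have hchs : Chain' (fun a b : Fin n ⊕ Fin m => a.isLeft ≠ b.isLeft) (x :: rest) :=
      hch.imp (fun a b h => adj_sides rep h)
    have h := altCount (fun v : Fin n ⊕ Fin m => v.isLeft) rest x hchs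
    have hcl := countP_isLeft (x :: rest)
    have hcr := countP_isRight (x :: rest)
    have hh : (x :: rest).head hne = x := rfl
    rcases h with ⟨h1, h2⟩ | ⟨h1, h2, h3⟩ | ⟨h1, h2, h3⟩
    · have h1' : countP (fun v : Fin n ⊕ Fin m => v.isLeft) (x :: rest)
          = countP (fun v : Fin n ⊕ Fin m => !v.isLeft) (x :: rest) := h1
      left
      refine ⟨by rw [← hcl, ← hcr]; exact h1', by rw [hh]; exact h2⟩
    · have h1' : countP (fun v : Fin n ⊕ Fin m => v.isLeft) (x :: rest)
          = countP (fun v : Fin n ⊕ Fin m => !v.isLeft) (x :: rest) + 1 := h1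
      right; left
      exact ⟨by rw [← hcl, ← hcr]; exact h1', by rw [hh]; exact h2, h3⟩
    · have h1' : countP (fun v : Fin n ⊕ Fin m => !v.isLeft) (x :: rest)
          = countP (fun v : Fin n ⊕ Fin m => v.isLeft) (x :: rest) + 1 := h1
      right; right
      exact ⟨by rw [← hcl, ← hcr]; exact h1', by rw [hh]; exact h2, h3⟩

section cuts

lemma exists_down (rep : LineRep n m G) (L : List (Fin n ⊕ Fin m)) (hch : Chain' G.Adj L)
    (hnd : L.Nodup) (hne : L ≠ []) (i j : ℕ) (hik : i < (asL L).length) (hjl : j < (bsL L).length)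
    (hij : i ≤ j) :
    ∃ x y, G.Adj (Sum.inl x) (Sum.inr y) ∧ (asL L).get ⟨i, hik⟩ ≤ x ∧
      y ≤ (bsL L).get ⟨j, hjl⟩ := by
  set k := (asL L).length with hk
  set l := (bsL L).length with hl
  set a := (asL L).get ⟨i, hik⟩ with ha
  set b := (bsL L).get ⟨j, hjl⟩ with hb
  by_contra hno
  push_neg at hno
  have hno' : ∀ x y, G.Adj (Sum.inl x) (Sum.inr y) → a ≤ x → y ≤ b → False := by
    intro x y hadj hax hyb
    exact absurd (hno x y hadj hax) (not_lt.mpr hyb)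
  have c1 := cut rep L hch (pL (fun z => decide (z < a))) (pR (fun z => decide (z ≤ b)))
    (by intro v h1 h2; cases v <;> simp_all [pL, pR])
    (by
      intro u w _ _ hadj hu
      obtain ⟨y, rfl, hy⟩ := pR_elim hu
      cases w with
      | inr b' => exact absurd hadj (rep.no_right _ _)
      | inl xw =>
        simp only [pL, decide_eq_true_eq]
        by_contra hxa
        push_neg at hxa
        exact hno' xw y hadj.symm hxa (by simpa using hy))
    ⟨Sum.inr b, mem_bsL.mp (get_mem _ _), by simp [pR]⟩
  have cntB1 : countP (pR (fun z => decide (z ≤ b))) L = j + 1 := by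
    rw [countP_pR]
    exact (sortedCountLe (bsL L) (bsL_sorted L hnd) j hjl).1
  have cntA1 : countP (pL (fun z => decide (z < a))) L = i := by
    rw [countP_pL]
    exact (sortedCountLe (asL L) (asL_sorted L hnd) i hik).2
  rw [headW_eval _ L hne, lastW_eval _ L hne, cntB1, cntA1] at c1
  have hBhead : pR (fun z => decide (z ≤ b)) (L.head hne) = true := by
    by_contra hc
    rw [if_neg hc] at c1
    split at c1 <;> omega
  have hBlast : pR (fun z => decide (z ≤ b)) (L.getLast hne) = true := by
    by_contra hc
    rw [if_neg hc] at c1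
    split at c1 <;> omega
  have hheadR : (L.head hne).isLeft = false := pR_isLeft hBhead
  have hlastR : (L.getLast hne).isLeft = false := pR_isLeft hBlast
  have hkl : l = k + 1 := by
    rcases tricho rep L hch hne with ⟨h1, h2⟩ | ⟨h1, h2, h3⟩ | ⟨h1, h2, h3⟩
    · rw [hheadR, hlastR] at h2; exact absurd rfl h2
    · rw [hheadR] at h2; exact absurd h2 (by simp)
    · omega
  have c2 := cut rep L hch (pR (fun z => decide (b < z))) (pL (fun z => decide (a ≤ z)))
    (by intro v h1 h2; cases v <;> simp_all [pL, pR])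
    (by
      intro u w _ _ hadj hu
      obtain ⟨xu, rfl, hx⟩ := pL_elim hu
      cases w with
      | inl a' => exact absurd hadj (rep.no_left _ _)
      | inr yw =>
        simp only [pR, decide_eq_true_eq]
        by_contra hyb
        push_neg at hyb
        exact hno' xu yw hadj (by simpa using hx) hyb)
    ⟨Sum.inl a, mem_asL.mp (get_mem _ _), by simp [pL]⟩
  have cntB2 : countP (pL (fun z => decide (a ≤ z))) L = k - i := by
    rw [countP_pL]
    exact (sortedCountGe (asL L) (asL_sorted L hnd) i hik).1
  have cntA2 : countP (pR (fun z => decide (b < z))) L = l - (j + 1) := by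
    rw [countP_pR]
    exact (sortedCountGe (bsL L) (bsL_sorted L hnd) j hjl).2
  have hW2h : headW (pL (fun z => decide (a ≤ z))) L = 0 := by
    rw [headW_eval _ L hne, if_neg]
    intro hc
    rw [pL_isLeft hc] at hheadR
    exact absurd hheadR (by simp)
  have hW2l : lastW (pL (fun z => decide (a ≤ z))) L = 0 := by
    rw [lastW_eval _ L hne, if_neg]
    intro hc
    rw [pL_isLeft hc] at hlastR
    exact absurd hlastR (by simp)
  rw [cntB2, cntA2, hW2h, hW2l] at c2
  omega

lemma exists_up (rep : LineRep n m G) (L : List (Fin n ⊕ Fin m)) (hch : Chain' G.Adj L)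
    (hnd : L.Nodup) (hne : L ≠ []) (i j : ℕ) (hik : i < (asL L).length) (hjl : j < (bsL L).length)
    (hji : j ≤ i) :
    ∃ x y, G.Adj (Sum.inl x) (Sum.inr y) ∧ x ≤ (asL L).get ⟨i, hik⟩ ∧
      (bsL L).get ⟨j, hjl⟩ ≤ y := by
  set k := (asL L).length with hk
  set l := (bsL L).length with hl
  set a := (asL L).get ⟨i, hik⟩ with ha
  set b := (bsL L).get ⟨j, hjl⟩ with hb
  by_contra hno
  push_neg at hno
  -- hno : ∀ x y, Adj → x ≤ a → y < b
  have c1 := cut rep L hch (pR (fun z => decide (z < b))) (pL (fun z => decide (z ≤ a)))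
    (by intro v h1 h2; cases v <;> simp_all [pL, pR])
    (by
      intro u w _ _ hadj hu
      obtain ⟨x, rfl, hx⟩ := pL_elim hu
      cases w with
      | inl a' => exact absurd hadj (rep.no_left _ _)
      | inr yw =>
        simp only [pR, decide_eq_true_eq]
        exact hno x yw hadj (by simpa using hx))
    ⟨Sum.inl a, mem_asL.mp (get_mem _ _), by simp [pL]⟩
  have cntB1 : countP (pL (fun z => decide (z ≤ a))) L = i + 1 := by
    rw [countP_pL]
    exact (sortedCountLe (asL L) (asL_sorted L hnd) i hik).1
  have cntA1 : countP (pR (fun z => decide (z < b))) L = j := by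
    rw [countP_pR]
    exact (sortedCountLe (bsL L) (bsL_sorted L hnd) j hjl).2
  rw [headW_eval _ L hne, lastW_eval _ L hne, cntB1, cntA1] at c1
  have hBhead : pL (fun z => decide (z ≤ a)) (L.head hne) = true := by
    by_contra hc
    rw [if_neg hc] at c1
    split at c1 <;> omega
  have hBlast : pL (fun z => decide (z ≤ a)) (L.getLast hne) = true := by
    by_contra hc
    rw [if_neg hc] at c1
    split at c1 <;> omega
  have hheadL : (L.head hne).isLeft = true := pL_isLeft hBhead
  have hlastL : (L.getLast hne).isLeft = true := pL_isLeft hBlast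
  have hkl : k = l + 1 := by
    rcases tricho rep L hch hne with ⟨h1, h2⟩ | ⟨h1, h2, h3⟩ | ⟨h1, h2, h3⟩
    · rw [hheadL, hlastL] at h2; exact absurd rfl h2
    · omega
    · rw [hheadL] at h2; exact absurd h2 (by simp)
  have c2 := cut rep L hch (pL (fun z => decide (a < z))) (pR (fun z => decide (b ≤ z)))
    (by intro v h1 h2; cases v <;> simp_all [pL, pR])
    (by
      intro u w _ _ hadj hu
      obtain ⟨y, rfl, hy⟩ := pR_elim hu
      cases w with
      | inr b' => exact absurd hadj (rep.no_right _ _)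
      | inl xw =>
        simp only [pL, decide_eq_true_eq]
        by_contra hxa
        push_neg at hxa
        exact absurd (by simpa using hy) (not_le.mpr (hno xw y hadj.symm hxa)))
    ⟨Sum.inr b, mem_bsL.mp (get_mem _ _), by simp [pR]⟩
  have cntB2 : countP (pR (fun z => decide (b ≤ z))) L = l - j := by
    rw [countP_pR]
    exact (sortedCountGe (bsL L) (bsL_sorted L hnd) j hjl).1
  have cntA2 : countP (pL (fun z => decide (a < z))) L = k - (i + 1) := by
    rw [countP_pL]
    exact (sortedCountGe (asL L) (asL_sorted L hnd) i hik).2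
  have hW2h : headW (pR (fun z => decide (b ≤ z))) L = 0 := by
    rw [headW_eval _ L hne, if_neg]
    intro hc
    rw [pR_isLeft hc] at hheadL
    exact absurd hheadL (by simp)
  have hW2l : lastW (pR (fun z => decide (b ≤ z))) L = 0 := by
    rw [lastW_eval _ L hne, if_neg]
    intro hc
    rw [pR_isLeft hc] at hlastL
    exact absurd hlastL (by simp)
  rw [cntB2, cntA2, hW2h, hW2l] at c2
  omega

lemma exists_down_bal (rep : LineRep n m G) (L : List (Fin n ⊕ Fin m)) (hch : Chain' G.Adj L)
    (hnd : L.Nodup) (hne : L ≠ []) (hkl : (asL L).length = (bsL L).length + 1)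
    (i j : ℕ) (hik : i < (asL L).length) (hjl : j < (bsL L).length)
    (hij : i ≤ j + 1) :
    ∃ x y, G.Adj (Sum.inl x) (Sum.inr y) ∧ (asL L).get ⟨i, hik⟩ ≤ x ∧
      y ≤ (bsL L).get ⟨j, hjl⟩ := by
  set a := (asL L).get ⟨i, hik⟩ with ha
  set b := (bsL L).get ⟨j, hjl⟩ with hb
  by_contra hno
  push_neg at hno
  have hsides : (L.head hne).isLeft = true ∧ (L.getLast hne).isLeft = true := by
    rcases tricho rep L hch hne with ⟨h1, h2⟩ | ⟨h1, h2, h3⟩ | ⟨h1, h2, h3⟩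
    · omega
    · exact ⟨h2, h3⟩
    · omega
  have c1 := cut rep L hch (pL (fun z => decide (z < a))) (pR (fun z => decide (z ≤ b)))
    (by intro v h1 h2; cases v <;> simp_all [pL, pR])
    (by
      intro u w _ _ hadj hu
      obtain ⟨y, rfl, hy⟩ := pR_elim hu
      cases w with
      | inr b' => exact absurd hadj (rep.no_right _ _)
      | inl xw =>
        simp only [pL, decide_eq_true_eq]
        by_contra hxa
        push_neg at hxa
        exact absurd (hno xw y hadj.symm hxa) (not_lt.mpr (by simpa using hy)))
    ⟨Sum.inr b, mem_bsL.mp (get_mem _ _), by simp [pR]⟩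
  have cntB1 : countP (pR (fun z => decide (z ≤ b))) L = j + 1 := by
    rw [countP_pR]
    exact (sortedCountLe (bsL L) (bsL_sorted L hnd) j hjl).1
  have cntA1 : countP (pL (fun z => decide (z < a))) L = i := by
    rw [countP_pL]
    exact (sortedCountLe (asL L) (asL_sorted L hnd) i hik).2
  have hW1h : headW (pR (fun z => decide (z ≤ b))) L = 0 := by
    rw [headW_eval _ L hne, if_neg]
    intro hc
    rw [pR_isLeft hc] at hsides
    exact absurd hsides.1 (by simp)
  have hW1l : lastW (pR (fun z => decide (z ≤ b))) L = 0 := by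
    rw [lastW_eval _ L hne, if_neg]
    intro hc
    rw [pR_isLeft hc] at hsides
    exact absurd hsides.2 (by simp)
  rw [cntB1, cntA1, hW1h, hW1l] at c1
  omega

lemma exists_up_bal (rep : LineRep n m G) (L : List (Fin n ⊕ Fin m)) (hch : Chain' G.Adj L)
    (hnd : L.Nodup) (hne : L ≠ []) (hlk : (bsL L).length = (asL L).length + 1)
    (i j : ℕ) (hik : i < (asL L).length) (hjl : j < (bsL L).length)
    (hji : j ≤ i + 1) :
    ∃ x y, G.Adj (Sum.inl x) (Sum.inr y) ∧ x ≤ (asL L).get ⟨i, hik⟩ ∧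
      (bsL L).get ⟨j, hjl⟩ ≤ y := by
  set a := (asL L).get ⟨i, hik⟩ with ha
  set b := (bsL L).get ⟨j, hjl⟩ with hb
  by_contra hno
  push_neg at hno
  have hsides : (L.head hne).isLeft = false ∧ (L.getLast hne).isLeft = false := by
    rcases tricho rep L hch hne with ⟨h1, h2⟩ | ⟨h1, h2, h3⟩ | ⟨h1, h2, h3⟩
    · omega
    · omega
    · exact ⟨h2, h3⟩
  have c1 := cut rep L hch (pR (fun z => decide (z < b))) (pL (fun z => decide (z ≤ a)))
    (by intro v h1 h2; cases v <;> simp_all [pL, pR])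
    (by
      intro u w _ _ hadj hu
      obtain ⟨x, rfl, hx⟩ := pL_elim hu
      cases w with
      | inl a' => exact absurd hadj (rep.no_left _ _)
      | inr yw =>
        simp only [pR, decide_eq_true_eq]
        exact hno x yw hadj (by simpa using hx))
    ⟨Sum.inl a, mem_asL.mp (get_mem _ _), by simp [pL]⟩
  have cntB1 : countP (pL (fun z => decide (z ≤ a))) L = i + 1 := by
    rw [countP_pL]
    exact (sortedCountLe (asL L) (asL_sorted L hnd) i hik).1
  have cntA1 : countP (pR (fun z => decide (z < b))) L = j := by
    rw [countP_pR]
    exact (sortedCountLe (bsL L) (bsL_sorted L hnd) j hjl).2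
  have hW1h : headW (pL (fun z => decide (z ≤ a))) L = 0 := by
    rw [headW_eval _ L hne, if_neg]
    intro hc
    rw [pL_isLeft hc] at hsides
    exact absurd hsides.1 (by simp)
  have hW1l : lastW (pL (fun z => decide (z ≤ a))) L = 0 := by
    rw [lastW_eval _ L hne, if_neg]
    intro hc
    rw [pL_isLeft hc] at hsides
    exact absurd hsides.2 (by simp)
  rw [cntB1, cntA1, hW1h, hW1l] at c1
  omega

lemma claim1 (rep : LineRep n m G) (L : List (Fin n ⊕ Fin m)) (hch : Chain' G.Adj L)
    (hnd : L.Nodup) (hne : L ≠ []) (i : ℕ) (hik : i < (asL L).length) (hil : i < (bsL L).length) :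
    G.Adj (Sum.inl ((asL L).get ⟨i, hik⟩)) (Sum.inr ((bsL L).get ⟨i, hil⟩)) := by
  obtain ⟨x, y, hxy, h1, h2⟩ := exists_down rep L hch hnd hne i i hik hil le_rfl
  obtain ⟨x', y', hxy', h3, h4⟩ := exists_up rep L hch hnd hne i i hik hil le_rfl
  exact cross_mid rep hxy hxy' h3 h1 h2 h4

lemma claim2 (rep : LineRep n m G) (L : List (Fin n ⊕ Fin m)) (hch : Chain' G.Adj L)
    (hnd : L.Nodup) (hne : L ≠ []) (hkl : (asL L).length = (bsL L).length + 1)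
    (i : ℕ) (hik : i + 1 < (asL L).length) (hil : i < (bsL L).length) :
    G.Adj (Sum.inl ((asL L).get ⟨i+1, hik⟩)) (Sum.inr ((bsL L).get ⟨i, hil⟩)) := by
  obtain ⟨x, y, hxy, h1, h2⟩ :=
    exists_down_bal rep L hch hnd hne hkl (i+1) i hik hil (by omega)
  obtain ⟨x', y', hxy', h3, h4⟩ := exists_up rep L hch hnd hne (i+1) i hik hil (by omega)
  exact cross_mid rep hxy hxy' h3 h1 h2 h4

lemma claim2' (rep : LineRep n m G) (L : List (Fin n ⊕ Fin m)) (hch : Chain' G.Adj L)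
    (hnd : L.Nodup) (hne : L ≠ []) (hlk : (bsL L).length = (asL L).length + 1)
    (i : ℕ) (hik : i < (asL L).length) (hil : i + 1 < (bsL L).length) :
    G.Adj (Sum.inl ((asL L).get ⟨i, hik⟩)) (Sum.inr ((bsL L).get ⟨i+1, hil⟩)) := by
  obtain ⟨x, y, hxy, h1, h2⟩ :=
    exists_down rep L hch hnd hne i (i+1) hik hil (by omega)
  obtain ⟨x', y', hxy', h3, h4⟩ :=
    exists_up_bal rep L hch hnd hne hlk i (i+1) hik hil (by omega)
  exact cross_mid rep hxy hxy' h3 h1 h2 h4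

lemma cut_endpoint (rep : LineRep n m G) (L : List (Fin n ⊕ Fin m)) (hch : Chain' G.Adj L)
    (hnd : L.Nodup) (hne : L ≠ []) (pA pB : Fin n ⊕ Fin m → Bool)
    (hdisj : ∀ v, pA v = true → pB v = true → False)
    (hAB : ∀ u w, u ∈ L → w ∈ L → G.Adj u w → pB u = true → pA w = true)
    (hneB : ∃ v ∈ L, pB v = true)
    (hCC : countP pA L ≤ countP pB L) :
    pB (L.head hne) = true ∨ pB (L.getLast hne) = true := by
  have c := cut rep L hch pA pB hdisj hAB hneB
  rw [headW_eval _ L hne, lastW_eval _ L hne] at c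
  by_contra hcc
  push_neg at hcc
  rw [if_neg hcc.1, if_neg hcc.2] at c
  omega

lemma claim3 (rep : LineRep n m G) (L : List (Fin n ⊕ Fin m)) (hch : Chain' G.Adj L)
    (hnd : L.Nodup) (hne : L ≠ []) (hkl : (asL L).length = (bsL L).length) :
    (∀ i (h1 : i + 1 < (asL L).length) (h2 : i < (bsL L).length),
      G.Adj (Sum.inl ((asL L).get ⟨i+1, h1⟩)) (Sum.inr ((bsL L).get ⟨i, h2⟩))) ∨
    (∀ i (h1 : i < (asL L).length) (h2 : i + 1 < (bsL L).length),
      G.Adj (Sum.inl ((asL L).get ⟨i, h1⟩)) (Sum.inr ((bsL L).get ⟨i+1, h2⟩))) := by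
  set k := (asL L).length with hk
  set l := (bsL L).length with hl
  by_contra hcon
  push_neg at hcon
  obtain ⟨⟨i, h1, h2, hf1⟩, ⟨i', h1', h2', hf2⟩⟩ := hcon
  -- no down-cross at (a_{i+1}, b_i)
  have hstar : ¬ ∃ x y, G.Adj (Sum.inl x) (Sum.inr y) ∧ (asL L).get ⟨i+1, h1⟩ ≤ x ∧
      y ≤ (bsL L).get ⟨i, h2⟩ := by
    rintro ⟨x, y, hxy, hd1, hd2⟩
    obtain ⟨x', y', hxy', hu1, hu2⟩ :=
      exists_up rep L hch hnd hne (i+1) i h1 h2 (by omega)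
    exact hf1 (cross_mid rep hxy hxy' hu1 hd1 hd2 hu2)
  -- no up-cross at (a_{i'}, b_{i'+1})
  have hdstar : ¬ ∃ x y, G.Adj (Sum.inl x) (Sum.inr y) ∧ x ≤ (asL L).get ⟨i', h1'⟩ ∧
      (bsL L).get ⟨i'+1, h2'⟩ ≤ y := by
    rintro ⟨x, y, hxy, hu1, hu2⟩
    obtain ⟨x', y', hxy', hd1, hd2⟩ :=
      exists_down rep L hch hnd hne i' (i'+1) h1' h2' (by omega)
    exact hf2 (cross_mid rep hxy' hxy hu1 hd1 hd2 hu2)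
  have hends : (L.head hne).isLeft ≠ (L.getLast hne).isLeft := by
    rcases tricho rep L hch hne with ⟨ha1, ha2⟩ | ⟨ha1, ha2, ha3⟩ | ⟨ha1, ha2, ha3⟩
    · exact ha2
    · omega
    · omega
  -- s1 : some endpoint is a left ≥ a_{i+1}
  have s1 := cut_endpoint rep L hch hnd hne
    (pR (fun z => decide ((bsL L).get ⟨i, h2⟩ < z)))
    (pL (fun z => decide ((asL L).get ⟨i+1, h1⟩ ≤ z)))
    (by intro v hv1 hv2; cases v <;> simp_all [pL, pR])
    (by
      intro u w _ _ hadj hu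
      obtain ⟨x, rfl, hx⟩ := pL_elim hu
      cases w with
      | inl a' => exact absurd hadj (rep.no_left _ _)
      | inr y =>
        simp only [pR, decide_eq_true_eq]
        by_contra hyb
        push_neg at hyb
        exact hstar ⟨x, y, hadj, by simpa using hx, hyb⟩)
    ⟨Sum.inl ((asL L).get ⟨i+1, h1⟩), mem_asL.mp (get_mem _ _), by simp [pL]⟩
    (by
      rw [countP_pL, countP_pR,
        (sortedCountGe (asL L) (asL_sorted L hnd) (i+1) h1).1,
        (sortedCountGe (bsL L) (bsL_sorted L hnd) i h2).2]
      omega)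
  -- s2 : some endpoint is a right ≤ b_i
  have s2 := cut_endpoint rep L hch hnd hne
    (pL (fun z => decide (z ≤ (asL L).get ⟨i, by omega⟩)))
    (pR (fun z => decide (z ≤ (bsL L).get ⟨i, h2⟩)))
    (by intro v hv1 hv2; cases v <;> simp_all [pL, pR])
    (by
      intro u w _ hw hadj hu
      obtain ⟨y, rfl, hy⟩ := pR_elim hu
      cases w with
      | inr b' => exact absurd hadj (rep.no_right _ _)
      | inl x =>
        simp only [pL, decide_eq_true_eq]
        by_contra hxa
        push_neg at hxa
        have hxin : x ∈ asL L := mem_asL.mpr hw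
        have hge : (asL L).get ⟨i+1, h1⟩ ≤ x :=
          sorted_between_ge (asL_sorted L hnd) hxin h1 hxa
        exact hstar ⟨x, y, hadj.symm, hge, by simpa using hy⟩)
    ⟨Sum.inr ((bsL L).get ⟨i, h2⟩), mem_bsL.mp (get_mem _ _), by simp [pR]⟩
    (by
      rw [countP_pL, countP_pR,
        (sortedCountLe (asL L) (asL_sorted L hnd) i (by omega)).1,
        (sortedCountLe (bsL L) (bsL_sorted L hnd) i h2).1])
  -- t1 : some endpoint is a right ≥ b_{i'+1}
  have t1 := cut_endpoint rep L hch hnd hne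
    (pL (fun z => decide ((asL L).get ⟨i'+1, by omega⟩ ≤ z)))
    (pR (fun z => decide ((bsL L).get ⟨i'+1, h2'⟩ ≤ z)))
    (by intro v hv1 hv2; cases v <;> simp_all [pL, pR])
    (by
      intro u w _ hw hadj hu
      obtain ⟨y, rfl, hy⟩ := pR_elim hu
      cases w with
      | inr b' => exact absurd hadj (rep.no_right _ _)
      | inl x =>
        simp only [pL, decide_eq_true_eq]
        by_contra hxa
        push_neg at hxa
        have hxin : x ∈ asL L := mem_asL.mpr hw
        have hle : x ≤ (asL L).get ⟨i', h1'⟩ :=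
          sorted_between_le (asL_sorted L hnd) hxin (by omega) hxa
        exact hdstar ⟨x, y, hadj.symm, hle, by simpa using hy⟩)
    ⟨Sum.inr ((bsL L).get ⟨i'+1, h2'⟩), mem_bsL.mp (get_mem _ _), by simp [pR]⟩
    (by
      rw [countP_pL, countP_pR,
        (sortedCountGe (asL L) (asL_sorted L hnd) (i'+1) (by omega)).1,
        (sortedCountGe (bsL L) (bsL_sorted L hnd) (i'+1) h2').1]
      omega)
  -- t2 : some endpoint is a left ≤ a_{i'}
  have t2 := cut_endpoint rep L hch hnd hne
    (pR (fun z => decide (z ≤ (bsL L).get ⟨i', by omega⟩)))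
    (pL (fun z => decide (z ≤ (asL L).get ⟨i', h1'⟩)))
    (by intro v hv1 hv2; cases v <;> simp_all [pL, pR])
    (by
      intro u w _ hw hadj hu
      obtain ⟨x, rfl, hx⟩ := pL_elim hu
      cases w with
      | inl a' => exact absurd hadj (rep.no_left _ _)
      | inr y =>
        simp only [pR, decide_eq_true_eq]
        by_contra hyb
        push_neg at hyb
        have hyin : y ∈ bsL L := mem_bsL.mpr hw
        have hge : (bsL L).get ⟨i'+1, h2'⟩ ≤ y :=
          sorted_between_ge (bsL_sorted L hnd) hyin h2' hyb
        exact hdstar ⟨x, y, hadj, by simpa using hx, hge⟩)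
    ⟨Sum.inl ((asL L).get ⟨i', h1'⟩), mem_asL.mp (get_mem _ _), by simp [pL]⟩
    (by
      rw [countP_pL, countP_pR,
        (sortedCountLe (asL L) (asL_sorted L hnd) i' h1').1,
        (sortedCountLe (bsL L) (bsL_sorted L hnd) i' (by omega)).1])
  -- now split on which endpoint is the left one
  have final : ∃ (wL : Fin n) (wR : Fin m),
      (asL L).get ⟨i+1, h1⟩ ≤ wL ∧ wL ≤ (asL L).get ⟨i', h1'⟩ ∧
      (bsL L).get ⟨i'+1, h2'⟩ ≤ wR ∧ wR ≤ (bsL L).get ⟨i, h2⟩ := by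
    cases hhl : (L.head hne).isLeft
    · -- head is right, last is left
      have hll : (L.getLast hne).isLeft = true := by
        cases hg : (L.getLast hne).isLeft
        · rw [hhl, hg] at hends; exact absurd rfl hends
        · rfl
      have hs1 : pL (fun z => decide ((asL L).get ⟨i+1, h1⟩ ≤ z)) (L.getLast hne) = true := by
        rcases s1 with h | h
        · rw [pL_isLeft h] at hhl; exact absurd hhl (by simp)
        · exact h
      have ht2 : pL (fun z => decide (z ≤ (asL L).get ⟨i', h1'⟩)) (L.getLast hne) = true := by
        rcases t2 with h | h
        · rw [pL_isLeft h] at hhl; exact absurd hhl (by simp)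
        · exact h
      have hs2 : pR (fun z => decide (z ≤ (bsL L).get ⟨i, h2⟩)) (L.head hne) = true := by
        rcases s2 with h | h
        · exact h
        · rw [pR_isLeft h] at hll; exact absurd hll (by simp)
      have ht1 : pR (fun z => decide ((bsL L).get ⟨i'+1, h2'⟩ ≤ z)) (L.head hne) = true := by
        rcases t1 with h | h
        · exact h
        · rw [pR_isLeft h] at hll; exact absurd hll (by simp)
      obtain ⟨wL, hwL, hq1⟩ := pL_elim hs1
      obtain ⟨wL2, hwL2, hq2⟩ := pL_elim ht2
      rw [hwL] at hwL2
      obtain rfl : wL = wL2 := by injection hwL2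
      obtain ⟨wR, hwR, hq3⟩ := pR_elim hs2
      obtain ⟨wR2, hwR2, hq4⟩ := pR_elim ht1
      rw [hwR] at hwR2
      obtain rfl : wR = wR2 := by injection hwR2
      exact ⟨wL, wR, by simpa using hq1, by simpa using hq2,
        by simpa using hq4, by simpa using hq3⟩
    · -- head is left, last is right
      have hll : (L.getLast hne).isLeft = false := by
        cases hg : (L.getLast hne).isLeft
        · rfl
        · rw [hhl, hg] at hends; exact absurd rfl hends
      have hs1 : pL (fun z => decide ((asL L).get ⟨i+1, h1⟩ ≤ z)) (L.head hne) = true := by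
        rcases s1 with h | h
        · exact h
        · rw [pL_isLeft h] at hll; exact absurd hll (by simp)
      have ht2 : pL (fun z => decide (z ≤ (asL L).get ⟨i', h1'⟩)) (L.head hne) = true := by
        rcases t2 with h | h
        · exact h
        · rw [pL_isLeft h] at hll; exact absurd hll (by simp)
      have hs2 : pR (fun z => decide (z ≤ (bsL L).get ⟨i, h2⟩)) (L.getLast hne) = true := by
        rcases s2 with h | h
        · rw [pR_isLeft h] at hhl; exact absurd hhl (by simp)
        · exact h
      have ht1 : pR (fun z => decide ((bsL L).get ⟨i'+1, h2'⟩ ≤ z)) (L.getLast hne) = true := by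
        rcases t1 with h | h
        · rw [pR_isLeft h] at hhl; exact absurd hhl (by simp)
        · exact h
      obtain ⟨wL, hwL, hq1⟩ := pL_elim hs1
      obtain ⟨wL2, hwL2, hq2⟩ := pL_elim ht2
      rw [hwL] at hwL2
      obtain rfl : wL = wL2 := by injection hwL2
      obtain ⟨wR, hwR, hq3⟩ := pR_elim hs2
      obtain ⟨wR2, hwR2, hq4⟩ := pR_elim ht1
      rw [hwR] at hwR2
      obtain rfl : wR = wR2 := by injection hwR2
      exact ⟨wL, wR, by simpa using hq1, by simpa using hq2,
        by simpa using hq4, by simpa using hq3⟩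
  obtain ⟨wL, wR, hA1, hA2, hB1, hB2⟩ := final
  have hii' : (⟨i+1, h1⟩ : Fin (asL L).length) ≤ ⟨i', h1'⟩ :=
    ((asL_sorted L hnd).sortedLT.strictMono_get).le_iff_le.mp (le_trans hA1 hA2)
  have hi'i : (⟨i'+1, h2'⟩ : Fin (bsL L).length) ≤ ⟨i, h2⟩ :=
    ((bsL_sorted L hnd).sortedLT.strictMono_get).le_iff_le.mp (le_trans hB1 hB2)
  have e1 : i + 1 ≤ i' := hii'
  have e2 : i' + 1 ≤ i := hi'i
  omega

end cuts
end G


section H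
variable {n m : ℕ} {G : SimpleGraph (Fin n ⊕ Fin m)}

lemma walk_of_chain : ∀ (rest : List (Fin n ⊕ Fin m)) (x : Fin n ⊕ Fin m),
    List.Chain G.Adj x rest → ∃ (b : Fin n ⊕ Fin m) (q : G.Walk x b), q.support = x :: rest := by
  intro rest
  induction rest with
  | nil => exact fun x _ => ⟨x, Walk.nil, rfl⟩
  | cons y t IH =>
    intro x hch
    rw [Chain, chain_cons] at hch
    obtain ⟨b, q, hs⟩ := IH y hch.2
    exact ⟨b, Walk.cons hch.1 q, by simp [hs]⟩

lemma build (rep : LineRep n m G) (L : List (Fin n ⊕ Fin m)) (hch : Chain' G.Adj L)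
    (hnd : L.Nodup) (hne : L ≠ []) (C : List (Fin n ⊕ Fin m))
    (hCch : Chain' G.Adj C)
    (hperm : C ~ ((asL L).map Sum.inl) ++ ((bsL L).map Sum.inr))
    (halt : Chain' (fun a b : Fin n ⊕ Fin m => a.isLeft ≠ b.isLeft) C)
    (hfl : C.filterMap Sum.getLeft? = asL L)
    (hfr : C.filterMap Sum.getRight? = bsL L) :
    ∃ (a b : Fin n ⊕ Fin m) (q : G.Walk a b), q.IsPath ∧ OrderedWalk G q ∧
      ∀ x : Fin n ⊕ Fin m, x ∈ q.support ↔ x ∈ L := by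
  have hmem : ∀ x : Fin n ⊕ Fin m, x ∈ C ↔ x ∈ L := by
    intro x
    rw [hperm.mem_iff, mem_append]
    cases x with
    | inl a =>
      simp only [mem_map]
      constructor
      · rintro (⟨a', ha', h⟩ | ⟨b', hb', h⟩)
        · obtain rfl : a' = a := by injection h
          exact mem_asL.mp ha'
        · exact absurd h (by simp)
      · intro h
        exact Or.inl ⟨a, mem_asL.mpr h, rfl⟩
    | inr b =>
      simp only [mem_map]
      constructor
      · rintro (⟨a', ha', h⟩ | ⟨b', hb', h⟩)
        · exact absurd h (by simp)
        · obtain rfl : b' = b := by injection h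
          exact mem_bsL.mp hb'
      · intro h
        exact Or.inr ⟨b, mem_bsL.mpr h, rfl⟩
  have hCnd : C.Nodup := by
    rw [hperm.nodup_iff, nodup_append]
    refine ⟨((asL_sorted L hnd).nodup).map Sum.inl_injective, 
      ((bsL_sorted L hnd).nodup).map Sum.inr_injective, ?_⟩
    intro a ha b hb
    obtain ⟨a', _, rfl⟩ := mem_map.mp ha
    obtain ⟨b', _, hh⟩ := mem_map.mp hb
    subst hh; simp
  have hCne : C ≠ [] := by
    match L, hne with
    | z :: _, _ =>
      intro hC
      have := (hmem z).mpr (by simp)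
      rw [hC] at this
      simp at this
  match C, hCne, hCch with
  | c :: crest, _, hCch =>
    obtain ⟨b, q, hs⟩ := walk_of_chain crest c hCch
    refine ⟨c, b, q, ?_, ?_, ?_⟩
    · rw [Walk.isPath_def, hs]
      exact hCnd
    · refine ⟨by rw [hs]; exact halt, ?_, ?_⟩
      · rw [hs, hfl]
        exact asL_sorted L hnd
      · rw [hs, hfr]
        exact bsL_sorted L hnd
    · intro x
      rw [hs]
      exact hmem x

theorem main_list (rep : LineRep n m G) (L : List (Fin n ⊕ Fin m)) (hch : Chain' G.Adj L)
    (hnd : L.Nodup) (hne : L ≠ []) :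
    ∃ (a b : Fin n ⊕ Fin m) (q : G.Walk a b), q.IsPath ∧ OrderedWalk G q ∧
      ∀ x : Fin n ⊕ Fin m, x ∈ q.support ↔ x ∈ L := by
  set X := (asL L).map (Sum.inl : Fin n → Fin n ⊕ Fin m) with hX
  set Y := (bsL L).map (Sum.inr : Fin m → Fin n ⊕ Fin m) with hY
  have hXlen : X.length = (asL L).length := length_map _
  have hYlen : Y.length = (bsL L).length := length_map _
  have hYnoneL : ∀ y ∈ Y, Sum.getLeft? y = none := by
    rintro y hy
    obtain ⟨b', _, rfl⟩ := mem_map.mp hy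
    rfl
  have hXnoneR : ∀ y ∈ X, Sum.getRight? y = none := by
    rintro y hy
    obtain ⟨a', _, rfl⟩ := mem_map.mp hy
    rfl
  have hXfl : X.filterMap Sum.getLeft? = asL L := by
    rw [hX, filterMap_map]
    exact filterMap_some
  have hYfr : Y.filterMap Sum.getRight? = bsL L := by
    rw [hY, filterMap_map]
    exact filterMap_some
  have haltXY : ∀ (i : ℕ) (hx : i < X.length) (hy : i < Y.length),
      (X.get ⟨i,hx⟩).isLeft ≠ (Y.get ⟨i,hy⟩).isLeft := by
    intro i hx hy
    simp only [hX, hY, get_eq_getElem, getElem_map]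
    simp
  have haltYX : ∀ (i : ℕ) (hy : i < Y.length) (hx : i < X.length),
      (Y.get ⟨i,hy⟩).isLeft ≠ (X.get ⟨i,hx⟩).isLeft := by
    intro i hy hx
    simp only [hX, hY, get_eq_getElem, getElem_map]
    simp
  have haltXY' : ∀ (i : ℕ) (hx : i + 1 < X.length) (hy : i < Y.length),
      (Y.get ⟨i,hy⟩).isLeft ≠ (X.get ⟨i+1,hx⟩).isLeft := by
    intro i hx hy
    simp only [hX, hY, get_eq_getElem, getElem_map]
    simp
  have haltYX' : ∀ (i : ℕ) (hy : i + 1 < Y.length) (hx : i < X.length),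
      (X.get ⟨i,hx⟩).isLeft ≠ (Y.get ⟨i+1,hy⟩).isLeft := by
    intro i hy hx
    simp only [hX, hY, get_eq_getElem, getElem_map]
    simp
  rcases tricho rep L hch hne with ⟨hkl, _⟩ | ⟨hkl, _, _⟩ | ⟨hkl, _, _⟩
  · -- k = l
    rcases claim3 rep L hch hnd hne hkl with hd | hd
    · -- a_{i+1} ~ b_i pattern : C = ilv X Y
      apply build rep L hch hnd hne (ilv X Y)
      · apply ilv_chain' G.Adj (X.length + Y.length) X Y le_rfl (by omega) (by omega)
        · intro i hx hy
          simp only [hX, hY, get_eq_getElem, getElem_map]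
          exact claim1 rep L hch hnd hne i (by omega) (by omega)
        · intro i hx hy
          simp only [hX, hY, get_eq_getElem, getElem_map]
          exact (hd i (by omega) (by omega)).symm
      · exact ilv_perm (X.length + Y.length) X Y le_rfl
      · apply ilv_chain' _ (X.length + Y.length) X Y le_rfl (by omega) (by omega)
        · exact haltXY
        · exact haltXY'
      · rw [(ilv_filterMap_left Sum.getLeft? (X.length + Y.length) X Y le_rfl).1 hYnoneL]
        exact hXfl
      · rw [(ilv_filterMap_left Sum.getRight? (X.length + Y.length) X Y le_rfl).2 hXnoneR]
        exact hYfr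
    · -- a_i ~ b_{i+1} pattern : C = ilv Y X
      apply build rep L hch hnd hne (ilv Y X)
      · apply ilv_chain' G.Adj (Y.length + X.length) Y X le_rfl (by omega) (by omega)
        · intro i hy hx
          simp only [hX, hY, get_eq_getElem, getElem_map]
          exact (claim1 rep L hch hnd hne i (by omega) (by omega)).symm
        · intro i hy hx
          simp only [hX, hY, get_eq_getElem, getElem_map]
          exact hd i (by omega) (by omega)
      · exact (ilv_perm (Y.length + X.length) Y X le_rfl).trans perm_append_comm
      · apply ilv_chain' _ (Y.length + X.length) Y X le_rfl (by omega) (by omega)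
        · exact haltYX
        · exact haltYX'
      · rw [(ilv_filterMap_left Sum.getLeft? (Y.length + X.length) Y X le_rfl).2 hYnoneL]
        exact hXfl
      · rw [(ilv_filterMap_left Sum.getRight? (Y.length + X.length) Y X le_rfl).1 hXnoneR]
        exact hYfr
  · -- k = l + 1 : C = ilv X Y
    apply build rep L hch hnd hne (ilv X Y)
    · apply ilv_chain' G.Adj (X.length + Y.length) X Y le_rfl (by omega) (by omega)
      · intro i hx hy
        simp only [hX, hY, get_eq_getElem, getElem_map]
        exact claim1 rep L hch hnd hne i (by omega) (by omega)
      · intro i hx hy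
        simp only [hX, hY, get_eq_getElem, getElem_map]
        exact (claim2 rep L hch hnd hne hkl i (by omega) (by omega)).symm
    · exact ilv_perm (X.length + Y.length) X Y le_rfl
    · apply ilv_chain' _ (X.length + Y.length) X Y le_rfl (by omega) (by omega)
      · exact haltXY
      · exact haltXY'
    · rw [(ilv_filterMap_left Sum.getLeft? (X.length + Y.length) X Y le_rfl).1 hYnoneL]
      exact hXfl
    · rw [(ilv_filterMap_left Sum.getRight? (X.length + Y.length) X Y le_rfl).2 hXnoneR]
      exact hYfr
  · -- l = k + 1 : C = ilv Y X
    apply build rep L hch hnd hne (ilv Y X)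
    · apply ilv_chain' G.Adj (Y.length + X.length) Y X le_rfl (by omega) (by omega)
      · intro i hy hx
        simp only [hX, hY, get_eq_getElem, getElem_map]
        exact (claim1 rep L hch hnd hne i (by omega) (by omega)).symm
      · intro i hy hx
        simp only [hX, hY, get_eq_getElem, getElem_map]
        exact claim2' rep L hch hnd hne hkl i (by omega) (by omega)
    · exact (ilv_perm (Y.length + X.length) Y X le_rfl).trans perm_append_comm
    · apply ilv_chain' _ (Y.length + X.length) Y X le_rfl (by omega) (by omega)
      · exact haltYX
      · exact haltYX'
    · rw [(ilv_filterMap_left Sum.getLeft? (Y.length + X.length) Y X le_rfl).2 hYnoneL]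
      exact hXfl
    · rw [(ilv_filterMap_left Sum.getRight? (Y.length + X.length) Y X le_rfl).1 hXnoneR]
      exact hYfr

end H

/-- In a finite bipartite permutation graph, every path can be reordered: for every path
`p` there is an ordered path `q` with the same vertex set. -/
theorem exists_ordered_path_same_support {n m : ℕ} (G : SimpleGraph (Fin n ⊕ Fin m))
    (rep : LineRep n m G) ⦃u v : Fin n ⊕ Fin m⦄ (p : G.Walk u v) (hp : p.IsPath) :
    ∃ (a b : Fin n ⊕ Fin m) (q : G.Walk a b), q.IsPath ∧ OrderedWalk G q ∧
      ∀ x : Fin n ⊕ Fin m, x ∈ q.support ↔ x ∈ p.support := by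
  exact main_list rep p.support p.isChain_adj_support hp.support_nodup p.support_ne_nil
end

section
/- Let G = (X, Y, E) be a finite bipartite permutation graph, let P be a longest path of G, and let x_{i1} y_{j1} be an edge of P. Let vw ∈ E with v = x_{i2} ∈ X and w = y_{j2} ∈ Y, and suppose the edges x_{i1} y_{j1} and x_{i2} y_{j2} cross each other, i.e., (i1 − i2)(j1 − j2) < 0. Then P contains v or w. -/
open SimpleGraph

lemma cross_real {r1 r2 s1 s2 t1 t2 w1 w2 : ℝ}
    (hr : r1 < r2) (hs : s2 < s1) (ht : t1 < t2) (hw : w2 < w1)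
    (h1 : (r1 - s1) * (t1 - w1) < 0) (h2 : (r2 - s2) * (t2 - w2) < 0)
    (d12 : r1 ≠ s2) (e12 : t1 ≠ w2) (d21 : r2 ≠ s1) (e21 : t2 ≠ w1) :
    (r1 - s2) * (t1 - w2) < 0 ∧ (r2 - s1) * (t2 - w1) < 0 := by
  constructor
  · rcases lt_or_gt_of_ne d12 with h | h
    · have : 0 < t1 - w1 := by nlinarith
      nlinarith
    · rcases lt_or_gt_of_ne e12 with h' | h'
      · nlinarith
      · have : r2 - s2 < 0 := by nlinarith
        nlinarith
  · rcases lt_or_gt_of_ne d21 with h | h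
    · rcases lt_or_gt_of_ne e21 with h' | h'
      · have : 0 < r1 - s1 := by nlinarith
        nlinarith
      · nlinarith
    · have : t2 - w2 < 0 := by nlinarith
      nlinarith


lemma append_isPath {V : Type*} {G : SimpleGraph V} {u v w : V}
    {p : G.Walk u v} {q : G.Walk v w} (hp : p.IsPath) (hq : q.IsPath)
    (hint : ∀ x ∈ p.support, x ∈ q.support → x = v) : (p.append q).IsPath := by
  rw [Walk.isPath_def, Walk.support_append, List.nodup_append]
  refine ⟨hp.support_nodup, ?_, ?_⟩
  · have := hq.support_nodup
    rw [q.support_eq_cons] at this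
    exact this.of_cons
  · intro x hx x' hx' hxx'
    rw [← hxx'] at hx'
    have hxq : x ∈ q.support := List.mem_of_mem_tail hx'
    have := hint x hx hxq
    subst this
    have := hq.support_nodup
    rw [q.support_eq_cons] at this
    exact (List.nodup_cons.mp this).1 hx'

lemma replace_edge {V : Type*} {G : SimpleGraph V} {u v a b : V}
    (p : G.Walk u v) (hp : p.IsPath) (he : s(a, b) ∈ p.edges)
    (q : G.Walk a b) (hq : q.IsPath)
    (hint : ∀ x ∈ q.support, x ∈ p.support → x = a ∨ x = b) :
    ∃ w : G.Walk u v, w.IsPath ∧ w.length + 1 = p.length + q.length ∧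
      ∀ x ∈ w.support, x ∈ p.support ∨ x ∈ q.support := by
  induction p with
  | nil => simp at he
  | @cons u c v h p ih =>
    rw [Walk.edges_cons, List.mem_cons] at he
    rcases he with he | he
    · rw [Sym2.eq_iff] at he
      rcases he with ⟨rfl, rfl⟩ | ⟨rfl, rfl⟩
      · -- edge traversed as (a, b)
        refine ⟨q.append p, append_isPath hq (hp.of_cons) ?_, ?_, ?_⟩
        · intro x hxq hxp
          rcases hint x hxq (by rw [Walk.support_cons]; exact List.mem_cons_of_mem _ hxp)
            with rfl | rfl
          · exact absurd hxp ((Walk.cons_isPath_iff h p).mp hp).2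
          · rfl
        · rw [Walk.length_append, Walk.length_cons]; ring
        · intro x hx
          rw [Walk.support_append] at hx
          rcases List.mem_append.mp hx with hx | hx
          · exact Or.inr hx
          · have : x ∈ p.support := List.mem_of_mem_tail hx
            exact Or.inl (by rw [Walk.support_cons]; exact List.mem_cons_of_mem _ this)
      · -- edge traversed as (b, a)
        refine ⟨q.reverse.append p, append_isPath hq.reverse (hp.of_cons) ?_, ?_, ?_⟩
        · intro x hxq hxp
          rw [Walk.support_reverse, List.mem_reverse] at hxq
          rcases hint x hxq (by rw [Walk.support_cons]; exact List.mem_cons_of_mem _ hxp)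
            with rfl | rfl
          · rfl
          · exact absurd hxp ((Walk.cons_isPath_iff h p).mp hp).2
        · rw [Walk.length_append, Walk.length_reverse, Walk.length_cons]; ring
        · intro x hx
          rw [Walk.support_append] at hx
          rcases List.mem_append.mp hx with hx | hx
          · rw [Walk.support_reverse, List.mem_reverse] at hx; exact Or.inr hx
          · have : x ∈ p.support := List.mem_of_mem_tail hx
            exact Or.inl (by rw [Walk.support_cons]; exact List.mem_cons_of_mem _ this)
    · have hap : a ∈ p.support := p.fst_mem_support_of_mem_edges he
      have hbp : b ∈ p.support := p.snd_mem_support_of_mem_edges he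
      obtain ⟨w, hw, hlen, hsub⟩ := ih (hp.of_cons) he (fun x hxq hxp =>
        hint x hxq (by rw [Walk.support_cons]; exact List.mem_cons_of_mem _ hxp))
      have hu : u ∉ w.support := by
        intro huw
        rcases hsub u huw with h' | h'
        · exact ((Walk.cons_isPath_iff h p).mp hp).2 h'
        · rcases hint u h' (Walk.start_mem_support _) with rfl | rfl
          · exact ((Walk.cons_isPath_iff h p).mp hp).2 hap
          · exact ((Walk.cons_isPath_iff h p).mp hp).2 hbp
      refine ⟨Walk.cons h w, (Walk.cons_isPath_iff h w).mpr ⟨hw, hu⟩, ?_, ?_⟩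
      · rw [Walk.length_cons, Walk.length_cons]; omega
      · intro x hx
        rw [Walk.support_cons] at hx
        rcases List.mem_cons.mp hx with rfl | hx
        · exact Or.inl (Walk.start_mem_support _)
        · rcases hsub x hx with h' | h'
          · exact Or.inl (by rw [Walk.support_cons]; exact List.mem_cons_of_mem _ h')
          · exact Or.inr h'


/-- In a finite bipartite permutation graph, if a longest path `P` uses the edge
`x_{i1} y_{j1}` and the edge `x_{i2} y_{j2}` of `G` crosses it
(i.e. `(i1 - i2) * (j1 - j2) < 0`), then `P` contains `x_{i2}` or `y_{j2}`. -/
theorem longest_path_meets_crossing_edge {n m : ℕ} (G : SimpleGraph (Fin n ⊕ Fin m))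
    (rep : LineRep n m G) ⦃u v : Fin n ⊕ Fin m⦄ (P : G.Walk u v)
    (hP : IsLongestPath G P) {i1 i2 : Fin n} {j1 j2 : Fin m}
    (he : s(Sum.inl i1, Sum.inr j1) ∈ P.edges)
    (hvw : G.Adj (Sum.inl i2) (Sum.inr j2))
    (hcross : (((i1 : ℕ) : ℤ) - ((i2 : ℕ) : ℤ)) * (((j1 : ℕ) : ℤ) - ((j2 : ℕ) : ℤ)) < 0) :
    Sum.inl i2 ∈ P.support ∨ Sum.inr j2 ∈ P.support := by
  by_contra hcon
  push_neg at hcon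
  obtain ⟨hx, hy⟩ := hcon
  have h1 : G.Adj (Sum.inl i1) (Sum.inr j1) := P.adj_of_mem_edges he
  have hni : (i1 : ℕ) ≠ (i2 : ℕ) := by
    intro h; rw [h] at hcross; simp at hcross
  have hnj : (j1 : ℕ) ≠ (j2 : ℕ) := by
    intro h; rw [h] at hcross; simp at hcross
  have hAB : G.Adj (Sum.inl i1) (Sum.inr j2) ∧ G.Adj (Sum.inl i2) (Sum.inr j1) := by
    have e1 := (rep.adj_iff i1 j1).mp h1
    have e2 := (rep.adj_iff i2 j2).mp hvw
    rcases mul_neg_iff.mp hcross with ⟨ha, hb⟩ | ⟨ha, hb⟩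
    · -- i1 > i2, j1 < j2
      have hi : i2 < i1 := by rw [Fin.lt_def]; omega
      have hj : j1 < j2 := by rw [Fin.lt_def]; omega
      obtain ⟨c1, c2⟩ := cross_real (rep.r_mono hi) (rep.s_mono hj) (rep.σr_mono hi)
        (rep.σs_mono hj) e2 e1 (rep.top_distinct i2 j1) (rep.bot_distinct i2 j1)
        (rep.top_distinct i1 j2) (rep.bot_distinct i1 j2)
      exact ⟨(rep.adj_iff i1 j2).mpr c2, (rep.adj_iff i2 j1).mpr c1⟩
    · -- i1 < i2, j1 > j2
      have hi : i1 < i2 := by rw [Fin.lt_def]; omega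
      have hj : j2 < j1 := by rw [Fin.lt_def]; omega
      obtain ⟨c1, c2⟩ := cross_real (rep.r_mono hi) (rep.s_mono hj) (rep.σr_mono hi)
        (rep.σs_mono hj) e1 e2 (rep.top_distinct i1 j2) (rep.bot_distinct i1 j2)
        (rep.top_distinct i2 j1) (rep.bot_distinct i2 j1)
      exact ⟨(rep.adj_iff i1 j2).mpr c1, (rep.adj_iff i2 j1).mpr c2⟩
  obtain ⟨hA, hB⟩ := hAB
  set q : G.Walk (Sum.inl i1) (Sum.inr j1) :=
    Walk.cons hA (Walk.cons hvw.symm (Walk.cons hB Walk.nil)) with hqdef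
  have hqsupp : q.support = [Sum.inl i1, Sum.inr j2, Sum.inl i2, Sum.inr j1] := by
    simp [hqdef]
  have hqpath : q.IsPath := by
    rw [Walk.isPath_def, hqsupp]
    simp [hni, hnj, Fin.val_eq_val]
    omega
  have hqlen : q.length = 3 := by simp [hqdef]
  have hint : ∀ x ∈ q.support, x ∈ P.support → x = Sum.inl i1 ∨ x = Sum.inr j1 := by
    intro x hxq hxp
    rw [hqsupp] at hxq
    simp only [List.mem_cons, List.mem_singleton, List.not_mem_nil, or_false] at hxq
    rcases hxq with rfl | rfl | rfl | rfl
    · exact Or.inl rfl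
    · exact absurd hxp hy
    · exact absurd hxp hx
    · exact Or.inr rfl
  obtain ⟨w, hw, hlen, _⟩ := replace_edge P hP.1 he q hqpath hint
  have := hP.2 w hw
  omega
end
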